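/- arXiv:2206.11411 — 6 statements merged into one kernel-verified Lean document; each statement's English description precedes it below -/
import Mathlib

section
/- Let L be a k×k real matrix with the strong Perron–Frobenius property with dominant eigenvalue τ, and let x_0 ∈ ℝ^k be cyclic for L. Then for every coordinate index i and every integer s ≥ 0, the entry (L^n · x_0)_i is nonzero for all sufficiently large n, and the ratio (L^{n+s} · x_0)_i / (L^n · x_0)_i converges to τ^s as n → ∞. -/
open Matrix Polynomial Filter

/-- `L` has the strong Perron–Frobenius property with dominant eigenvalue `τ`:
`τ > 0`, `τ` is a simple root of the characteristic polynomial, every other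
complex root has modulus `< τ`, and `τ` has a strictly positive eigenvector. -/
def StrongPerronFrobenius {k : ℕ} (L : Matrix (Fin k) (Fin k) ℝ) (τ : ℝ) : Prop :=
  0 < τ ∧
  L.charpoly.rootMultiplicity τ = 1 ∧
  (∀ z : ℂ, (L.charpoly.map (algebraMap ℝ ℂ)).IsRoot z → z ≠ (τ : ℂ) →
    ‖z‖ < τ) ∧
  ∃ u : Fin k → ℝ, (∀ i, 0 < u i) ∧ L.mulVec u = τ • u

/-- `x₀` is a cyclic vector for `L`: `x₀, L x₀, …, L^{k-1} x₀` span `ℝ^k`. -/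
def IsCyclicVec {k : ℕ} (L : Matrix (Fin k) (Fin k) ℝ) (x0 : Fin k → ℝ) : Prop :=
  Submodule.span ℝ (Set.range fun j : Fin k => (L ^ (j : ℕ)).mulVec x0) = ⊤

lemma aeval_mulVec_eigen {k : ℕ} {S : Type} [CommRing S] [Algebra ℝ S]
    (M : Matrix (Fin k) (Fin k) S) (z : S) (v : Fin k → S)
    (hv : M *ᵥ v = z • v) (p : Polynomial ℝ) :
    (aeval M p) *ᵥ v = (aeval z p) • v := by
  induction p using Polynomial.induction_on with
  | C a =>
      simp only [aeval_C]
      rw [IsScalarTower.algebraMap_apply ℝ S (Matrix (Fin k) (Fin k) S),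
        Algebra.algebraMap_eq_smul_one, smul_mulVec, one_mulVec]
  | add p q hp hq =>
      rw [map_add, map_add, add_mulVec, hp, hq, add_smul]
  | monomial n a hp =>
      rw [pow_succ, ← mul_assoc, _root_.map_mul (aeval M), _root_.map_mul (aeval z),
        aeval_X, aeval_X, ← mulVec_mulVec, hv, mulVec_smul, hp, smul_comm, mul_smul]

attribute [local instance] Matrix.linftyOpNormedRing Matrix.linftyOpNormedAlgebra

lemma decay_aux {k : ℕ} (C : Matrix (Fin k) (Fin k) ℂ) (ρ τ : ℝ) (hρ0 : 0 ≤ ρ)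
    (hρτ : ρ < τ) (h : ∀ z ∈ spectrum ℂ C, ‖z‖ ≤ ρ) (w : Fin k → ℂ) :
    Tendsto (fun n : ℕ => ‖(C ^ n) *ᵥ w‖ / τ ^ n) atTop (nhds 0) := by
  classical
  have hτ0 : 0 < τ := lt_of_le_of_lt hρ0 hρτ
  set ρ' : ℝ := (ρ + τ) / 2 with hρ'
  have hρρ' : ρ < ρ' := by rw [hρ']; linarith
  have hρ'τ : ρ' < τ := by rw [hρ']; linarith
  have hρ'0 : 0 < ρ' := by rw [hρ']; linarith
  have hsr : spectralRadius ℂ C ≤ ENNReal.ofReal ρ := by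
    rw [spectralRadius]
    refine iSup₂_le fun z hz => ?_
    have := h z hz
    rw [← ENNReal.ofReal_coe_nnreal]
    apply ENNReal.ofReal_le_ofReal
    simpa using this
  have hgel := spectrum.pow_norm_pow_one_div_tendsto_nhds_spectralRadius C
  have hlt : spectralRadius ℂ C < ENNReal.ofReal ρ' :=
    lt_of_le_of_lt hsr (by exact ENNReal.ofReal_lt_ofReal_iff hρ'0 |>.mpr hρρ')
  have hev : ∀ᶠ n : ℕ in atTop, ENNReal.ofReal (‖C ^ n‖ ^ (1 / (n:ℝ))) < ENNReal.ofReal ρ' :=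
    hgel.eventually_lt_const hlt
  have hev2 : ∀ᶠ n : ℕ in atTop, ‖C ^ n‖ ≤ ρ' ^ n := by
    filter_upwards [hev, eventually_ge_atTop 1] with n hn hn1
    have hn0 : (n:ℝ) ≠ 0 := by positivity
    have h1 : ‖C ^ n‖ ^ (1 / (n:ℝ)) < ρ' := by
      have := (ENNReal.ofReal_lt_ofReal_iff hρ'0).mp hn
      exact this
    have h2 : ‖C ^ n‖ = (‖C ^ n‖ ^ (1 / (n:ℝ))) ^ (n : ℕ) := by
      rw [← Real.rpow_natCast (‖C ^ n‖ ^ (1 / (n:ℝ))) n, ← Real.rpow_mul (norm_nonneg _)]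
      rw [one_div_mul_cancel hn0, Real.rpow_one]
    rw [h2]
    exact pow_le_pow_left₀ (Real.rpow_nonneg (norm_nonneg _) _) h1.le n
  have hb : ∀ᶠ n : ℕ in atTop, ‖(C ^ n) *ᵥ w‖ / τ ^ n ≤ ‖w‖ * (ρ' / τ) ^ n := by
    filter_upwards [hev2] with n hn
    have h3 : ‖(C ^ n) *ᵥ w‖ ≤ ρ' ^ n * ‖w‖ := by
      calc ‖(C ^ n) *ᵥ w‖ ≤ ‖C ^ n‖ * ‖w‖ := Matrix.linfty_opNorm_mulVec _ _
        _ ≤ ρ' ^ n * ‖w‖ := by gcongr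
    rw [div_pow, div_le_iff₀ (by positivity)]
    have heq : ‖w‖ * (ρ' ^ n / τ ^ n) * τ ^ n = ρ' ^ n * ‖w‖ := by
      field_simp
    rw [heq]; exact h3
  have hg : Tendsto (fun n : ℕ => ‖w‖ * (ρ' / τ) ^ n) atTop (nhds 0) := by
    rw [show (0:ℝ) = ‖w‖ * 0 by ring]
    exact (tendsto_pow_atTop_nhds_zero_of_lt_one (by positivity)
      (by rw [div_lt_one hτ0]; exact hρ'τ)).const_mul _
  exact squeeze_zero' (by filter_upwards with n; positivity) hb hg

lemma spectrum_cases {k : ℕ} (M P Bq Qc Ac Pa Bb : Matrix (Fin k) (Fin k) ℂ) (q : Polynomial ℝ)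
    (hPBq : P + Bq = 1) (hAB : Ac * Bq = 0) (hQP : Qc * P = 0)
    (hPa : P = Pa * Ac) (hBb : Bq = Bb * Qc) (hQM : Qc * M = M * Qc)
    (hQaev : ∀ (z : ℂ) (f : Fin k → ℂ), M *ᵥ f = z • f → Qc *ᵥ f = (aeval z q) • f) :
    ∀ z ∈ spectrum ℂ (M * P), z = 0 ∨ aeval z q = 0 := by
  classical
  intro z hz
  rw [spectrum.mem_iff] at hz
  have hdet : (algebraMap ℂ (Matrix (Fin k) (Fin k) ℂ) z - M * P).det = 0 := by
    by_contra hd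
    exact hz ((Matrix.isUnit_iff_isUnit_det _).mpr (isUnit_iff_ne_zero.mpr hd))
  obtain ⟨v, hv0, hvz⟩ := Matrix.exists_mulVec_eq_zero_iff.mpr hdet
  have hCv : (M * P) *ᵥ v = z • v := by
    rw [Algebra.algebraMap_eq_smul_one, sub_mulVec, smul_mulVec, one_mulVec,
      sub_eq_zero] at hvz
    exact hvz.symm
  by_cases hz0 : z = 0
  · exact Or.inl hz0
  right
  set e : Fin k → ℂ := Bq *ᵥ v with he
  set f : Fin k → ℂ := P *ᵥ v with hf
  have hef : v = e + f := by
    rw [he, hf, ← add_mulVec, add_comm Bq P, hPBq, one_mulVec]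
  have hAe : Ac *ᵥ e = 0 := by rw [he, mulVec_mulVec, hAB, zero_mulVec]
  have hQf : Qc *ᵥ f = 0 := by rw [hf, mulVec_mulVec, hQP, zero_mulVec]
  have hMf : M *ᵥ f = z • v := by rw [hf, mulVec_mulVec]; exact hCv
  have hx1 : Ac *ᵥ (z • e) = 0 := by rw [mulVec_smul, hAe, smul_zero]
  have hze : z • e = M *ᵥ f - z • f := by
    rw [hMf, hef, smul_add]
    abel
  have hx2 : Qc *ᵥ (z • e) = 0 := by
    rw [hze, mulVec_sub, mulVec_smul, hQf, smul_zero, sub_zero, mulVec_mulVec, hQM,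
      ← mulVec_mulVec, hQf, mulVec_zero]
  have hzero : z • e = 0 := by
    have h10 : (1 : Matrix (Fin k) (Fin k) ℂ) *ᵥ (z • e) = z • e := one_mulVec _
    rw [← hPBq, add_mulVec] at h10
    have hP1 : P *ᵥ (z • e) = 0 := by
      rw [hPa, ← mulVec_mulVec, hx1, mulVec_zero]
    have hB1 : Bq *ᵥ (z • e) = 0 := by
      rw [hBb, ← mulVec_mulVec, hx2, mulVec_zero]
    rw [hP1, hB1, add_zero] at h10
    exact h10.symm
  have he0 : e = 0 := by
    rcases smul_eq_zero.mp hzero with h | h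
    · exact absurd h hz0
    · exact h
  have hvf : v = f := by rw [hef, he0, zero_add]
  have hMv : M *ᵥ v = z • v := by rw [hvf] at hMf ⊢; exact hMf
  have h11 : Qc *ᵥ v = (aeval z q) • v := hQaev z v hMv
  rw [← hvf] at hQf
  rw [hQf] at h11
  rcases smul_eq_zero.mp h11.symm with h | h
  · exact h
  · exact absurd h hv0

lemma eigvec_span {k : ℕ} (M : Matrix (Fin k) (Fin k) ℂ) (τc : ℂ) (y0 uc : Fin k → ℂ)
    (hfun : ∀ g : Fin k → ℂ, (∀ n : ℕ, g ⬝ᵥ ((M ^ n) *ᵥ y0) = 0) → g = 0)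
    (hMu : M *ᵥ uc = τc • uc) (huc0 : uc ≠ 0)
    (v : Fin k → ℂ) (hv : M *ᵥ v = τc • v) : v ∈ Submodule.span ℂ {uc} := by
  classical
  set Am : Matrix (Fin k) (Fin k) ℂ := M - τc • 1 with hAm
  have hker : ∀ x : Fin k → ℂ, Am *ᵥ x = 0 ↔ M *ᵥ x = τc • x := by
    intro x
    rw [hAm, sub_mulVec, sub_eq_zero, smul_mulVec, one_mulVec]
  have hE1 : Module.finrank ℂ (LinearMap.ker Am.mulVecLin) ≤ 1 := by
    by_contra hcon
    push_neg at hcon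
    have hrk : Module.finrank ℂ (LinearMap.ker (Am.transpose).mulVecLin)
        = Module.finrank ℂ (LinearMap.ker Am.mulVecLin) := by
      have h1 := LinearMap.finrank_range_add_finrank_ker Am.mulVecLin
      have h2 := LinearMap.finrank_range_add_finrank_ker (Am.transpose).mulVecLin
      have h3 : Am.transpose.rank = Am.rank := Matrix.rank_transpose Am
      rw [Matrix.rank] at h3
      rw [Matrix.rank] at h3
      rw [Module.finrank_fin_fun] at h1 h2
      omega
    let ψ : LinearMap.ker (Am.transpose).mulVecLin →ₗ[ℂ] ℂ :=
      { toFun := fun g => (g : Fin k → ℂ) ⬝ᵥ y0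
        map_add' := fun x y => by
          show ((x + y : LinearMap.ker (Am.transpose).mulVecLin) : Fin k → ℂ) ⬝ᵥ y0
            = (x : Fin k → ℂ) ⬝ᵥ y0 + (y : Fin k → ℂ) ⬝ᵥ y0
          rw [Submodule.coe_add, add_dotProduct]
        map_smul' := fun cc x => by
          show ((cc • x : LinearMap.ker (Am.transpose).mulVecLin) : Fin k → ℂ) ⬝ᵥ y0
            = cc * ((x : Fin k → ℂ) ⬝ᵥ y0)
          rw [Submodule.coe_smul, smul_dotProduct, smul_eq_mul] }
    have hψ : ∀ g, ψ g = (g : Fin k → ℂ) ⬝ᵥ y0 := fun g => rfl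
    have h4 := LinearMap.finrank_range_add_finrank_ker ψ
    have h5 : Module.finrank ℂ (LinearMap.range ψ) ≤ 1 := by
      simpa using Submodule.finrank_le (LinearMap.range ψ)
    have h6 : 0 < Module.finrank ℂ (LinearMap.ker ψ) := by omega
    have : Nontrivial (LinearMap.ker ψ) := Module.finrank_pos_iff.mp h6
    obtain ⟨g', hg'⟩ := exists_ne (0 : LinearMap.ker ψ)
    set g : Fin k → ℂ := ((g' : LinearMap.ker (Am.transpose).mulVecLin) : Fin k → ℂ) with hgdef
    have hg0 : g ≠ 0 := by
      intro h
      apply hg'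
      have h9 : (g' : LinearMap.ker (Am.transpose).mulVecLin) = 0 := Subtype.ext h
      exact Subtype.ext h9
    have hgK : Am.transpose *ᵥ g = 0 := by
      have h8 := (g' : LinearMap.ker (Am.transpose).mulVecLin).2
      rw [LinearMap.mem_ker, mulVecLin_apply] at h8
      exact h8
    have hgy0 : g ⬝ᵥ y0 = 0 := by
      have h8 := g'.2
      rw [LinearMap.mem_ker] at h8
      rw [← hψ (g' : LinearMap.ker (Am.transpose).mulVecLin), h8]
    have hgT : M.transpose *ᵥ g = τc • g := by
      rw [hAm, transpose_sub, transpose_smul, transpose_one, sub_mulVec,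
        smul_mulVec, one_mulVec, sub_eq_zero] at hgK
      exact hgK
    have hind : ∀ n : ℕ, g ⬝ᵥ ((M ^ n) *ᵥ y0) = 0 := by
      intro n
      induction n with
      | zero => simpa using hgy0
      | succ n ih =>
          rw [pow_succ', ← mulVec_mulVec, dotProduct_mulVec, ← mulVec_transpose, hgT,
            smul_dotProduct, ih, smul_zero]
    exact hg0 (hfun g hind)
  have huE : uc ∈ LinearMap.ker Am.mulVecLin := by
    rw [LinearMap.mem_ker, mulVecLin_apply, hker]
    exact hMu
  have hvE : v ∈ LinearMap.ker Am.mulVecLin := by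
    rw [LinearMap.mem_ker, mulVecLin_apply, hker]
    exact hv
  have hle : Submodule.span ℂ {uc} ≤ LinearMap.ker Am.mulVecLin :=
    Submodule.span_le.mpr (by simpa using huE)
  have h7 : Module.finrank ℂ (Submodule.span ℂ ({uc} : Set (Fin k → ℂ))) = 1 :=
    finrank_span_singleton huc0
  have hEeq : Submodule.span ℂ {uc} = LinearMap.ker Am.mulVecLin :=
    Submodule.eq_of_le_of_finrank_le hle (by omega)
  rw [hEeq]
  exact hvE


/-- if `L` is strong Perron–Frobenius with dominant eigenvalue `τ`
and `x₀` is cyclic, then for each coordinate `i` and integer `s ≥ 0`, the entry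
`(Lⁿ x₀)_i` is eventually nonzero and `(L^{n+s} x₀)_i / (Lⁿ x₀)_i → τ^s`. -/
theorem ratio_limit
    (k : ℕ) (L : Matrix (Fin k) (Fin k) ℝ) (τ : ℝ)
    (hL : StrongPerronFrobenius L τ)
    (x0 : Fin k → ℝ) (hx0 : IsCyclicVec L x0)
    (i : Fin k) (s : ℕ) :
    (∀ᶠ n : ℕ in atTop, (L ^ n).mulVec x0 i ≠ 0) ∧
    Tendsto (fun n : ℕ => (L ^ (n + s)).mulVec x0 i / (L ^ n).mulVec x0 i)
      atTop (nhds (τ ^ s)) := by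
  classical
  obtain ⟨hτ, hmult, hroots, u, hu, huv⟩ := hL
  have hx0 : Submodule.span ℝ (Set.range fun j : Fin k => (L ^ (j : ℕ)).mulVec x0) = ⊤ := hx0
  have hχ0 : L.charpoly ≠ 0 := (Matrix.charpoly_monic L).ne_zero
  -- factor charpoly
  have hdvd : (X - C τ) ∣ L.charpoly := by
    have h1 : 1 ≤ L.charpoly.rootMultiplicity τ := le_of_eq hmult.symm
    have := (Polynomial.le_rootMultiplicity_iff hχ0).mp h1
    simpa using this
  obtain ⟨q, hq⟩ := hdvd
  have hq0 : q ≠ 0 := fun h => hχ0 (by rw [hq, h, mul_zero])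
  have hqτ : q.eval τ ≠ 0 := by
    intro h
    have h2 : (X - C τ) ^ 2 ∣ L.charpoly := by
      rw [hq, pow_two]
      exact mul_dvd_mul_left _ (dvd_iff_isRoot.mpr h)
    have := (Polynomial.le_rootMultiplicity_iff hχ0).mpr h2
    omega
  have hcop : IsCoprime (X - C τ) q :=
    (Polynomial.irreducible_X_sub_C τ).coprime_iff_not_dvd.mpr
      (fun h => hqτ (dvd_iff_isRoot.mp h))
  obtain ⟨a, b, hab⟩ := hcop
  -- complexification
  set φ : Matrix (Fin k) (Fin k) ℝ →ₐ[ℝ] Matrix (Fin k) (Fin k) ℂ :=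
    AlgHom.mapMatrix (Algebra.ofId ℝ ℂ) with hφ
  set M : Matrix (Fin k) (Fin k) ℂ := φ L with hM
  set y0 : Fin k → ℂ := fun j => (x0 j : ℂ) with hy0
  set uc : Fin k → ℂ := fun j => (u j : ℂ) with huc
  -- mulVec compatibility
  have hmap : ∀ (A : Matrix (Fin k) (Fin k) ℝ) (v : Fin k → ℝ) (j : Fin k),
      ((φ A) *ᵥ (fun t => ((v t : ℂ)))) j = (((A *ᵥ v) j : ℝ) : ℂ) := by
    intro A v j
    have hco : ⇑(Algebra.ofId ℝ ℂ) = ⇑(algebraMap ℝ ℂ) := rfl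
    rw [hφ, AlgHom.mapMatrix_apply, hco]
    have := RingHom.map_mulVec (algebraMap ℝ ℂ) A v j
    rw [show (fun t => ((v t : ℂ))) = ⇑(algebraMap ℝ ℂ) ∘ v from rfl, ← this]
    rfl
  have hCH : aeval M L.charpoly = 0 := by
    rw [hM, Polynomial.aeval_algHom_apply, Matrix.aeval_self_charpoly, map_zero]
  have hMu : M *ᵥ uc = (τ : ℂ) • uc := by
    funext j
    rw [huc]
    have := hmap L u j
    rw [this, huv]
    push_cast
    simp [Pi.smul_apply]
  have hφpow : ∀ n : ℕ, φ (L ^ n) = M ^ n := fun n => by rw [hM, map_pow]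
  -- decomposition machinery
  set P : Matrix (Fin k) (Fin k) ℂ := aeval M (a * (X - C τ)) with hP
  set Bq : Matrix (Fin k) (Fin k) ℂ := aeval M (b * q) with hBq
  set Qc : Matrix (Fin k) (Fin k) ℂ := aeval M q with hQc
  set Ac : Matrix (Fin k) (Fin k) ℂ := aeval M (X - C τ) with hAc
  have hPBq : P + Bq = 1 := by
    rw [hP, hBq, ← map_add, hab, _root_.map_one]
  have hAB : Ac * Bq = 0 := by
    rw [hAc, hBq, ← _root_.map_mul]
    have h5 : (X - C τ) * (b * q) = b * ((X - C τ) * q) := by ring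
    rw [h5, ← hq, _root_.map_mul, hCH, mul_zero]
  have hQP : Qc * P = 0 := by
    rw [hQc, hP, ← _root_.map_mul]
    have h5 : q * (a * (X - C τ)) = a * ((X - C τ) * q) := by ring
    rw [h5, ← hq, _root_.map_mul, hCH, mul_zero]
  have hPP : P * P = P := by
    rw [hP, ← _root_.map_mul]
    have h5 : (a * (X - C τ)) * (a * (X - C τ)) = a * (X - C τ) - (a * b) * ((X - C τ) * q) := by
      linear_combination (a * (X - C τ)) * hab
    rw [h5, ← hq, map_sub, _root_.map_mul (aeval M) (a * b) L.charpoly, hCH, mul_zero, sub_zero]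
  have hAc' : Ac = M - (τ : ℂ) • 1 := by
    rw [hAc, map_sub, aeval_X, aeval_C, IsScalarTower.algebraMap_apply ℝ ℂ
      (Matrix (Fin k) (Fin k) ℂ), Algebra.algebraMap_eq_smul_one]
    norm_num
  obtain ⟨v1, hv1d⟩ : ∃ v1 : Fin k → ℂ, v1 = Bq *ᵥ y0 := ⟨_, rfl⟩
  obtain ⟨w, hwd⟩ : ∃ w : Fin k → ℂ, w = P *ᵥ y0 := ⟨_, rfl⟩
  have hsum : y0 = v1 + w := by
    rw [hv1d, hwd, ← add_mulVec, add_comm Bq P, hPBq, one_mulVec]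
  have hMBq : M * Bq = (τ : ℂ) • Bq := by
    have h6 : (M - (τ : ℂ) • 1) * Bq = 0 := by rw [← hAc']; exact hAB
    rw [sub_mul, sub_eq_zero] at h6
    rw [h6, smul_mul_assoc, one_mul]
  have hMv1 : M *ᵥ v1 = (τ : ℂ) • v1 := by
    rw [hv1d, mulVec_mulVec, hMBq, smul_mulVec]
  have hQw : Qc *ᵥ w = 0 := by rw [hwd, mulVec_mulVec, hQP, zero_mulVec]
  have hPw : P *ᵥ w = w := by rw [hwd, mulVec_mulVec, hPP]
  -- cyclicity: a functional vanishing on all M^n y0 is zero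
  have hfun : ∀ g : Fin k → ℂ, (∀ n : ℕ, g ⬝ᵥ ((M ^ n) *ᵥ y0) = 0) → g = 0 := by
    intro g hg
    have hT : ∀ v : Fin k → ℝ, v ∈ Submodule.span ℝ
        (Set.range fun j : Fin k => (L ^ (j : ℕ)).mulVec x0) →
        g ⬝ᵥ (fun t => ((v t : ℝ) : ℂ)) = 0 := by
      intro v hv
      induction hv using Submodule.span_induction with
      | mem x hx =>
          obtain ⟨j, rfl⟩ := hx
          have h12 : (fun t => ((((L ^ (j : ℕ)) *ᵥ x0) t : ℝ) : ℂ)) = (M ^ (j : ℕ)) *ᵥ y0 := by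
            funext t
            rw [← hφpow, hmap]
          rw [h12]
          exact hg j
      | zero => simp
      | add x y _ _ hx hy =>
          have h12 : (fun t => (((x + y) t : ℝ) : ℂ))
              = (fun t => ((x t : ℝ) : ℂ)) + (fun t => ((y t : ℝ) : ℂ)) := by
            funext t; simp
          rw [h12, dotProduct_add, hx, hy, add_zero]
      | smul r x _ hx =>
          have h12 : (fun t => (((r • x) t : ℝ) : ℂ)) = (r : ℂ) • (fun t => ((x t : ℝ) : ℂ)) := by
            funext t; simp [Complex.real_smul]
          rw [h12, dotProduct_smul, hx, smul_zero]
    funext t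
    have h13 := hT (Pi.single t 1) (by rw [hx0]; trivial)
    simpa [dotProduct, Pi.single_apply, apply_ite (Complex.ofReal), mul_ite,
      Finset.sum_ite_eq] using h13
  -- the eigenspace of τ is spanned by uc
  have huc0 : uc ≠ 0 := by
    intro h
    have h14 := congrFun h i
    simp only [huc, Pi.zero_apply] at h14
    exact (ne_of_gt (hu i)) (by exact_mod_cast h14)
  have hdim : ∀ v : Fin k → ℂ, M *ᵥ v = (τ : ℂ) • v → v ∈ Submodule.span ℂ {uc} :=
    fun v hv => eigvec_span M (τ : ℂ) y0 uc hfun hMu huc0 v hv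
  obtain ⟨c, hc⟩ := Submodule.mem_span_singleton.mp (hdim v1 hMv1)
  have hqτc : ((q.eval τ : ℝ) : ℂ) ≠ 0 := by exact_mod_cast hqτ
  have hQcu : Qc *ᵥ uc = ((q.eval τ : ℝ) : ℂ) • uc := by
    rw [hQc, aeval_mulVec_eigen M ((τ : ℝ) : ℂ) uc hMu q]
    congr 1
    rw [show ((τ : ℝ) : ℂ) = algebraMap ℝ ℂ τ from rfl, aeval_algebraMap_apply]
    norm_num
  have hc0 : c ≠ 0 := by
    intro h0
    have hv10 : v1 = 0 := by rw [← hc, h0, zero_smul]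
    have hy0w : Qc *ᵥ y0 = 0 := by
      rw [hsum, hv10, zero_add]
      exact hQw
    have hS : ∀ v : Fin k → ℝ, v ∈ Submodule.span ℝ
        (Set.range fun j : Fin k => (L ^ (j : ℕ)).mulVec x0) →
        Qc *ᵥ (fun t => ((v t : ℝ) : ℂ)) = 0 := by
      intro v hv
      induction hv using Submodule.span_induction with
      | mem x hx =>
          obtain ⟨j, rfl⟩ := hx
          have h12 : (fun t => ((((L ^ (j : ℕ)) *ᵥ x0) t : ℝ) : ℂ)) = (M ^ (j : ℕ)) *ᵥ y0 := by
            funext t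
            rw [← hφpow, hmap]
          rw [h12, mulVec_mulVec]
          have hcm : Qc * M ^ (j : ℕ) = M ^ (j : ℕ) * Qc := by
            have h1 : M ^ (j : ℕ) = aeval M ((X : Polynomial ℝ) ^ (j : ℕ)) := by
              rw [show aeval M ((X : Polynomial ℝ) ^ (j : ℕ))
                  = (aeval M (X : Polynomial ℝ)) ^ (j : ℕ) from
                _root_.map_pow (aeval M) (X : Polynomial ℝ) (j : ℕ), aeval_X]
            rw [hQc, h1, ← _root_.map_mul, mul_comm q ((X : Polynomial ℝ) ^ (j : ℕ)),
              _root_.map_mul]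
          rw [hcm, ← mulVec_mulVec, hy0w, mulVec_zero]
      | zero =>
          have h12 : (fun t => (((0 : Fin k → ℝ) t : ℝ) : ℂ)) = 0 := by funext t; simp
          rw [h12, mulVec_zero]
      | add x y _ _ hx hy =>
          have h12 : (fun t => (((x + y) t : ℝ) : ℂ))
              = (fun t => ((x t : ℝ) : ℂ)) + (fun t => ((y t : ℝ) : ℂ)) := by
            funext t; simp
          rw [h12, mulVec_add, hx, hy, add_zero]
      | smul r x _ hx =>
          have h12 : (fun t => (((r • x) t : ℝ) : ℂ)) = (r : ℂ) • (fun t => ((x t : ℝ) : ℂ)) := by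
            funext t; simp [Complex.real_smul]
          rw [h12, mulVec_smul, hx, smul_zero]
    have h13 := hS u (by rw [hx0]; trivial)
    have h14 : Qc *ᵥ uc = 0 := by
      rw [huc]
      exact h13
    rw [hQcu] at h14
    rcases smul_eq_zero.mp h14 with h | h
    · exact hqτc h
    · exact huc0 h
  -- spectrum of Cm = M * P
  obtain ⟨Cm, hCm⟩ : ∃ Cm : Matrix (Fin k) (Fin k) ℂ, Cm = M * P := ⟨_, rfl⟩
  have hPa : P = aeval M a * Ac := by rw [hP, hAc, _root_.map_mul]
  have hBb : Bq = aeval M b * Qc := by rw [hBq, hQc, _root_.map_mul]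
  have hQM : Qc * M = M * Qc := by
    have h1 : aeval M (q * (X : Polynomial ℝ)) = Qc * M := by
      rw [_root_.map_mul (aeval M) q (X : Polynomial ℝ), aeval_X, hQc]
    have h2 : aeval M ((X : Polynomial ℝ) * q) = M * Qc := by
      rw [_root_.map_mul (aeval M) (X : Polynomial ℝ) q, aeval_X, hQc]
    rw [← h1, ← h2, mul_comm q (X : Polynomial ℝ)]
  have hQaev : ∀ (z : ℂ) (f : Fin k → ℂ), M *ᵥ f = z • f → Qc *ᵥ f = (aeval z q) • f :=
    fun z f hf => by rw [hQc, aeval_mulVec_eigen M z f hf q]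
  have hspec := spectrum_cases M P Bq Qc Ac (aeval M a) (aeval M b) q hPBq hAB hQP hPa hBb
    hQM hQaev
  have hmq : q.map (algebraMap ℝ ℂ) ≠ 0 := by
    intro h
    exact hq0 ((Polynomial.map_eq_zero_iff (algebraMap ℝ ℂ).injective).mp h)
  set S : Finset ℂ := insert 0 ((q.map (algebraMap ℝ ℂ)).roots.toFinset) with hSdef
  have hSne : S.Nonempty := ⟨0, by rw [hSdef]; exact Finset.mem_insert_self _ _⟩
  set ρ : ℝ := S.sup' hSne (fun z => ‖z‖) with hρdef
  have hSlt : ∀ z ∈ S, ‖z‖ < τ := by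
    intro z hzS
    rw [hSdef, Finset.mem_insert] at hzS
    rcases hzS with rfl | hzS
    · simpa using hτ
    · rw [Multiset.mem_toFinset, mem_roots hmq] at hzS
      have hzq : (q.map (algebraMap ℝ ℂ)).eval z = 0 := hzS
      have hzroot : (L.charpoly.map (algebraMap ℝ ℂ)).IsRoot z := by
        rw [hq, Polynomial.map_mul, IsRoot, eval_mul, hzq, mul_zero]
      have hzτ : z ≠ (τ : ℂ) := by
        intro h
        rw [h, show ((τ : ℝ) : ℂ) = algebraMap ℝ ℂ τ from rfl, Polynomial.eval_map,
          Polynomial.eval₂_at_apply] at hzq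
        exact hqτ ((map_eq_zero_iff (algebraMap ℝ ℂ) (algebraMap ℝ ℂ).injective).mp hzq)
      exact hroots z hzroot hzτ
  have hρτ : ρ < τ := by rw [hρdef]; exact (Finset.sup'_lt_iff hSne).mpr hSlt
  have hρ0 : 0 ≤ ρ := by
    have h1 : (0 : ℂ) ∈ S := by rw [hSdef]; exact Finset.mem_insert_self _ _
    have h2 := Finset.le_sup' (fun z => ‖z‖) h1
    simp only [norm_zero] at h2
    exact h2
  have hbound : ∀ z ∈ spectrum ℂ Cm, ‖z‖ ≤ ρ := by
    intro z hz
    have hzS : z ∈ S := by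
      have hz' : z ∈ spectrum ℂ (M * P) := by rw [← hCm]; exact hz
      rcases hspec z hz' with rfl | hr
      · rw [hSdef]; exact Finset.mem_insert_self _ _
      · rw [hSdef]
        refine Finset.mem_insert_of_mem ?_
        rw [Multiset.mem_toFinset, mem_roots hmq, IsRoot, Polynomial.eval_map, ← aeval_def]
        exact hr
    exact Finset.le_sup' (fun z => ‖z‖) hzS
  have hdecay := decay_aux Cm ρ τ hρ0 hρτ hbound w
  -- assembly
  have hτc : ((τ : ℝ) : ℂ) ≠ 0 := by exact_mod_cast hτ.ne'
  have hwC : ∀ n : ℕ, (M ^ n) *ᵥ w = (Cm ^ n) *ᵥ w := by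
    intro n
    induction n with
    | zero => simp
    | succ n ih =>
        have hmv : ∀ (A B : Matrix (Fin k) (Fin k) ℂ) (x : Fin k → ℂ),
            (A * B) *ᵥ x = A *ᵥ (B *ᵥ x) := fun A B x => (mulVec_mulVec x A B).symm
        have hPCm : P * Cm ^ n = Cm ^ n * P := by
          have h1 : Cm = aeval M ((X : Polynomial ℝ) * (a * (X - C τ))) := by
            rw [_root_.map_mul (aeval M) (X : Polynomial ℝ) (a * (X - C τ)), aeval_X, hCm, hP]
          rw [h1, hP, ← _root_.map_pow (aeval M), ← _root_.map_mul, ← _root_.map_mul, mul_comm]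
        calc (M ^ (n + 1)) *ᵥ w = (M * M ^ n) *ᵥ w := by rw [← pow_succ']
          _ = M *ᵥ ((M ^ n) *ᵥ w) := hmv _ _ _
          _ = M *ᵥ ((Cm ^ n) *ᵥ w) := by rw [ih]
          _ = M *ᵥ ((Cm ^ n) *ᵥ (P *ᵥ w)) := by rw [hPw]
          _ = M *ᵥ ((Cm ^ n * P) *ᵥ w) := by rw [hmv]
          _ = M *ᵥ ((P * Cm ^ n) *ᵥ w) := by rw [hPCm]
          _ = (M * (P * Cm ^ n)) *ᵥ w := (hmv _ _ _).symm
          _ = (Cm ^ (n + 1)) *ᵥ w := by rw [pow_succ', ← mul_assoc, ← hCm]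
  have hMnv1 : ∀ n : ℕ, (M ^ n) *ᵥ v1 = ((τ : ℝ) : ℂ) ^ n • v1 := by
    intro n
    induction n with
    | zero => simp
    | succ n ih =>
        have h1 : (M ^ (n + 1)) *ᵥ v1 = M *ᵥ ((M ^ n) *ᵥ v1) := by
          rw [pow_succ']
          exact (mulVec_mulVec v1 M (M ^ n)).symm
        rw [h1, ih, mulVec_smul, hMv1, smul_smul, ← pow_succ]
  have hreal : ∀ n : ℕ, ((M ^ n) *ᵥ y0) i = (((L ^ n) *ᵥ x0) i : ℂ) := fun n => by
    rw [← hφpow n]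
    exact hmap (L ^ n) x0 i
  set F : ℕ → ℂ := fun n => ((M ^ n) *ᵥ y0) i / ((τ : ℝ) : ℂ) ^ n with hFdef
  have hFd : ∀ n : ℕ, F n = c * uc i + ((Cm ^ n) *ᵥ w) i / ((τ : ℝ) : ℂ) ^ n := by
    intro n
    have h1 : (M ^ n) *ᵥ y0 = ((τ : ℝ) : ℂ) ^ n • v1 + (Cm ^ n) *ᵥ w := by
      conv_lhs => rw [hsum]
      rw [mulVec_add, hMnv1 n, hwC n]
    have hτn : ((τ : ℝ) : ℂ) ^ n ≠ 0 := pow_ne_zero _ hτc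
    have h2 : v1 i = c * uc i := by rw [← hc]; simp
    rw [hFdef]
    simp only
    rw [h1]
    simp only [Pi.add_apply, Pi.smul_apply, smul_eq_mul]
    rw [add_div, h2, mul_div_cancel_left₀ _ hτn]
  set d : ℂ := c * uc i with hddef
  have hucine : uc i ≠ 0 := by
    simp only [huc]
    exact_mod_cast (hu i).ne'
  have hd0 : d ≠ 0 := mul_ne_zero hc0 hucine
  have herr : Tendsto (fun n : ℕ => ((Cm ^ n) *ᵥ w) i / ((τ : ℝ) : ℂ) ^ n) atTop (nhds 0) := by
    rw [tendsto_zero_iff_norm_tendsto_zero]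
    apply squeeze_zero (fun n => norm_nonneg _) _ hdecay
    intro n
    have h1 : ‖(((τ : ℝ) : ℂ))‖ = τ := by
      rw [Complex.norm_real]
      exact abs_of_pos hτ
    rw [norm_div, norm_pow, h1]
    gcongr
    · exact norm_le_pi_norm _ i
  have hFlim : Tendsto F atTop (nhds d) := by
    have h0 : Tendsto (fun _ : ℕ => d) atTop (nhds d) := tendsto_const_nhds
    have h1 := h0.add herr
    rw [add_zero] at h1
    exact h1.congr (fun n => (hFd n).symm)
  have hev0 : ∀ᶠ n in atTop, ((L ^ n) *ᵥ x0) i ≠ 0 := by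
    filter_upwards [hFlim.eventually_ne hd0] with n hn h0
    apply hn
    rw [hFdef]
    simp only
    rw [hreal n, h0]
    simp
  refine ⟨hev0, ?_⟩
  have hFs : Tendsto (fun n => F (n + s)) atTop (nhds d) := hFlim.comp (tendsto_add_atTop_nat s)
  have hG : Tendsto (fun n => F (n + s) / F n * ((τ : ℝ) : ℂ) ^ s) atTop
      (nhds (((τ : ℝ) : ℂ) ^ s)) := by
    have h1 := (hFs.div hFlim hd0).mul_const (((τ : ℝ) : ℂ) ^ s)
    rw [div_self hd0, one_mul] at h1
    exact h1
  have hGcongr : ∀ᶠ n in atTop, F (n + s) / F n * ((τ : ℝ) : ℂ) ^ s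
      = ((((L ^ (n + s)) *ᵥ x0) i / ((L ^ n) *ᵥ x0) i : ℝ) : ℂ) := by
    filter_upwards [hev0] with n hn
    have hτn : ((τ : ℝ) : ℂ) ^ n ≠ 0 := pow_ne_zero _ hτc
    have hτs : ((τ : ℝ) : ℂ) ^ s ≠ 0 := pow_ne_zero _ hτc
    have han : ((((L ^ n) *ᵥ x0) i : ℝ) : ℂ) ≠ 0 := by exact_mod_cast hn
    rw [hFdef]
    simp only
    rw [hreal (n + s), hreal n, pow_add ((τ : ℝ) : ℂ) n s]
    push_cast
    field_simp
  have hGR : Tendsto (fun n : ℕ => ((((L ^ (n + s)) *ᵥ x0) i / ((L ^ n) *ᵥ x0) i : ℝ) : ℂ))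
      atTop (nhds (((τ : ℝ) : ℂ) ^ s)) := hG.congr' hGcongr
  have hfinal : Tendsto
      (fun n : ℕ => (((((L ^ (n + s)) *ᵥ x0) i / ((L ^ n) *ᵥ x0) i : ℝ) : ℂ)).re)
      atTop (nhds ((((τ : ℝ) : ℂ) ^ s).re)) := (Complex.continuous_re.tendsto _).comp hGR
  simp only [← Complex.ofReal_pow, Complex.ofReal_re] at hfinal
  exact hfinal
end

section
/- Let L be a k×k real matrix with the strong Perron–Frobenius property with dominant eigenvalue τ, let x_0 ∈ ℝ^k be cyclic for L, and assume every entry of L^n · x_0 is strictly positive for every n ≥ 0. Let M_n be the coding matrices generated by L and x_0, let P be a k×k real matrix with nonnegative entries whose i-th row is not identically zero, and set C_n := P · M_n. Then for any column indices j, j' ∈ {0, …, k−1}, the ratio C_n(i,j) / C_n(i,j') converges to τ^{j'−j} as n → ∞. -/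
open Matrix Polynomial Filter

/-- The coding matrices generated by `L` and `x₀`: the `j`-th column of `Mₙ` is
`L^{n+k-1-j} x₀`. -/
noncomputable def codingMatrix {k : ℕ} (L : Matrix (Fin k) (Fin k) ℝ)
    (x0 : Fin k → ℝ) (n : ℕ) : Matrix (Fin k) (Fin k) ℝ :=
  Matrix.of fun (i j : Fin k) => (L ^ (n + (k - 1 - (j : ℕ)))).mulVec x0 i

lemma growth_bound {k : ℕ} (A : Matrix (Fin k) (Fin k) ℂ) {ρ : ℝ} (hρ : 0 < ρ) :
    ∀ (s : List ℂ), (∀ μ ∈ s, ‖μ‖ ≤ ρ) →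
    ∀ v : Fin k → ℂ, ((s.map fun ν => A - ν • (1 : Matrix (Fin k) (Fin k) ℂ)).prod).mulVec v = 0 →
    ∃ C : ℝ, ∀ n : ℕ, ‖(A ^ n).mulVec v‖ ≤ C * ((n : ℝ) + 1) ^ s.length * ρ ^ n := by
  intro s
  induction s with
  | nil =>
    intro _ v hv
    simp only [List.map_nil, List.prod_nil, Matrix.one_mulVec] at hv
    exact ⟨0, fun n => by simp [hv]⟩
  | cons μ t ih =>
    intro hs v hv
    have ht : ∀ ν ∈ t, ‖ν‖ ≤ ρ := fun ν hν => hs ν (List.mem_cons_of_mem _ hν)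
    have hμ : ‖μ‖ ≤ ρ := hs μ (List.mem_cons_self)
    set f : ℂ → Matrix (Fin k) (Fin k) ℂ := fun ν => A - ν • 1 with hf
    have hcomm : Commute (f μ) ((t.map f).prod) := by
      refine Commute.list_prod_right _ _ (fun b hb => ?_)
      obtain ⟨ν, _, rfl⟩ := List.mem_map.mp hb
      have h1 : Commute A ((ν : ℂ) • (1 : Matrix (Fin k) (Fin k) ℂ)) :=
        (Commute.one_right A).smul_right ν
      have h2 : Commute ((μ : ℂ) • (1 : Matrix (Fin k) (Fin k) ℂ)) (A - ν • 1) :=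
        (((Commute.one_left A).smul_left μ).sub_right
          (((Commute.one_left (1 : Matrix (Fin k) (Fin k) ℂ)).smul_left μ).smul_right ν))
      exact ((Commute.refl A).sub_right h1).sub_left h2
    set u : Fin k → ℂ := (f μ).mulVec v with hu
    have hvu : ((t.map f).prod).mulVec u = 0 := by
      rw [hu, Matrix.mulVec_mulVec, ← hcomm.eq]
      simpa using hv
    obtain ⟨C, hC⟩ := ih ht u hvu
    have hC0 : 0 ≤ C := le_trans (norm_nonneg _) (by simpa using hC 0)
    have hAv : A.mulVec v = μ • v + u := by
      rw [hu, hf]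
      simp [Matrix.sub_mulVec, Matrix.smul_mulVec, Matrix.one_mulVec]
    set T : ℕ := t.length with hT
    have hrec : ∀ n : ℕ, (A ^ (n + 1)).mulVec v = μ • (A ^ n).mulVec v + (A ^ n).mulVec u := by
      intro n
      rw [pow_succ, ← Matrix.mulVec_mulVec, hAv, Matrix.mulVec_add, Matrix.mulVec_smul]
    have hbound : ∀ n : ℕ, ‖(A ^ n).mulVec v‖ ≤ (‖v‖ + C / ρ * n * ((n : ℝ) + 1) ^ T) * ρ ^ n := by
      intro n
      induction n with
      | zero => simp
      | succ n ihn =>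
        have h1 : ‖(A ^ (n + 1)).mulVec v‖ ≤ ρ * ‖(A ^ n).mulVec v‖ + ‖(A ^ n).mulVec u‖ := by
          rw [hrec n]
          refine le_trans (norm_add_le _ _) ?_
          gcongr
          rw [norm_smul]
          exact mul_le_mul_of_nonneg_right hμ (norm_nonneg _)
        have h2 : ‖(A ^ n).mulVec u‖ ≤ C * ((n : ℝ) + 1) ^ T * ρ ^ n := hC n
        have hρn : (0:ℝ) < ρ ^ n := pow_pos hρ n
        have hpowle : ((n : ℝ) + 1) ^ T ≤ ((n : ℝ) + 2) ^ T := by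
          apply pow_le_pow_left₀ (by positivity) (by linarith)
        calc ‖(A ^ (n + 1)).mulVec v‖ ≤ ρ * ‖(A ^ n).mulVec v‖ + C * ((n : ℝ) + 1) ^ T * ρ ^ n := by
              linarith
          _ ≤ ρ * ((‖v‖ + C / ρ * n * ((n : ℝ) + 1) ^ T) * ρ ^ n) + C * ((n : ℝ) + 1) ^ T * ρ ^ n := by
              nlinarith [mul_le_mul_of_nonneg_left ihn (le_of_lt hρ)]
          _ ≤ (‖v‖ + C / ρ * (↑(n + 1) : ℝ) * ((↑(n + 1) : ℝ) + 1) ^ T) * ρ ^ (n + 1) := by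
              push_cast
              have hCρ0 : 0 ≤ C / ρ := div_nonneg hC0 (le_of_lt hρ)
              have hcn : 0 ≤ C / ρ * ((n:ℝ)+1) := by positivity
              have hx : ((n:ℝ)+1+1) = ((n:ℝ)+2) := by ring
              rw [pow_succ, hx]
              have e1 : ρ * ((‖v‖ + C / ρ * n * ((n:ℝ)+1)^T) * ρ ^ n) + C * ((n:ℝ)+1)^T * ρ ^ n
                  = (‖v‖ + C / ρ * ((n:ℝ)+1) * ((n:ℝ)+1)^T) * (ρ ^ n * ρ) := by
                field_simp
                ring
              refine le_trans (le_of_eq e1) (mul_le_mul_of_nonneg_right ?_ (by positivity))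
              have h5 : C / ρ * ((n:ℝ)+1) * ((n:ℝ)+1)^T ≤ C / ρ * ((n:ℝ)+1) * ((n:ℝ)+2)^T :=
                mul_le_mul_of_nonneg_left hpowle hcn
              linarith
    refine ⟨‖v‖ + C / ρ, fun n => ?_⟩
    refine le_trans (hbound n) ?_
    rw [List.length_cons, ← hT]
    have hρn : (0:ℝ) < ρ ^ n := pow_pos hρ n
    have hCρ0 : 0 ≤ C / ρ := div_nonneg hC0 (le_of_lt hρ)
    have h1 : (1:ℝ) ≤ ((n:ℝ)+1) ^ (T+1) := one_le_pow₀ (by linarith)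
    have h2 : (n:ℝ) * ((n:ℝ)+1) ^ T ≤ ((n:ℝ)+1) ^ (T+1) := by
      rw [pow_succ]
      nlinarith [pow_pos (show (0:ℝ) < (n:ℝ)+1 by positivity) T]
    have h3 : ‖v‖ + C / ρ * n * ((n : ℝ) + 1) ^ T ≤ (‖v‖ + C / ρ) * ((n:ℝ)+1) ^ (T+1) := by
      nlinarith [norm_nonneg v, mul_le_mul_of_nonneg_left h2 hCρ0]
    exact mul_le_mul_of_nonneg_right h3 (le_of_lt hρn)

lemma exists_rho (τ : ℝ) (hτ : 0 < τ) : ∀ (s : List ℂ), (∀ μ ∈ s, ‖μ‖ < τ) →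
    ∃ ρ : ℝ, 0 < ρ ∧ ρ < τ ∧ ∀ μ ∈ s, ‖μ‖ ≤ ρ := by
  intro s
  induction s with
  | nil => exact fun _ => ⟨τ / 2, by linarith, by linarith, by simp⟩
  | cons μ t ih =>
    intro h
    obtain ⟨ρ, h1, h2, h3⟩ := ih fun ν hν => h ν (List.mem_cons_of_mem _ hν)
    have hμ : ‖μ‖ < τ := h μ (List.mem_cons_self)
    refine ⟨max ρ ((‖μ‖ + τ) / 2), lt_max_of_lt_left h1,
      max_lt h2 (by linarith), fun ν hν => ?_⟩
    rcases List.mem_cons.mp hν with rfl | hν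
    · exact le_max_of_le_right (by linarith)
    · exact le_max_of_le_left (h3 ν hν)

lemma cyclic_finrank_ker_le_one {k : ℕ} (L : Matrix (Fin k) (Fin k) ℝ) (τ : ℝ)
    (x0 : Fin k → ℝ) (hx0 : IsCyclicVec L x0) :
    Module.finrank ℝ (LinearMap.ker (L - τ • (1 : Matrix (Fin k) (Fin k) ℝ)).mulVecLin) ≤ 1 := by
  set g := (L - τ • (1 : Matrix (Fin k) (Fin k) ℝ)).mulVecLin with hg
  set R := LinearMap.range g with hR
  set π := R.mkQ with hπdef
  have hgapp : ∀ y : Fin k → ℝ, L.mulVec y = τ • y + g y := by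
    intro y
    rw [hg, Matrix.mulVecLin_apply, Matrix.sub_mulVec, Matrix.smul_mulVec,
      Matrix.one_mulVec]
    abel
  have hπ : ∀ n : ℕ, π ((L ^ n).mulVec x0) = (τ ^ n) • π x0 := by
    intro n
    induction n with
    | zero => simp
    | succ n ihn =>
      have h1 : (L ^ (n + 1)).mulVec x0 = τ • (L ^ n).mulVec x0 + g ((L ^ n).mulVec x0) := by
        rw [pow_succ', ← Matrix.mulVec_mulVec, hgapp]
      have h2 : π (g ((L ^ n).mulVec x0)) = 0 := by
        rw [hπdef]
        exact (Submodule.Quotient.mk_eq_zero R).mpr (LinearMap.mem_range_self g _)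
      rw [h1, map_add, _root_.map_smul, ihn, h2, add_zero, smul_smul, ← pow_succ']
  have htop : Submodule.span ℝ {π x0} = ⊤ := by
    have hmap := congrArg (Submodule.map π) hx0
    rw [Submodule.map_span, Submodule.map_top, Submodule.range_mkQ] at hmap
    refine top_le_iff.mp ?_
    rw [← hmap]
    refine Submodule.span_le.mpr ?_
    rintro y ⟨y', ⟨jj, rfl⟩, rfl⟩
    rw [hπ]
    exact Submodule.smul_mem _ _ (Submodule.subset_span (Set.mem_singleton _))
  have hq1 : Module.finrank ℝ ((Fin k → ℝ) ⧸ R) ≤ 1 := by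
    by_cases h0 : π x0 = 0
    · rw [← finrank_top ℝ ((Fin k → ℝ) ⧸ R), ← htop, h0, Submodule.span_zero_singleton,
        finrank_bot]
      omega
    · rw [← finrank_top ℝ ((Fin k → ℝ) ⧸ R), ← htop, finrank_span_singleton h0]
  have h2 := Submodule.finrank_quotient_add_finrank R
  have h3 := LinearMap.finrank_range_add_finrank_ker g
  rw [← hR] at h3
  have h4 : Module.finrank ℝ (Fin k → ℝ) = k := Module.finrank_fin_fun ℝ
  omega

lemma eig_limit {k : ℕ} (hk : 0 < k) (L : Matrix (Fin k) (Fin k) ℝ) (τ : ℝ)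
    (hL : StrongPerronFrobenius L τ) (x0 : Fin k → ℝ) (hx0 : IsCyclicVec L x0) :
    ∃ a : Fin k → ℝ, L.mulVec a = τ • a ∧ a ≠ 0 ∧
      ∀ l : Fin k, Tendsto (fun n : ℕ => (L ^ n).mulVec x0 l / τ ^ n) atTop (nhds (a l)) := by
  obtain ⟨hτ, hmult, hdom, u, hupos, huL⟩ := hL
  set p := L.charpoly with hpdef
  have hpm : p.Monic := L.charpoly_monic
  have hp0 : p ≠ 0 := hpm.ne_zero
  obtain ⟨q, hpq⟩ : (X - C τ) ∣ p := by
    have h := p.pow_rootMultiplicity_dvd τ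
    rwa [hmult, pow_one] at h
  have hqm : q.Monic := (monic_X_sub_C τ).of_mul_monic_left (hpq ▸ hpm)
  have hqτ : q.eval τ ≠ 0 := by
    intro h
    obtain ⟨r, hr⟩ := dvd_iff_isRoot.mpr h
    have h2 : (X - C τ) ^ 2 ∣ p := ⟨r, by rw [hpq, hr]; ring⟩
    have := (le_rootMultiplicity_iff hp0).mpr h2
    omega
  -- eigenvector identity for polynomials
  have haqτ : ∀ r : Polynomial ℝ, (aeval L r).mulVec u = r.eval τ • u := by
    have hpow : ∀ m : ℕ, (L ^ m).mulVec u = τ ^ m • u := by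
      intro m
      induction m with
      | zero => simp
      | succ m ih =>
        rw [pow_succ', ← Matrix.mulVec_mulVec, ih, Matrix.mulVec_smul, huL, smul_smul, ← pow_succ]
    intro r
    induction r using Polynomial.induction_on' with
    | add f g hf hg => rw [map_add, Matrix.add_mulVec, hf, hg, eval_add, add_smul]
    | monomial m c =>
      rw [aeval_monomial, eval_monomial, Algebra.algebraMap_eq_smul_one, Matrix.smul_mul,
        one_mul, Matrix.smul_mulVec, hpow, smul_smul]
  set N : Matrix (Fin k) (Fin k) ℝ := aeval L q with hNdef
  set G : Matrix (Fin k) (Fin k) ℝ := aeval L (q /ₘ (X - C τ)) with hGdef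
  have hqg : (X - C τ) * (q /ₘ (X - C τ)) + C (q.eval τ) = q := by
    have h := modByMonic_add_div q (X - C τ)
    rw [modByMonic_X_sub_C_eq_C_eval] at h
    rw [add_comm]; exact h
  have hCHL : aeval L p = 0 := Matrix.aeval_self_charpoly L
  have hXτ : aeval L (X - C τ) = L - τ • 1 := by
    rw [map_sub, aeval_X, aeval_C, Algebra.algebraMap_eq_smul_one]
  have hLN : (L - τ • 1) * N = 0 := by
    have h : aeval L ((X - C τ) * q) = 0 := by rw [← hpq]; exact hCHL
    rwa [_root_.map_mul, hXτ] at h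
  have hNL : N * (L - τ • 1) = 0 := by
    have h : aeval L (q * (X - C τ)) = 0 := by rw [mul_comm, ← hpq]; exact hCHL
    rwa [_root_.map_mul, hXτ] at h
  have hNdecomp : N = (L - τ • 1) * G + (q.eval τ) • 1 := by
    have h := congrArg (aeval L) hqg
    rw [map_add, _root_.map_mul, hXτ, aeval_C, Algebra.algebraMap_eq_smul_one] at h
    exact h.symm
  set e : ℝ := (q.eval τ)⁻¹ with hedef
  set a : Fin k → ℝ := e • N.mulVec x0 with ha
  set w : Fin k → ℝ := x0 - a with hw
  have hLNmul : L * N = τ • N := by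
    have h := hLN
    rw [sub_mul, smul_mul_assoc, one_mul, sub_eq_zero] at h
    exact h
  have hLa : L.mulVec a = τ • a := by
    rw [ha, Matrix.mulVec_smul, Matrix.mulVec_mulVec, hLNmul, Matrix.smul_mulVec,
      smul_comm]
  have hwdef : w = (-e) • ((L - τ • 1) * G).mulVec x0 := by
    have h1 : N.mulVec x0 = ((L - τ • 1) * G).mulVec x0 + (q.eval τ) • x0 := by
      rw [hNdecomp, Matrix.add_mulVec, Matrix.smul_mulVec, Matrix.one_mulVec]
    rw [hw, ha, h1, smul_add, smul_smul, hedef, inv_mul_cancel₀ hqτ, one_smul]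
    module
  have hwker : N.mulVec w = 0 := by
    rw [hwdef, Matrix.mulVec_smul, Matrix.mulVec_mulVec, ← mul_assoc, hNL, zero_mul,
      Matrix.zero_mulVec, smul_zero]
  have hcommNL : Commute N L := by
    simpa using (Commute.all q (X : Polynomial ℝ)).map (aeval L)
  have hNcomm : ∀ n : ℕ, N * L ^ n = L ^ n * N := fun n => (hcommNL.pow_right n).eq
  have hane : a ≠ 0 := by
    intro h0
    have hx0w : x0 = w := by rw [hw, h0, sub_zero]
    have hker : ∀ n : ℕ, N.mulVec ((L ^ n).mulVec x0) = 0 := by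
      intro n
      rw [Matrix.mulVec_mulVec, hNcomm n, ← Matrix.mulVec_mulVec]
      have hN0 : N.mulVec x0 = 0 := by rw [hx0w]; exact hwker
      rw [hN0, Matrix.mulVec_zero]
    have hle : Submodule.span ℝ (Set.range fun j : Fin k => (L ^ (j : ℕ)).mulVec x0) ≤
        LinearMap.ker N.mulVecLin := by
      rw [Submodule.span_le]
      rintro y ⟨jj, rfl⟩
      exact LinearMap.mem_ker.mpr (by simpa using hker jj)
    rw [hx0] at hle
    have hNu : N.mulVec u = 0 := by
      have := hle (Submodule.mem_top (x := u))
      simpa using this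
    rw [haqτ q] at hNu
    have : u ⟨0, hk⟩ ≠ 0 := ne_of_gt (hupos _)
    have h2 := congrFun hNu ⟨0, hk⟩
    simp [Pi.smul_apply, smul_eq_mul] at h2
    rcases h2 with h2 | h2
    · exact hqτ h2
    · exact this h2
  refine ⟨a, hLa, hane, fun l => ?_⟩
  have hLna : ∀ n : ℕ, (L ^ n).mulVec a = τ ^ n • a := by
    intro n
    induction n with
    | zero => simp
    | succ n ihn =>
      rw [pow_succ', ← Matrix.mulVec_mulVec, ihn, Matrix.mulVec_smul, hLa, smul_smul, ← pow_succ]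
  have hsplit : ∀ n : ℕ, (L ^ n).mulVec x0 = τ ^ n • a + (L ^ n).mulVec w := by
    intro n
    have hx : a + w = x0 := by rw [hw]; abel
    rw [← hx, Matrix.mulVec_add, hLna]
  set A := L.map (algebraMap ℝ ℂ) with hA
  set w' : Fin k → ℂ := fun idx => (algebraMap ℝ ℂ) (w idx) with hw'
  have hApow : ∀ n : ℕ, (L ^ n).map (algebraMap ℝ ℂ) = A ^ n := by
    intro n
    have h := map_pow ((algebraMap ℝ ℂ).mapMatrix) L n
    simpa [RingHom.mapMatrix_apply, hA] using h
  have hcompvec : ∀ (n : ℕ) (idx : Fin k),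
      (A ^ n).mulVec w' idx = ((algebraMap ℝ ℂ) ((L ^ n).mulVec w idx)) := by
    intro n idx
    have h := RingHom.map_mulVec (algebraMap ℝ ℂ) (L ^ n) w idx
    rw [hApow] at h
    exact h.symm
  set q' : Polynomial ℂ := q.map (algebraMap ℝ ℂ) with hq'
  have hq'm : q'.Monic := hqm.map _
  have hq'0 : q' ≠ 0 := hq'm.ne_zero
  have haevalA : aeval A q' = N.map (algebraMap ℝ ℂ) := by
    rw [hq', aeval_map_algebraMap]
    have h := aeval_algHom_apply
      ((AlgHom.mapMatrix (Algebra.ofId ℝ ℂ)) :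
        Matrix (Fin k) (Fin k) ℝ →ₐ[ℝ] Matrix (Fin k) (Fin k) ℂ) L q
    simpa [AlgHom.mapMatrix_apply, Algebra.ofId_apply, hA,
      show ⇑(Algebra.ofId ℝ ℂ) = algebraMap ℝ ℂ from rfl] using h
  have hq'w : (aeval A q').mulVec w' = 0 := by
    funext idx
    rw [haevalA]
    have h := RingHom.map_mulVec (algebraMap ℝ ℂ) N w idx
    rw [hwker] at h
    simp only [Pi.zero_apply, map_zero] at h
    simpa [hw', Function.comp_def] using h.symm
  have hqfactor : q' = (q'.roots.map fun μ => X - C μ).prod :=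
    (IsAlgClosed.splits q').eq_prod_roots_of_monic hq'm
  set rts : List ℂ := q'.roots.toList with hrts
  have hroots_lt : ∀ μ ∈ rts, ‖μ‖ < τ := by
    intro μ hμ
    have hμr : μ ∈ q'.roots := by rw [hrts, Multiset.mem_toList] at hμ; exact hμ
    have hroot : q'.IsRoot μ := (mem_roots hq'0).mp hμr
    have hμτ : μ ≠ (τ : ℂ) := by
      intro h
      rw [h] at hroot
      have he : q'.eval ((τ : ℝ) : ℂ) = algebraMap ℝ ℂ (q.eval τ) := by
        rw [hq', eval_map, ← aeval_def, show ((τ:ℝ):ℂ) = algebraMap ℝ ℂ τ from rfl,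
          aeval_algebraMap_apply_eq_algebraMap_eval]
      rw [IsRoot.def, he, show (algebraMap ℝ ℂ) (q.eval τ) = ((q.eval τ : ℝ) : ℂ) from rfl,
        Complex.ofReal_eq_zero] at hroot
      exact hqτ hroot
    have hproot : (p.map (algebraMap ℝ ℂ)).IsRoot μ := by
      rw [hpq, Polynomial.map_mul]
      simp [IsRoot.def, eval_mul, IsRoot.def.mp hroot]
      exact Or.inr (by rw [aeval_def, ← eval_map, ← hq']; exact hroot)
    exact hdom μ hproot hμτ
  obtain ⟨ρ, hρ0, hρτ, hρge⟩ := exists_rho τ hτ rts hroots_lt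
  have hlistprod : aeval A q' =
      ((rts.map fun ν => A - ν • (1 : Matrix (Fin k) (Fin k) ℂ)).prod) := by
    conv_lhs => rw [hqfactor]
    rw [show q'.roots = (rts : Multiset ℂ) from (Multiset.coe_toList q'.roots).symm]
    rw [Multiset.map_coe, Multiset.prod_coe]
    rw [map_list_prod (aeval A : Polynomial ℂ →ₐ[ℂ] Matrix (Fin k) (Fin k) ℂ), List.map_map]
    simp only [Function.comp_def, map_sub, aeval_X, aeval_C, Algebra.algebraMap_eq_smul_one]
  obtain ⟨Cb, hCb⟩ := growth_bound A hρ0 rts hρge w' (by rw [← hlistprod]; exact hq'w)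
  have hCb0 : 0 ≤ Cb := le_trans (norm_nonneg _) (by simpa using hCb 0)
  set d : ℕ := rts.length with hd
  set r : ℝ := ρ / τ with hr
  have hr0 : 0 < r := div_pos hρ0 hτ
  have hr1 : r < 1 := (div_lt_one hτ).mpr hρτ
  have hgl : Tendsto (fun n : ℕ => Cb * (((n : ℝ) + 1) ^ d * r ^ n)) atTop (nhds 0) := by
    have hbase := tendsto_pow_const_mul_const_pow_of_lt_one d (le_of_lt hr0) hr1
    have h2 := (hbase.comp (tendsto_add_atTop_nat 1)).const_mul (Cb / r)
    rw [mul_zero] at h2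
    refine h2.congr (fun n => ?_)
    have hrne : r ≠ 0 := ne_of_gt hr0
    simp only [Function.comp_apply]
    push_cast
    rw [pow_succ]
    field_simp
  have hwlim : Tendsto (fun n : ℕ => (L ^ n).mulVec w l / τ ^ n) atTop (nhds 0) := by
    refine squeeze_zero_norm (fun n => ?_) hgl
    have hτn : (0:ℝ) < τ ^ n := pow_pos hτ n
    have h1 : |(L ^ n).mulVec w l| ≤ Cb * ((n : ℝ) + 1) ^ d * ρ ^ n := by
      have h2 : ‖(A ^ n).mulVec w' l‖ ≤ ‖(A ^ n).mulVec w'‖ :=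
        norm_le_pi_norm ((A ^ n).mulVec w') l
      rw [hcompvec n l] at h2
      simpa using le_trans h2 (hCb n)
    rw [Real.norm_eq_abs, abs_div, abs_of_pos hτn]
    rw [div_le_iff₀ hτn]
    calc |(L ^ n).mulVec w l| ≤ Cb * ((n : ℝ) + 1) ^ d * ρ ^ n := h1
      _ = Cb * (((n : ℝ) + 1) ^ d * r ^ n) * τ ^ n := by
          rw [hr, div_pow]
          field_simp
  have hfinal : ∀ n : ℕ, (L ^ n).mulVec x0 l / τ ^ n = a l + (L ^ n).mulVec w l / τ ^ n := by
    intro n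
    have hτn : (τ:ℝ) ^ n ≠ 0 := ne_of_gt (pow_pos hτ n)
    rw [hsplit n]
    simp only [Pi.add_apply, Pi.smul_apply, smul_eq_mul]
    field_simp
  have hfin := (tendsto_const_nhds :
    Tendsto (fun _ : ℕ => a l) atTop (nhds (a l))).add hwlim
  rw [add_zero] at hfin
  exact Tendsto.congr (fun n => (hfinal n).symm) hfin

/-- asymptotic checking relations for the ciphertext: the ratios
`Cₙ(i,j)/Cₙ(i,j')` of the ciphertext `Cₙ = P·Mₙ` converge to `τ^{j'-j}`. -/
theorem ciphertext_ratio_limit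
    (k : ℕ) (L : Matrix (Fin k) (Fin k) ℝ) (τ : ℝ)
    (hL : StrongPerronFrobenius L τ)
    (x0 : Fin k → ℝ) (hx0 : IsCyclicVec L x0)
    (hpos : ∀ n : ℕ, ∀ i : Fin k, 0 < (L ^ n).mulVec x0 i)
    (P : Matrix (Fin k) (Fin k) ℝ) (hP : ∀ i j, 0 ≤ P i j)
    (i : Fin k) (hPi : ∃ l, P i l ≠ 0) (j j' : Fin k) :
    Tendsto
      (fun n : ℕ =>
        (P * codingMatrix L x0 n) i j / (P * codingMatrix L x0 n) i j')
      atTop (nhds (τ ^ ((j' : ℤ) - (j : ℤ)))) := by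
  have hk : 0 < k := i.pos
  obtain ⟨a, hLa, hane, halim⟩ := eig_limit hk L τ hL x0 hx0
  obtain ⟨hτ, hmult, hdom, u, hupos, huL⟩ := hL
  set g := (L - τ • (1 : Matrix (Fin k) (Fin k) ℝ)).mulVecLin with hg
  have hgmem : ∀ y, L.mulVec y = τ • y → y ∈ LinearMap.ker g := by
    intro y hy
    rw [LinearMap.mem_ker, hg, Matrix.mulVecLin_apply, Matrix.sub_mulVec,
      Matrix.smul_mulVec, Matrix.one_mulVec, hy, sub_self]
  have hu0 : u ≠ 0 := by
    intro h
    exact absurd (congrFun h i) (ne_of_gt (hupos i))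
  have hdim := cyclic_finrank_ker_le_one L τ x0 hx0
  have hspan : Submodule.span ℝ {u} ≤ LinearMap.ker g := by
    rw [Submodule.span_le, Set.singleton_subset_iff]
    exact hgmem u huL
  have heq : Submodule.span ℝ {u} = LinearMap.ker g := by
    refine Submodule.eq_of_le_of_finrank_le hspan ?_
    rw [finrank_span_singleton hu0]
    exact hdim
  obtain ⟨c, hc⟩ : ∃ c : ℝ, a = c • u := by
    have hmem : a ∈ Submodule.span ℝ {u} := heq ▸ hgmem a hLa
    obtain ⟨c, hc⟩ := Submodule.mem_span_singleton.mp hmem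
    exact ⟨c, hc.symm⟩
  have hage : ∀ l, 0 ≤ a l := by
    intro l
    refine ge_of_tendsto (halim l) (Eventually.of_forall fun n => ?_)
    exact le_of_lt (div_pos (hpos n l) (pow_pos hτ n))
  have hc0 : 0 < c := by
    rcases lt_trichotomy c 0 with h | h | h
    · have : a i < 0 := by
        rw [hc, Pi.smul_apply, smul_eq_mul]
        exact mul_neg_of_neg_of_pos h (hupos i)
      exact absurd this (not_lt.mpr (hage i))
    · exact absurd (by rw [hc, h, zero_smul]) hane
    · exact h
  set F : ℕ → ℝ := fun n => (∑ l, P i l * (L ^ n).mulVec x0 l) / τ ^ n with hF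
  set S := ∑ l, P i l * a l with hS
  have hFlim : Tendsto F atTop (nhds S) := by
    have h := tendsto_finset_sum (Finset.univ : Finset (Fin k))
      (fun l _ => ((halim l).const_mul (P i l)))
    refine h.congr fun n => ?_
    simp only [hF]
    rw [Finset.sum_div]
    exact Finset.sum_congr rfl fun l _ => (mul_div_assoc _ _ _).symm
  obtain ⟨l₀, hl₀⟩ := hPi
  have hPl₀ : 0 < P i l₀ := lt_of_le_of_ne (hP i l₀) (Ne.symm hl₀)
  have hSpos : 0 < S := by
    refine Finset.sum_pos' (fun l _ => mul_nonneg (hP i l) (hage l))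
      ⟨l₀, Finset.mem_univ _, ?_⟩
    have hal₀ : 0 < a l₀ := by
      rw [hc, Pi.smul_apply, smul_eq_mul]
      exact mul_pos hc0 (hupos l₀)
    exact mul_pos hPl₀ hal₀
  have hτn : ∀ n : ℕ, (0:ℝ) < τ ^ n := fun n => pow_pos hτ n
  have hFpos : ∀ n, 0 < F n := by
    intro n
    refine div_pos ?_ (hτn n)
    exact Finset.sum_pos' (fun l _ => mul_nonneg (hP i l) (le_of_lt (hpos n l)))
      ⟨l₀, Finset.mem_univ _, mul_pos hPl₀ (hpos n l₀)⟩
  set cj : ℕ := k - 1 - (j : ℕ) with hcj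
  set cj' : ℕ := k - 1 - (j' : ℕ) with hcj'
  have hentry : ∀ (n : ℕ) (jj : Fin k), (P * codingMatrix L x0 n) i jj
      = τ ^ (n + (k - 1 - (jj : ℕ))) * F (n + (k - 1 - (jj : ℕ))) := by
    intro n jj
    rw [Matrix.mul_apply]
    simp only [hF]
    rw [mul_div_cancel₀ _ (ne_of_gt (hτn _))]
    exact Finset.sum_congr rfl fun l _ => by rw [codingMatrix, Matrix.of_apply]
  have hj1 : (j : ℕ) ≤ k - 1 := Nat.le_pred_of_lt j.isLt
  have hj2 : (j' : ℕ) ≤ k - 1 := Nat.le_pred_of_lt j'.isLt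
  have h1k : 1 ≤ k := hk
  have hzpow : ∀ n : ℕ, τ ^ (n + cj) / τ ^ (n + cj') = τ ^ ((j' : ℤ) - (j : ℤ)) := by
    intro n
    rw [← zpow_natCast τ (n + cj), ← zpow_natCast τ (n + cj'), ← zpow_sub₀ (ne_of_gt hτ)]
    congr 1
    have e1 : ((n + cj : ℕ) : ℤ) = (n : ℤ) + ((k : ℤ) - 1 - (j : ℤ)) := by
      rw [hcj]
      push_cast [Nat.cast_sub hj1, Nat.cast_sub h1k]
      ring
    have e2 : ((n + cj' : ℕ) : ℤ) = (n : ℤ) + ((k : ℤ) - 1 - (j' : ℤ)) := by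
      rw [hcj']
      push_cast [Nat.cast_sub hj2, Nat.cast_sub h1k]
      ring
    rw [e1, e2]
    ring
  have hFj : Tendsto (fun n => F (n + cj)) atTop (nhds S) :=
    hFlim.comp (tendsto_add_atTop_nat cj)
  have hFj' : Tendsto (fun n => F (n + cj')) atTop (nhds S) :=
    hFlim.comp (tendsto_add_atTop_nat cj')
  have hdiv : Tendsto (fun n => F (n + cj) / F (n + cj')) atTop (nhds (S / S)) :=
    hFj.div hFj' (ne_of_gt hSpos)
  rw [div_self (ne_of_gt hSpos)] at hdiv
  have hmul := hdiv.mul_const (τ ^ ((j' : ℤ) - (j : ℤ)))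
  rw [one_mul] at hmul
  refine hmul.congr fun n => ?_
  rw [hentry n j, hentry n j', ← hcj, ← hcj', ← hzpow n]
  have h1 := hFpos (n + cj')
  have h2 := hτn (n + cj')
  field_simp
end

section
/- Let L be a k×k real matrix with the strong Perron–Frobenius property with dominant eigenvalue τ that moreover satisfies the Pisot condition, let x_0 ∈ ℝ^k be cyclic for L with every entry of L^n · x_0 strictly positive for every n ≥ 0, and let P be a k×k real matrix with nonnegative entries whose i-th row is not identically zero; set C_n := P · M_n where M_n are the coding matrices generated by L and x_0. Then for any column indices j, j' ∈ {0, …, k−1}, the length of the checking range tends to zero: C_n(i,j') · ( max over l of (M_n(l,j)/M_n(l,j')) − min over l of (M_n(l,j)/M_n(l,j')) ) → 0 as n → ∞. -/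
set_option maxRecDepth 8000
set_option maxHeartbeats 1000000

open Matrix Polynomial Filter

section Aux

variable {k : ℕ}

lemma sum_mulVec' {ι : Type*} (s : Finset ι) (M : ι → Matrix (Fin k) (Fin k) ℝ)
    (v : Fin k → ℝ) : (∑ i ∈ s, M i).mulVec v = ∑ i ∈ s, (M i).mulVec v := by
  ext l
  simp only [Matrix.mulVec, dotProduct, Finset.sum_apply, Finset.sum_mul]
  rw [Finset.sum_comm]
  congr 1
  funext y
  rw [Matrix.sum_apply, Finset.sum_mul]

lemma pow_mulVec_eig (L : Matrix (Fin k) (Fin k) ℝ) (τ : ℝ) (u : Fin k → ℝ)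
    (h : L.mulVec u = τ • u) : ∀ n : ℕ, (L ^ n).mulVec u = τ ^ n • u := by
  intro n
  induction n with
  | zero => simp [Matrix.one_mulVec]
  | succ n ihn =>
    rw [pow_succ, ← Matrix.mulVec_mulVec, h, Matrix.mulVec_smul, ihn, smul_smul, pow_succ, mul_comm]

lemma aeval_mulVec_eig (L : Matrix (Fin k) (Fin k) ℝ) (τ : ℝ) (u : Fin k → ℝ)
    (h : L.mulVec u = τ • u) (p : ℝ[X]) :
    (aeval L p).mulVec u = p.eval τ • u := by
  induction p using Polynomial.induction_on' with
  | add p q hp hq =>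
    rw [map_add, Matrix.add_mulVec, hp, hq, eval_add, add_smul]
  | monomial n c =>
    rw [aeval_monomial, eval_monomial, ← Algebra.smul_def, Matrix.smul_mulVec,
      pow_mulVec_eig L τ u h n, smul_smul]

lemma tend_pow_mul_geom (d : ℕ) {r : ℝ} (h0 : 0 ≤ r) (h1 : r < 1) :
    Tendsto (fun n : ℕ => ((n : ℝ) + 1) ^ d * r ^ n) atTop (nhds 0) := by
  rcases eq_or_lt_of_le h0 with rfl | hr
  · apply Tendsto.congr' _ tendsto_const_nhds
    filter_upwards [eventually_ge_atTop 1] with n hn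
    rw [zero_pow (by omega), mul_zero]
  · have hs : Summable (fun n : ℕ => ((n : ℝ)) ^ d * r ^ n) := by
      have : ‖r‖ < 1 := by rw [Real.norm_eq_abs, abs_of_pos hr]; exact h1
      exact summable_pow_mul_geometric_of_norm_lt_one d this
    have h2 : Tendsto (fun n : ℕ => ((n : ℝ)) ^ d * r ^ n) atTop (nhds 0) :=
      hs.tendsto_atTop_zero
    have h3 : Tendsto (fun n : ℕ => ((n + 1 : ℕ) : ℝ) ^ d * r ^ (n + 1)) atTop (nhds 0) :=
      h2.comp (tendsto_add_atTop_nat 1)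
    have h4 : Tendsto (fun n : ℕ => r⁻¹ * (((n + 1 : ℕ) : ℝ) ^ d * r ^ (n + 1)))
        atTop (nhds (r⁻¹ * 0)) := h3.const_mul _
    rw [mul_zero] at h4
    apply h4.congr
    intro n
    push_cast
    rw [pow_succ]
    field_simp

end Aux


lemma growth_aux {k : ℕ} (A : Matrix (Fin k) (Fin k) ℂ) (ρ : ℝ) (hρ : 0 < ρ) :
    ∀ (d : ℕ) (p : ℂ[X]), p ≠ 0 → p.natDegree = d →
      (∀ z : ℂ, p.IsRoot z → ‖z‖ ≤ ρ) →
      ∀ w : Fin k → ℂ, (aeval A p).mulVec w = 0 →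
      ∃ C : ℝ, 0 ≤ C ∧ ∀ n : ℕ, ‖(A ^ n).mulVec w‖ ≤ C * ((n : ℝ) + 1) ^ d * ρ ^ n := by
  intro d
  induction d with
  | zero =>
    intro p hp hdeg _ w hw
    refine ⟨0, le_refl _, fun n => ?_⟩
    have : w = 0 := by
      have hc : p = C (p.coeff 0) := Polynomial.eq_C_of_natDegree_eq_zero hdeg
      rw [hc] at hw
      rw [aeval_C, Algebra.algebraMap_eq_smul_one, Matrix.smul_mulVec,
        Matrix.one_mulVec] at hw
      have hc0 : p.coeff 0 ≠ 0 := fun h => hp (by rw [hc, h, map_zero])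
      rcases smul_eq_zero.1 hw with h | h
      · exact absurd h hc0
      · exact h
    simp [this, Matrix.mulVec_zero]
  | succ d ih =>
    intro p hp hdeg hroots w hw
    obtain ⟨z, hz⟩ : ∃ z, p.IsRoot z := by
      apply Complex.exists_root
      rw [Polynomial.degree_eq_natDegree hp, hdeg]
      exact_mod_cast Nat.succ_pos d
    obtain ⟨p₁, hp₁⟩ : (X - C z) ∣ p := Polynomial.dvd_iff_isRoot.2 hz
    have hp₁0 : p₁ ≠ 0 := by rintro rfl; simp at hp₁; exact hp hp₁
    have hXz : (X - C z : ℂ[X]) ≠ 0 := X_sub_C_ne_zero z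
    have hdeg1 : p₁.natDegree = d := by
      have := hdeg
      rw [hp₁, Polynomial.natDegree_mul hXz hp₁0, Polynomial.natDegree_X_sub_C] at this
      omega
    have hroots1 : ∀ y : ℂ, p₁.IsRoot y → ‖y‖ ≤ ρ := by
      intro y hy
      apply hroots
      rw [hp₁]; simp [Polynomial.IsRoot] at hy ⊢; right; exact hy
    set v : Fin k → ℂ := A.mulVec w - z • w with hv
    have hzρ : ‖z‖ ≤ ρ := hroots z hz
    have hvw : (aeval A p₁).mulVec v = 0 := by
      have h1 : (aeval A (X - C z)).mulVec w = v := by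
        rw [map_sub, aeval_X, aeval_C, Matrix.sub_mulVec, Algebra.algebraMap_eq_smul_one,
          Matrix.smul_mulVec, Matrix.one_mulVec]
      rw [← h1, Matrix.mulVec_mulVec, ← _root_.map_mul, mul_comm p₁, ← hp₁, hw]
    obtain ⟨C₁, hC₁0, hC₁⟩ := ih p₁ hp₁0 hdeg1 hroots1 v hvw
    have key : ∀ n : ℕ, ‖(A ^ n).mulVec w‖ ≤
        ρ ^ n * ‖w‖ + ∑ i ∈ Finset.range n, ρ ^ i * ‖(A ^ (n - 1 - i)).mulVec v‖ := by
      intro n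
      induction n with
      | zero => simp [Matrix.one_mulVec]
      | succ n ihn =>
        have hstep : (A ^ (n + 1)).mulVec w = (A ^ n).mulVec v + z • (A ^ n).mulVec w := by
          rw [hv, Matrix.mulVec_sub, Matrix.mulVec_smul, Matrix.mulVec_mulVec, ← pow_succ]
          abel
        rw [hstep]
        have hn1 : ‖(A ^ n).mulVec v + z • (A ^ n).mulVec w‖
            ≤ ‖(A ^ n).mulVec v‖ + ρ * ‖(A ^ n).mulVec w‖ := by
          refine (norm_add_le _ _).trans ?_
          have : ‖z • (A ^ n).mulVec w‖ = ‖z‖ * ‖(A ^ n).mulVec w‖ := by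
            rw [norm_smul]
          rw [this]
          gcongr
        refine hn1.trans ?_
        have hn2 : ρ * ‖(A ^ n).mulVec w‖ ≤ ρ * (ρ ^ n * ‖w‖ +
            ∑ i ∈ Finset.range n, ρ ^ i * ‖(A ^ (n - 1 - i)).mulVec v‖) := by
          exact mul_le_mul_of_nonneg_left ihn hρ.le
        refine (add_le_add le_rfl hn2).trans (le_of_eq ?_)
        simp only [Nat.add_sub_cancel]
        rw [Finset.sum_range_succ' (fun i => ρ ^ i * ‖(A ^ (n - i)).mulVec v‖) n]
        have hsum : ∑ i ∈ Finset.range n, ρ ^ (i+1) * ‖(A ^ (n - (i+1))).mulVec v‖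
            = ∑ i ∈ Finset.range n, ρ * (ρ ^ i * ‖(A ^ (n - 1 - i)).mulVec v‖) :=
          Finset.sum_congr rfl (fun i _ => by
            rw [show n - (i+1) = n - 1 - i from by omega]; ring)
        rw [hsum, ← Finset.mul_sum]
        simp only [pow_zero, one_mul, Nat.sub_zero]
        ring
    refine ⟨‖w‖ + C₁ / ρ, by positivity, fun n => ?_⟩
    have hb1 : ∑ i ∈ Finset.range n, ρ ^ i * ‖(A ^ (n - 1 - i)).mulVec v‖
        ≤ (n : ℝ) * (C₁ * ((n:ℝ) + 1) ^ d * ρ ^ (n - 1)) := by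
      have hterm : ∀ i ∈ Finset.range n, ρ ^ i * ‖(A ^ (n - 1 - i)).mulVec v‖
          ≤ C₁ * ((n:ℝ) + 1) ^ d * ρ ^ (n - 1) := by
        intro i hi
        rw [Finset.mem_range] at hi
        have h1 : ‖(A ^ (n - 1 - i)).mulVec v‖ ≤ C₁ * ((n:ℝ) + 1) ^ d * ρ ^ (n - 1 - i) := by
          refine (hC₁ (n - 1 - i)).trans ?_
          have hle : ((n - 1 - i : ℕ) : ℝ) + 1 ≤ (n : ℝ) + 1 := by
            have : ((n - 1 - i : ℕ) : ℝ) ≤ (n : ℝ) := by exact_mod_cast (by omega : n - 1 - i ≤ n)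
            linarith
          have hpow := pow_le_pow_left₀ (by positivity) hle d
          exact mul_le_mul_of_nonneg_right
            (mul_le_mul_of_nonneg_left hpow hC₁0) (by positivity)
        calc ρ ^ i * ‖(A ^ (n - 1 - i)).mulVec v‖
            ≤ ρ ^ i * (C₁ * ((n:ℝ) + 1) ^ d * ρ ^ (n - 1 - i)) := by
              exact mul_le_mul_of_nonneg_left h1 (by positivity)
          _ = C₁ * ((n:ℝ) + 1) ^ d * (ρ ^ i * ρ ^ (n - 1 - i)) := by ring
          _ = C₁ * ((n:ℝ) + 1) ^ d * ρ ^ (n - 1) := by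
              rw [← pow_add]
              congr 2
              omega
      calc ∑ i ∈ Finset.range n, ρ ^ i * ‖(A ^ (n - 1 - i)).mulVec v‖
          ≤ ∑ _i ∈ Finset.range n, C₁ * ((n:ℝ) + 1) ^ d * ρ ^ (n - 1) :=
            Finset.sum_le_sum hterm
        _ = (n : ℝ) * (C₁ * ((n:ℝ) + 1) ^ d * ρ ^ (n - 1)) := by
            rw [Finset.sum_const, Finset.card_range, nsmul_eq_mul]
    have h1 : ρ ^ n * ‖w‖ ≤ ‖w‖ * ((n:ℝ)+1) ^ (d+1) * ρ ^ n := by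
      have hn0 : (0:ℝ) ≤ (n:ℝ) := Nat.cast_nonneg n
      have hge : (1:ℝ) ≤ ((n:ℝ)+1) ^ (d+1) := one_le_pow₀ (by linarith)
      calc ρ ^ n * ‖w‖ = (‖w‖ * ρ ^ n) * 1 := by ring
        _ ≤ (‖w‖ * ρ ^ n) * ((n:ℝ)+1) ^ (d+1) :=
            mul_le_mul_of_nonneg_left hge (by positivity)
        _ = ‖w‖ * ((n:ℝ)+1) ^ (d+1) * ρ ^ n := by ring
    have h2 : (n : ℝ) * (C₁ * ((n:ℝ) + 1) ^ d * ρ ^ (n-1))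
        ≤ (C₁ / ρ) * ((n:ℝ)+1) ^ (d+1) * ρ ^ n := by
      rcases Nat.eq_zero_or_pos n with rfl | hn
      · simp
        positivity
      · have hrw : ρ ^ (n - 1) = ρ ^ n / ρ := by
          rw [eq_div_iff hρ.ne', ← pow_succ]
          congr 1
          omega
        rw [hrw]
        have hnn : (0:ℝ) ≤ (n:ℝ) + 1 := by positivity
        calc (n : ℝ) * (C₁ * ((n:ℝ) + 1) ^ d * (ρ ^ n / ρ))
            = (C₁ / ρ) * (((n:ℝ)+1) ^ d * (n:ℝ)) * ρ ^ n := by field_simp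
          _ ≤ (C₁ / ρ) * (((n:ℝ)+1) ^ d * ((n:ℝ)+1)) * ρ ^ n := by
              have : ((n:ℝ)+1) ^ d * (n:ℝ) ≤ ((n:ℝ)+1) ^ d * ((n:ℝ)+1) := by
                apply mul_le_mul_of_nonneg_left (by linarith) (by positivity)
              apply mul_le_mul_of_nonneg_right _ (by positivity)
              apply mul_le_mul_of_nonneg_left this (by positivity)
          _ = (C₁ / ρ) * ((n:ℝ)+1) ^ (d+1) * ρ ^ n := by ring
    calc ‖(A ^ n).mulVec w‖
        ≤ ρ ^ n * ‖w‖ + ∑ i ∈ Finset.range n, ρ ^ i * ‖(A ^ (n - 1 - i)).mulVec v‖ := key n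
      _ ≤ ρ ^ n * ‖w‖ + (n : ℝ) * (C₁ * ((n:ℝ) + 1) ^ d * ρ ^ (n-1)) := by linarith
      _ ≤ ‖w‖ * ((n:ℝ)+1) ^ (d+1) * ρ ^ n + (C₁ / ρ) * ((n:ℝ)+1) ^ (d+1) * ρ ^ n := by linarith
      _ = (‖w‖ + C₁ / ρ) * ((n:ℝ) + 1) ^ (d+1) * ρ ^ n := by ring

lemma map_mulVec_coe {k : ℕ} (M : Matrix (Fin k) (Fin k) ℝ) (y : Fin k → ℝ) :
    (M.map (algebraMap ℝ ℂ)).mulVec (fun l => ((y l : ℝ) : ℂ))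
      = fun l => ((M.mulVec y l : ℝ) : ℂ) := by
  funext l
  simp only [Matrix.mulVec, dotProduct, Matrix.map_apply]
  push_cast
  rfl

/-- under the Pisot condition (all non-dominant eigenvalues have
modulus `< 1`), the length of the checking range
`Cₙ(i,j')·(max_l Mₙ(l,j)/Mₙ(l,j') − min_l Mₙ(l,j)/Mₙ(l,j'))` tends to `0`. -/
theorem checking_range_shrinks
    (k : ℕ) (L : Matrix (Fin k) (Fin k) ℝ) (τ : ℝ)
    (hL : StrongPerronFrobenius L τ)
    (hPisot : ∀ z : ℂ, (L.charpoly.map (algebraMap ℝ ℂ)).IsRoot z →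
      z ≠ (τ : ℂ) → ‖z‖ < 1)
    (x0 : Fin k → ℝ) (hx0 : IsCyclicVec L x0)
    (hpos : ∀ n : ℕ, ∀ i : Fin k, 0 < (L ^ n).mulVec x0 i)
    (P : Matrix (Fin k) (Fin k) ℝ) (hP : ∀ i j, 0 ≤ P i j)
    (i : Fin k) (hPi : ∃ l, P i l ≠ 0) (j j' : Fin k) :
    Tendsto
      (fun n : ℕ =>
        (P * codingMatrix L x0 n) i j' *
          ((⨆ l : Fin k, codingMatrix L x0 n l j / codingMatrix L x0 n l j') -
           (⨅ l : Fin k, codingMatrix L x0 n l j / codingMatrix L x0 n l j')))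
      atTop (nhds 0) := by
  classical
  obtain ⟨hτ, hmult, hspec, u, hu, huev⟩ := hL
  have hk : 0 < k := i.pos
  haveI : Nonempty (Fin k) := ⟨i⟩
  set χ := L.charpoly with hχdef
  have hχmonic : χ.Monic := Matrix.charpoly_monic L
  have hχ0 : χ ≠ 0 := hχmonic.ne_zero
  have hχdeg : χ.natDegree = k := by
    rw [hχdef, Matrix.charpoly_natDegree_eq_dim]
    exact Fintype.card_fin k
  obtain ⟨q, hq, hqnd⟩ := χ.exists_eq_pow_rootMultiplicity_mul_and_not_dvd hχ0 τ
  rw [hmult, pow_one] at hq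
  have hq0 : q ≠ 0 := by rintro rfl; rw [mul_zero] at hq; exact hχ0 hq
  have hqτ : q.eval τ ≠ 0 := fun h => hqnd (dvd_iff_isRoot.2 h)
  obtain ⟨a, b, hab⟩ := ((irreducible_X_sub_C τ).coprime_iff_not_dvd.2 hqnd)
  set v := (aeval L (b * q)).mulVec x0 with hv
  set w := (aeval L (a * (X - C τ))).mulVec x0 with hw
  have hCH : aeval L χ = 0 := Matrix.aeval_self_charpoly L
  have hx0split : v + w = x0 := by
    rw [hv, hw, ← Matrix.add_mulVec, ← map_add]
    rw [show b * q + a * (X - C τ) = a * (X - C τ) + b * q from add_comm _ _, hab,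
      _root_.map_one, Matrix.one_mulVec]
  have hveig : L.mulVec v = τ • v := by
    have h1 : (aeval L (X - C τ)).mulVec v = 0 := by
      rw [hv, Matrix.mulVec_mulVec, ← _root_.map_mul]
      rw [show (X - C τ) * (b * q) = b * χ from by rw [hq]; ring]
      rw [_root_.map_mul, hCH, mul_zero, Matrix.zero_mulVec]
    rwa [map_sub, aeval_X, aeval_C, Matrix.sub_mulVec, Algebra.algebraMap_eq_smul_one,
      Matrix.smul_mulVec, Matrix.one_mulVec, sub_eq_zero] at h1
  have hqw : (aeval L q).mulVec w = 0 := by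
    rw [hw, Matrix.mulVec_mulVec, ← _root_.map_mul]
    rw [show q * (a * (X - C τ)) = a * χ from by rw [hq]; ring]
    rw [_root_.map_mul, hCH, mul_zero, Matrix.zero_mulVec]
  have hLn : ∀ n : ℕ, (L ^ n).mulVec x0 = τ ^ n • v + (L ^ n).mulVec w := by
    intro n
    conv_lhs => rw [← hx0split]
    rw [Matrix.mulVec_add, pow_mulVec_eig L τ v hveig]
  -- complexification
  set φ : Matrix (Fin k) (Fin k) ℝ →ₐ[ℝ] Matrix (Fin k) (Fin k) ℂ :=
    AlgHom.mapMatrix (Algebra.ofId ℝ ℂ) with hφ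
  set A := φ L with hA
  set qc := q.map (algebraMap ℝ ℂ) with hqc
  have hqc0 : qc ≠ 0 := Polynomial.map_ne_zero hq0
  set m := min 1 τ with hm
  have hm0 : 0 < m := lt_min one_pos hτ
  have hqcroot : ∀ z : ℂ, qc.IsRoot z → ‖z‖ < m := by
    intro z hz
    have hχroot : (χ.map (algebraMap ℝ ℂ)).IsRoot z := by
      rw [hq, Polynomial.map_mul, Polynomial.IsRoot, eval_mul]
      rw [Polynomial.IsRoot] at hz
      rw [← hqc, hz, mul_zero]
    have hzτ : z ≠ (τ : ℂ) := by
      rintro rfl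
      have h2 : qc.eval ((algebraMap ℝ ℂ) τ) = (algebraMap ℝ ℂ) (q.eval τ) := by
        rw [hqc, Polynomial.eval_map, Polynomial.eval₂_at_apply]
      rw [Polynomial.IsRoot] at hz
      have h3 : (algebraMap ℝ ℂ) τ = (τ : ℂ) := rfl
      rw [h3, hz] at h2
      exact hqτ (Complex.ofReal_eq_zero.1 h2.symm)
    exact lt_min (hPisot z hχroot hzτ) (hspec z hχroot hzτ)
  set T : Finset ℝ := insert (m / 2) (qc.roots.toFinset.image (fun z : ℂ => ‖z‖)) with hT
  have hTne : T.Nonempty := ⟨m / 2, Finset.mem_insert_self _ _⟩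
  set ρ := T.max' hTne with hρdef
  have hρ0 : 0 < ρ :=
    lt_of_lt_of_le (half_pos hm0) (Finset.le_max' T _ (Finset.mem_insert_self _ _))
  have hρm : ρ < m := by
    rw [hρdef, Finset.max'_lt_iff]
    intro y hy
    rcases Finset.mem_insert.1 hy with rfl | hy
    · exact half_lt_self hm0
    · obtain ⟨z, hz, rfl⟩ := Finset.mem_image.1 hy
      exact hqcroot z ((Polynomial.mem_roots hqc0).1 (Multiset.mem_toFinset.1 hz))
  have hρ1 : ρ < 1 := hρm.trans_le (min_le_left 1 τ)
  have hρτ : ρ < τ := hρm.trans_le (min_le_right 1 τ)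
  have hroots' : ∀ z : ℂ, qc.IsRoot z → ‖z‖ ≤ ρ := by
    intro z hz
    apply Finset.le_max'
    exact Finset.mem_insert_of_mem
      (Finset.mem_image_of_mem _ (Multiset.mem_toFinset.2 ((Polynomial.mem_roots hqc0).2 hz)))
  set wc : Fin k → ℂ := fun l => ((w l : ℝ) : ℂ) with hwcdef
  have haq : aeval A qc = (aeval L q).map (algebraMap ℝ ℂ) := by
    rw [hqc, aeval_map_algebraMap ℂ A q, hA, aeval_algHom_apply φ L q, hφ,
      AlgHom.mapMatrix_apply]
    rfl
  have hwc : (aeval A qc).mulVec wc = 0 := by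
    rw [haq, hwcdef, map_mulVec_coe, hqw]
    funext l
    simp
  set dq := qc.natDegree with hdq
  obtain ⟨CC, hCC0, hCCb⟩ := growth_aux A ρ hρ0 dq qc hqc0 rfl hroots' wc hwc
  have hEw : ∀ (n : ℕ) (l : Fin k), |((L ^ n).mulVec w) l| ≤ CC * ((n : ℝ) + 1) ^ dq * ρ ^ n := by
    intro n l
    have h1 : (A ^ n).mulVec wc = fun l => (((L ^ n).mulVec w l : ℝ) : ℂ) := by
      rw [hA, ← _root_.map_pow, hφ, AlgHom.mapMatrix_apply, hwcdef]
      exact map_mulVec_coe _ _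
    calc |((L ^ n).mulVec w) l| = ‖((((L ^ n).mulVec w l : ℝ)) : ℂ)‖ := by
          rw [Complex.norm_real, Real.norm_eq_abs]
      _ = ‖((A ^ n).mulVec wc) l‖ := by rw [h1]
      _ ≤ ‖(A ^ n).mulVec wc‖ := norm_le_pi_norm _ l
      _ ≤ CC * ((n : ℝ) + 1) ^ dq * ρ ^ n := hCCb n
  -- linear algebra: the τ-eigenspace is spanned by z0
  have hb_li : LinearIndependent ℝ (fun jj : Fin k => (L ^ (jj : ℕ)).mulVec x0) := by
    apply linearIndependent_of_top_le_span_of_card_eq_finrank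
    · rw [hx0]
    · simp [Module.finrank_pi]
  have hker : ∀ p : ℝ[X], (aeval L p).mulVec x0 = 0 → χ ∣ p := by
    intro p hp
    have hr0 : (aeval L (p %ₘ χ)).mulVec x0 = 0 := by
      have hdiv := modByMonic_add_div p χ
      have h2 : aeval L p = aeval L (p %ₘ χ) + aeval L χ * aeval L (p /ₘ χ) := by
        conv_lhs => rw [← hdiv]
        rw [map_add, _root_.map_mul]
      rw [h2, hCH, zero_mul, add_zero] at hp
      exact hp
    set r := p %ₘ χ with hrdef
    have hrdeg : r.natDegree < k := by
      rcases eq_or_ne r 0 with h | h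
      · rw [h, Polynomial.natDegree_zero]; exact hk
      · have h3 := Polynomial.natDegree_lt_natDegree h (degree_modByMonic_lt p hχmonic)
        rwa [hχdeg] at h3
    have hsum : ∑ jj : Fin k, r.coeff (jj : ℕ) • (L ^ (jj : ℕ)).mulVec x0 = 0 := by
      have he : aeval L r = ∑ i2 ∈ Finset.range k, r.coeff i2 • L ^ i2 :=
        aeval_eq_sum_range' hrdeg L
      calc ∑ jj : Fin k, r.coeff (jj : ℕ) • (L ^ (jj : ℕ)).mulVec x0
          = ∑ i2 ∈ Finset.range k, r.coeff i2 • (L ^ i2).mulVec x0 :=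
            Fin.sum_univ_eq_sum_range (fun i2 => r.coeff i2 • (L ^ i2).mulVec x0) k
        _ = (aeval L r).mulVec x0 := by
            rw [he, sum_mulVec']
            exact Finset.sum_congr rfl fun i2 _ => (Matrix.smul_mulVec _ _ _).symm
        _ = 0 := hr0
    have hcoeff : ∀ jj : Fin k, r.coeff (jj : ℕ) = 0 :=
      Fintype.linearIndependent_iff.1 hb_li _ hsum
    have hr : r = 0 := by
      apply Polynomial.ext
      intro nn
      rw [Polynomial.coeff_zero]
      rcases lt_or_ge nn k with h | h
      · exact hcoeff ⟨nn, h⟩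
      · exact Polynomial.coeff_eq_zero_of_natDegree_lt (lt_of_lt_of_le hrdeg h)
    rwa [← modByMonic_eq_zero_iff_dvd hχmonic]
  set z0 := (aeval L q).mulVec x0 with hz0def
  have hz0eig : L.mulVec z0 = τ • z0 := by
    have h1 : (aeval L (X - C τ)).mulVec z0 = 0 := by
      rw [hz0def, Matrix.mulVec_mulVec, ← _root_.map_mul, ← hq, hCH, Matrix.zero_mulVec]
    rwa [map_sub, aeval_X, aeval_C, Matrix.sub_mulVec, Algebra.algebraMap_eq_smul_one,
      Matrix.smul_mulVec, Matrix.one_mulVec, sub_eq_zero] at h1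
  have hspanE : ∀ y : Fin k → ℝ, L.mulVec y = τ • y → ∃ c : ℝ, y = c • z0 := by
    intro y hy
    have hy' : y ∈ Submodule.span ℝ (Set.range fun jj : Fin k => (L ^ (jj : ℕ)).mulVec x0) := by
      rw [hx0]; exact Submodule.mem_top
    rw [Submodule.mem_span_range_iff_exists_fun] at hy'
    obtain ⟨c, hc⟩ := hy'
    set p : ℝ[X] := ∑ jj : Fin k, C (c jj) * X ^ (jj : ℕ) with hpdef
    have hψp : (aeval L p).mulVec x0 = y := by
      rw [hpdef, map_sum, sum_mulVec', ← hc]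
      apply Finset.sum_congr rfl
      intro jj _
      rw [_root_.map_mul, aeval_C, aeval_X_pow, ← Algebra.smul_def, Matrix.smul_mulVec]
    have h0 : (aeval L ((X - C τ) * p)).mulVec x0 = 0 := by
      rw [_root_.map_mul, ← Matrix.mulVec_mulVec, hψp]
      rw [map_sub, aeval_X, aeval_C, Matrix.sub_mulVec, Algebra.algebraMap_eq_smul_one,
        Matrix.smul_mulVec, Matrix.one_mulVec, hy, sub_self]
    have hdvd := hker _ h0
    rw [hq] at hdvd
    obtain ⟨s, hs⟩ := (mul_dvd_mul_iff_left (X_sub_C_ne_zero τ)).1 hdvd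
    refine ⟨s.eval τ, ?_⟩
    rw [← hψp, hs]
    calc (aeval L (q * s)).mulVec x0
        = (aeval L s * aeval L q).mulVec x0 := by rw [mul_comm q s, _root_.map_mul]
      _ = (aeval L s).mulVec z0 := by rw [← Matrix.mulVec_mulVec, hz0def]
      _ = s.eval τ • z0 := aeval_mulVec_eig L τ z0 hz0eig s
  have hvne : v ≠ 0 := by
    intro hv0
    have hx0w : (aeval L q).mulVec x0 = 0 := by
      have hxw : x0 = w := by rw [← hx0split, hv0, zero_add]
      rw [hxw]; exact hqw
    have hall : ∀ jj : Fin k, (aeval L q).mulVec ((L ^ (jj : ℕ)).mulVec x0) = 0 := by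
      intro jj
      rw [Matrix.mulVec_mulVec]
      have hcomm : aeval L q * L ^ (jj : ℕ) = L ^ (jj : ℕ) * aeval L q := by
        calc aeval L q * L ^ (jj : ℕ) = aeval L (q * X ^ (jj : ℕ)) := by
              rw [_root_.map_mul, aeval_X_pow]
          _ = aeval L (X ^ (jj : ℕ) * q) := by rw [mul_comm]
          _ = L ^ (jj : ℕ) * aeval L q := by rw [_root_.map_mul, aeval_X_pow]
      rw [hcomm, ← Matrix.mulVec_mulVec, hx0w, Matrix.mulVec_zero]
    have hker_top : Submodule.span ℝ (Set.range fun jj : Fin k => (L ^ (jj : ℕ)).mulVec x0)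
        ≤ LinearMap.ker (aeval L q).mulVecLin := by
      rw [Submodule.span_le]
      rintro _ ⟨jj, rfl⟩
      simpa [Matrix.mulVecLin_apply, LinearMap.mem_ker] using hall jj
    rw [hx0, top_le_iff] at hker_top
    have hu0 : (aeval L q).mulVec u = 0 := by
      have hmem : u ∈ LinearMap.ker (aeval L q).mulVecLin := by
        rw [hker_top]; exact Submodule.mem_top
      simpa [Matrix.mulVecLin_apply, LinearMap.mem_ker] using hmem
    rw [aeval_mulVec_eig L τ u huev q] at hu0
    have h5 : q.eval τ * u i = 0 := congrFun hu0 i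
    rcases mul_eq_zero.1 h5 with h | h
    · exact hqτ h
    · exact (hu i).ne' h
  obtain ⟨cu, hcu⟩ := hspanE u huev
  obtain ⟨cv, hcv⟩ := hspanE v hveig
  have hcu0 : cu ≠ 0 := by
    rintro rfl
    rw [zero_smul] at hcu
    exact (hu i).ne' (congrFun hcu i)
  have hvcu : v = (cv / cu) • u := by
    rw [hcv, hcu, smul_smul]
    congr 1
    field_simp
  -- nonnegativity and positivity of v
  have hg2tend : Tendsto (fun n : ℕ => CC * (((n:ℝ)+1)^dq * (ρ/τ)^n)) atTop (nhds 0) := by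
    have h := tend_pow_mul_geom dq (div_nonneg hρ0.le hτ.le) ((div_lt_one hτ).2 hρτ)
    have h2 := h.const_mul CC
    rw [mul_zero] at h2
    exact h2
  have hvnonneg : ∀ l, 0 ≤ v l := by
    intro l
    have herr : Tendsto (fun n : ℕ => ((L ^ n).mulVec w) l / τ ^ n) atTop (nhds 0) := by
      apply squeeze_zero_norm _ hg2tend
      intro n
      rw [Real.norm_eq_abs, abs_div, abs_of_pos (pow_pos hτ n)]
      have h3 : CC * (((n:ℝ)+1)^dq * (ρ/τ)^n) = (CC * ((n:ℝ)+1)^dq * ρ^n) / τ^n := by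
        rw [div_pow]
        field_simp
      rw [h3]
      exact (div_le_div_iff_of_pos_right (pow_pos hτ n)).2 (hEw n l)
    have hconv : Tendsto (fun n : ℕ => (L ^ n).mulVec x0 l / τ ^ n) atTop (nhds (v l)) := by
      have h4 : ∀ n : ℕ, (L ^ n).mulVec x0 l / τ ^ n = v l + ((L ^ n).mulVec w) l / τ ^ n := by
        intro n
        rw [hLn n, Pi.add_apply, Pi.smul_apply, smul_eq_mul]
        have hτn : τ ^ n ≠ 0 := (pow_pos hτ n).ne'
        field_simp
      have h5 : Tendsto (fun n : ℕ => v l + ((L ^ n).mulVec w) l / τ ^ n) atTop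
          (nhds (v l + 0)) := tendsto_const_nhds.add herr
      rw [add_zero] at h5
      exact h5.congr fun n => (h4 n).symm
    refine ge_of_tendsto' hconv fun n => ?_
    exact (div_pos (hpos n l) (pow_pos hτ n)).le
  have hcnn : 0 ≤ cv / cu := by
    have h6 := hvnonneg i
    rw [hvcu, Pi.smul_apply, smul_eq_mul] at h6
    by_contra hneg
    push_neg at hneg
    nlinarith [hu i]
  have hcne : cv / cu ≠ 0 := by
    intro h
    rw [h, zero_smul] at hvcu
    exact hvne hvcu
  have hcpos : 0 < cv / cu := lt_of_le_of_ne hcnn (Ne.symm hcne)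
  have hvpos : ∀ l, 0 < v l := by
    intro l
    rw [hvcu, Pi.smul_apply, smul_eq_mul]
    exact mul_pos hcpos (hu l)
  -- endgame
  set a1 := k - 1 - (j : ℕ) with ha1
  set b1 := k - 1 - (j' : ℕ) with hb1
  have ha1k : a1 ≤ k := by omega
  have hb1k : b1 ≤ k := by omega
  set G : ℕ → ℝ := fun n => (CC * ((k:ℝ)+1)^dq) * (((n:ℝ)+1)^dq * ρ^n) with hGdef
  have hG0 : ∀ n, 0 ≤ G n := by
    intro n
    apply mul_nonneg (mul_nonneg hCC0 (by positivity)) (by positivity)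
  have hGw : ∀ c1 : ℕ, c1 ≤ k → ∀ (n : ℕ) (l : Fin k), |((L ^ (n + c1)).mulVec w) l| ≤ G n := by
    intro c1 hc1 n l
    refine (hEw (n + c1) l).trans ?_
    have h1 : ((n + c1 : ℕ) : ℝ) + 1 ≤ ((n:ℝ)+1) * ((k:ℝ)+1) := by
      push_cast
      have hck : (c1 : ℝ) ≤ (k : ℝ) := by exact_mod_cast hc1
      have hnn : (0:ℝ) ≤ (n:ℝ) := Nat.cast_nonneg n
      have hkn : (0:ℝ) ≤ (k:ℝ) := Nat.cast_nonneg k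
      nlinarith
    have h2 : ρ ^ (n + c1) ≤ ρ ^ n := by
      rw [pow_add]
      have h3 : ρ ^ c1 ≤ 1 := pow_le_one₀ hρ0.le hρ1.le
      nlinarith [pow_pos hρ0 n, pow_pos hρ0 c1]
    calc CC * (((n + c1 : ℕ):ℝ) + 1) ^ dq * ρ ^ (n + c1)
        ≤ CC * (((n:ℝ)+1) * ((k:ℝ)+1)) ^ dq * ρ ^ n := by
          apply mul_le_mul
            (mul_le_mul_of_nonneg_left (pow_le_pow_left₀ (by positivity) h1 dq) hCC0) h2
            (by positivity) (mul_nonneg hCC0 (by positivity))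
      _ = G n := by rw [mul_pow]; ring
  set vmin := Finset.univ.inf' Finset.univ_nonempty v with hvmindef
  set vmax := Finset.univ.sup' Finset.univ_nonempty v with hvmaxdef
  have hvminpos : 0 < vmin := by
    rw [hvmindef, Finset.lt_inf'_iff]
    exact fun l _ => hvpos l
  have hvminle : ∀ l, vmin ≤ v l := fun l => Finset.inf'_le v (Finset.mem_univ l)
  have hvmaxge : ∀ l, v l ≤ vmax := fun l => Finset.le_sup' v (Finset.mem_univ l)
  have hvmaxpos : 0 < Finset.univ.sup' Finset.univ_nonempty v :=
    lt_of_lt_of_le (hvpos i) (Finset.le_sup' v (Finset.mem_univ i))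
  set δ := τ ^ b1 * vmin / 2 with hδdef
  have hδ : 0 < δ := by rw [hδdef]; positivity
  set r0 := τ ^ a1 / τ ^ b1 with hr0def
  have hr0pos : 0 < r0 := by rw [hr0def]; positivity
  have hGev : ∀ᶠ n in atTop, G n ≤ δ * τ ^ n := by
    have htend : Tendsto (fun n : ℕ => G n / τ ^ n) atTop (nhds 0) := by
      have h := tend_pow_mul_geom dq (div_nonneg hρ0.le hτ.le) ((div_lt_one hτ).2 hρτ)
      have h2 := h.const_mul (CC * ((k:ℝ)+1)^dq)
      rw [mul_zero] at h2
      apply h2.congr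
      intro n
      rw [hGdef, div_pow]
      have hτn : τ ^ n ≠ 0 := (pow_pos hτ n).ne'
      field_simp
    have hlt := htend.eventually (gt_mem_nhds hδ)
    filter_upwards [hlt] with n hn
    rw [div_lt_iff₀ (pow_pos hτ n)] at hn
    linarith
  set t : ℕ → ℝ := fun n => (1 + r0) * G n / (δ * τ ^ n) with htdef
  set S := ∑ l : Fin k, P i l with hSdef
  have hS0 : 0 ≤ S := Finset.sum_nonneg fun l _ => hP i l
  set Q := S * (τ ^ b1 * vmax + δ) * (2 * (1 + r0) / δ) with hQdef
  have hbound : ∀ᶠ n in atTop,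
      0 ≤ (P * codingMatrix L x0 n) i j' *
          ((⨆ l : Fin k, codingMatrix L x0 n l j / codingMatrix L x0 n l j') -
           (⨅ l : Fin k, codingMatrix L x0 n l j / codingMatrix L x0 n l j')) ∧
      (P * codingMatrix L x0 n) i j' *
          ((⨆ l : Fin k, codingMatrix L x0 n l j / codingMatrix L x0 n l j') -
           (⨅ l : Fin k, codingMatrix L x0 n l j / codingMatrix L x0 n l j')) ≤ Q * G n := by
    filter_upwards [hGev] with n hGn
    have hMj : ∀ l, codingMatrix L x0 n l j = τ ^ (n + a1) * v l + ((L ^ (n+a1)).mulVec w) l := by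
      intro l
      have hre : codingMatrix L x0 n l j = (L ^ (n + a1)).mulVec x0 l := rfl
      rw [hre, hLn (n+a1), Pi.add_apply, Pi.smul_apply, smul_eq_mul]
    have hMj' : ∀ l, codingMatrix L x0 n l j' = τ ^ (n + b1) * v l + ((L ^ (n+b1)).mulVec w) l := by
      intro l
      have hre : codingMatrix L x0 n l j' = (L ^ (n + b1)).mulVec x0 l := rfl
      rw [hre, hLn (n+b1), Pi.add_apply, Pi.smul_apply, smul_eq_mul]
    have hMj'pos : ∀ l, 0 < codingMatrix L x0 n l j' := by
      intro l
      have hre : codingMatrix L x0 n l j' = (L ^ (n + b1)).mulVec x0 l := rfl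
      rw [hre]
      exact hpos _ l
    have hlb : ∀ l, δ * τ ^ n ≤ codingMatrix L x0 n l j' := by
      intro l
      rw [hMj' l]
      have h1 : (2 * δ) * τ ^ n ≤ τ ^ (n + b1) * v l := by
        rw [pow_add]
        have h2 := hvminle l
        have h2' : τ^n * τ^b1 * vmin = 2*δ*τ^n := by rw [hδdef]; ring
        have h2'' := mul_le_mul_of_nonneg_left h2
          (mul_pos (pow_pos hτ n) (pow_pos hτ b1)).le
        have h2''' : τ ^ n * τ ^ b1 * vmin = τ ^ n * τ ^ b1 * vmin := rfl
        nlinarith [h2'']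
      have h3 := abs_le.1 (hGw b1 hb1k n l)
      linarith [h3.1]
    have hub : ∀ l, codingMatrix L x0 n l j' ≤ (τ ^ b1 * vmax + δ) * τ ^ n := by
      intro l
      rw [hMj' l]
      have h1 : τ ^ (n + b1) * v l ≤ τ^b1 * vmax * τ^n := by
        rw [pow_add]
        have h2 := hvmaxge l
        have h2'' := mul_le_mul_of_nonneg_left h2
          (mul_pos (pow_pos hτ n) (pow_pos hτ b1)).le
        nlinarith [h2'']
      have h3 := abs_le.1 (hGw b1 hb1k n l)
      have h4 : (τ^b1*vmax+δ)*τ^n = τ^b1*vmax*τ^n + δ*τ^n := by ring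
      linarith [h3.2]
    have hnum : ∀ l, |codingMatrix L x0 n l j - r0 * codingMatrix L x0 n l j'|
        ≤ (1 + r0) * G n := by
      intro l
      rw [hMj l, hMj' l]
      have hτb : (τ:ℝ)^b1 ≠ 0 := (pow_pos hτ b1).ne'
      have hcancel : τ ^ (n + a1) * v l - r0 * (τ ^ (n + b1) * v l) = 0 := by
        rw [hr0def, pow_add, pow_add]
        field_simp
        ring
      have h4 : τ ^ (n + a1) * v l + ((L^(n+a1)).mulVec w) l
          - r0 * (τ ^ (n + b1) * v l + ((L^(n+b1)).mulVec w) l)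
          = ((L^(n+a1)).mulVec w) l - r0 * ((L^(n+b1)).mulVec w) l := by
        linear_combination hcancel
      rw [h4]
      have h5 := abs_le.1 (hGw a1 ha1k n l)
      have h6 := abs_le.1 (hGw b1 hb1k n l)
      rw [abs_le]
      constructor
      · nlinarith [hG0 n, hr0pos, h5.1, h6.2]
      · nlinarith [hG0 n, hr0pos, h5.2, h6.1]
    have ht0 : 0 ≤ t n := by
      rw [htdef]
      apply div_nonneg (mul_nonneg (by linarith) (hG0 n)) (by positivity)
    have hratio : ∀ l, |codingMatrix L x0 n l j / codingMatrix L x0 n l j' - r0| ≤ t n := by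
      intro l
      have hMp : 0 < codingMatrix L x0 n l j' := hMj'pos l
      have heq : codingMatrix L x0 n l j / codingMatrix L x0 n l j' - r0
          = (codingMatrix L x0 n l j - r0 * codingMatrix L x0 n l j')
            / codingMatrix L x0 n l j' := by
        field_simp
      rw [heq, abs_div, abs_of_pos hMp, htdef]
      exact div_le_div₀ (mul_nonneg (by linarith) (hG0 n)) (hnum l) (by positivity) (hlb l)
    have hbddA : BddAbove (Set.range fun l : Fin k =>
        codingMatrix L x0 n l j / codingMatrix L x0 n l j') :=
      Set.Finite.bddAbove (Set.finite_range _)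
    have hbddB : BddBelow (Set.range fun l : Fin k =>
        codingMatrix L x0 n l j / codingMatrix L x0 n l j') :=
      Set.Finite.bddBelow (Set.finite_range _)
    have hsup_le : (⨆ l : Fin k, codingMatrix L x0 n l j / codingMatrix L x0 n l j')
        ≤ r0 + t n :=
      ciSup_le fun l => by have h7 := abs_le.1 (hratio l); linarith [h7.2]
    have hinf_ge : r0 - t n
        ≤ (⨅ l : Fin k, codingMatrix L x0 n l j / codingMatrix L x0 n l j') :=
      le_ciInf fun l => by have h7 := abs_le.1 (hratio l); linarith [h7.1]
    have hdiffnn : 0 ≤ (⨆ l : Fin k, codingMatrix L x0 n l j / codingMatrix L x0 n l j')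
        - (⨅ l : Fin k, codingMatrix L x0 n l j / codingMatrix L x0 n l j') := by
      have h7 := ciInf_le hbddB i
      have h8 := le_ciSup hbddA i
      linarith
    have hCn_nn : 0 ≤ (P * codingMatrix L x0 n) i j' := by
      rw [Matrix.mul_apply]
      exact Finset.sum_nonneg fun l _ => mul_nonneg (hP i l) (hMj'pos l).le
    have hCn_ub : (P * codingMatrix L x0 n) i j' ≤ S * ((τ ^ b1 * vmax + δ) * τ ^ n) := by
      rw [Matrix.mul_apply, hSdef, Finset.sum_mul]
      exact Finset.sum_le_sum fun l _ => mul_le_mul_of_nonneg_left (hub l) (hP i l)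
    refine ⟨mul_nonneg hCn_nn hdiffnn, ?_⟩
    calc (P * codingMatrix L x0 n) i j' *
          ((⨆ l : Fin k, codingMatrix L x0 n l j / codingMatrix L x0 n l j') -
           (⨅ l : Fin k, codingMatrix L x0 n l j / codingMatrix L x0 n l j'))
        ≤ (S * ((τ ^ b1 * vmax + δ) * τ ^ n)) * (2 * t n) := by
          have hfac : 0 ≤ (τ ^ b1 * vmax + δ) * τ ^ n := by
            apply mul_nonneg _ (by positivity)
            nlinarith [pow_pos hτ b1, hvmaxpos, hδ]
          apply mul_le_mul hCn_ub (by linarith) hdiffnn (mul_nonneg hS0 hfac)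
      _ = Q * G n := by
          rw [hQdef, htdef]
          have hτn : τ ^ n ≠ 0 := (pow_pos hτ n).ne'
          field_simp
  have hQG : Tendsto (fun n => Q * G n) atTop (nhds 0) := by
    have h := tend_pow_mul_geom dq hρ0.le hρ1
    have h2 := h.const_mul (Q * (CC * ((k:ℝ)+1)^dq))
    rw [mul_zero] at h2
    apply h2.congr
    intro n
    rw [hGdef]
    ring
  exact squeeze_zero' (hbound.mono fun n h => h.1) (hbound.mono fun n h => h.2) hQG
end

section
/- Let k ≥ 2, let L be a k×k real matrix with the strong Perron–Frobenius property with dominant eigenvalue τ, and let σ denote the maximum of |z| over all complex roots z ≠ τ of the characteristic polynomial of L (the second eigenmodulus). Let x_0 ∈ ℝ^k be cyclic for L and assume every entry of L^n · x_0 is strictly positive for every n ≥ 0. Then for every real σ' with σ < σ' < τ, every integer s ≥ 0, and all coordinate indices i, j, there exists a constant K > 0 such that for every n ≥ 0: |(L^{n+s}·x_0)_i/(L^n·x_0)_i − (L^{n+s}·x_0)_j/(L^n·x_0)_j| ≤ K·(σ'/τ)^n. -/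
open Matrix Polynomial Filter

section Aux

variable {k : ℕ}

lemma eigen_pow (L : Matrix (Fin k) (Fin k) ℝ) (τ : ℝ) (u : Fin k → ℝ)
    (h : L.mulVec u = τ • u) (n : ℕ) : (L ^ n).mulVec u = τ ^ n • u := by
  induction n with
  | zero => simp
  | succ n ih =>
    rw [pow_succ', ← Matrix.mulVec_mulVec, ih, Matrix.mulVec_smul, h, smul_smul, pow_succ',
      mul_comm]

lemma eigen_aeval (L : Matrix (Fin k) (Fin k) ℝ) (τ : ℝ) (u : Fin k → ℝ)
    (h : L.mulVec u = τ • u) (q : ℝ[X]) :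
    (aeval L q).mulVec u = q.eval τ • u := by
  induction q using Polynomial.induction_on' with
  | add p q hp hq => rw [map_add, Matrix.add_mulVec, hp, hq, eval_add, add_smul]
  | monomial n a =>
    rw [aeval_monomial, eval_monomial, Algebra.algebraMap_eq_smul_one, smul_mul_assoc, one_mul,
      Matrix.smul_mulVec, eigen_pow L τ u h n, smul_smul]

lemma charpoly_factor (L : Matrix (Fin k) (Fin k) ℝ) (τ : ℝ)
    (hmult : L.charpoly.rootMultiplicity τ = 1) :
    ∃ p : ℝ[X], p.Monic ∧ (X - C τ) * p = L.charpoly ∧ p.eval τ ≠ 0 := by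
  have hcm : L.charpoly.Monic := Matrix.charpoly_monic L
  have hcne : L.charpoly ≠ 0 := hcm.ne_zero
  have hroot : L.charpoly.IsRoot τ := by
    rw [← Polynomial.rootMultiplicity_pos hcne, hmult]; norm_num
  set p := L.charpoly /ₘ (X - C τ) with hp
  have hfact : (X - C τ) * p = L.charpoly := (mul_divByMonic_eq_iff_isRoot).mpr hroot
  have hpne : p ≠ 0 := by
    intro h; rw [h, mul_zero] at hfact; exact hcne hfact.symm
  have hmon : p.Monic := (monic_X_sub_C τ).of_mul_monic_left (hfact.symm ▸ hcm)
  refine ⟨p, hmon, hfact, ?_⟩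
  have hmul : ((X - C τ) * p).rootMultiplicity τ =
      (X - C τ).rootMultiplicity τ + p.rootMultiplicity τ :=
    Polynomial.rootMultiplicity_mul (by rw [hfact]; exact hcne)
  rw [hfact, hmult, Polynomial.rootMultiplicity_X_sub_C_self] at hmul
  have h0 : p.rootMultiplicity τ = 0 := by omega
  intro hev
  have := (Polynomial.rootMultiplicity_pos hpne).mpr hev
  omega

lemma charpoly_sub_smul_one (M : Matrix (Fin k) (Fin k) ℝ) (τ : ℝ) :
    (M - τ • 1).charpoly = M.charpoly.comp (X + C τ) := by
  have hφ : ∀ r : ℝ[X], r.comp (X + C τ) = (eval₂RingHom C (X + C τ)) r := fun r => rfl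
  rw [hφ, Matrix.charpoly, Matrix.charpoly, RingHom.map_det]
  congr 1
  ext i j
  rw [RingHom.mapMatrix_apply, Matrix.map_apply]
  by_cases hij : i = j
  · subst hij
    simp [charmatrix_apply_eq, Matrix.sub_apply, Matrix.smul_apply, Matrix.one_apply_eq]
    ring
  · simp [charmatrix_apply_ne _ _ _ hij, Matrix.sub_apply, Matrix.smul_apply,
      Matrix.one_apply_ne hij]

lemma eigenspace_span (L : Matrix (Fin k) (Fin k) ℝ) (τ : ℝ)
    (p : ℝ[X]) (hfact : (X - C τ) * p = L.charpoly) (hpτ : p.eval τ ≠ 0)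
    (u : Fin k → ℝ) (hu : u ≠ 0) (huv : L.mulVec u = τ • u)
    (v : Fin k → ℝ) (hv : L.mulVec v = τ • v) : ∃ t : ℝ, v = t • u := by
  classical
  set g : Module.End ℝ (Fin k → ℝ) := (L - τ • 1).mulVecLin with hg
  have hchar : g.charpoly = (L - τ • 1).charpoly := by
    rw [← LinearMap.charpoly_toMatrix g (Pi.basisFun ℝ (Fin k)),
      LinearMap.toMatrix_eq_toMatrix']
    congr 1
    rw [hg, ← Matrix.toLin'_apply', LinearMap.toMatrix'_toLin']
  have hcomp : (L - τ • 1).charpoly = X * p.comp (X + C τ) := by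
    rw [charpoly_sub_smul_one, ← hfact, mul_comp, sub_comp, X_comp, C_comp]
    ring_nf
  have hconst : (p.comp (X + C τ)).coeff 0 = p.eval τ := by
    rw [coeff_zero_eq_eval_zero, eval_comp]
    simp
  have hcompne : p.comp (X + C τ) ≠ 0 := fun h => hpτ (by rw [← hconst, h, coeff_zero])
  have htd0 : (p.comp (X + C τ)).natTrailingDegree = 0 :=
    Polynomial.natTrailingDegree_eq_zero_of_constantCoeff_ne_zero
      (by rwa [constantCoeff_apply, hconst])
  have htd : g.charpoly.natTrailingDegree = 1 := by
    rw [hchar, hcomp, Polynomial.natTrailingDegree_mul X_ne_zero hcompne,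
      natTrailingDegree_X, htd0]
  have hker_le : LinearMap.ker g ≤ g.maxGenEigenspace 0 := by
    intro x hx
    rw [Module.End.mem_maxGenEigenspace]
    exact ⟨1, by simpa using LinearMap.mem_ker.mp hx⟩
  have hfr : Module.finrank ℝ (LinearMap.ker g) ≤ 1 := by
    calc Module.finrank ℝ (LinearMap.ker g)
        ≤ Module.finrank ℝ (g.maxGenEigenspace 0) := Submodule.finrank_mono hker_le
      _ = 1 := by rw [LinearMap.finrank_maxGenEigenspace_zero_eq, htd]
  have hmemu : u ∈ LinearMap.ker g := by
    rw [LinearMap.mem_ker, hg]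
    show (L - τ • 1).mulVec u = 0
    rw [Matrix.sub_mulVec, huv, Matrix.smul_mulVec, Matrix.one_mulVec, sub_self]
  have hmemv : v ∈ LinearMap.ker g := by
    rw [LinearMap.mem_ker, hg]
    show (L - τ • 1).mulVec v = 0
    rw [Matrix.sub_mulVec, hv, Matrix.smul_mulVec, Matrix.one_mulVec, sub_self]
  have hspan : (Submodule.span ℝ {u} : Submodule ℝ (Fin k → ℝ)) = LinearMap.ker g := by
    apply Submodule.eq_of_le_of_finrank_le
    · rwa [Submodule.span_singleton_le_iff_mem]
    · rw [finrank_span_singleton hu]; exact hfr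
  rw [← hspan] at hmemv
  obtain ⟨t, ht⟩ := Submodule.mem_span_singleton.mp hmemv
  exact ⟨t, ht.symm⟩

lemma geom_rec_bound {E : Type*} [NormedAddCommGroup E] [NormedSpace ℂ E]
    (z : ℂ) (σ ρ C : ℝ) (hz : ‖z‖ ≤ σ) (h1 : σ < ρ) (hσ0 : 0 ≤ σ) (hC : 0 ≤ C)
    (u : ℕ → E) (hrec : ∀ n, ‖u (n + 1) - z • u n‖ ≤ C * ρ ^ n) (n : ℕ) :
    ‖u n‖ ≤ (‖u 0‖ + C / (ρ - σ)) * ρ ^ n := by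
  have hρ : 0 < ρ := lt_of_le_of_lt hσ0 h1
  have hρσ : 0 < ρ - σ := by linarith
  set D := ‖u 0‖ + C / (ρ - σ) with hD
  have hCD : C ≤ D * (ρ - σ) := by
    have h2 : C / (ρ - σ) ≤ D := by
      have := norm_nonneg (u 0); rw [hD]; linarith
    calc C = C / (ρ - σ) * (ρ - σ) := by field_simp
      _ ≤ D * (ρ - σ) := mul_le_mul_of_nonneg_right h2 hρσ.le
  induction n with
  | zero =>
    have := div_nonneg hC hρσ.le
    simp only [pow_zero, mul_one, hD]
    linarith
  | succ n ih =>
    have h2 : ‖u (n + 1)‖ ≤ ‖z • u n‖ + C * ρ ^ n := by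
      calc ‖u (n + 1)‖ = ‖u (n + 1) - z • u n + z • u n‖ := by rw [sub_add_cancel]
        _ ≤ ‖u (n + 1) - z • u n‖ + ‖z • u n‖ := norm_add_le _ _
        _ ≤ C * ρ ^ n + ‖z • u n‖ := by linarith [hrec n]
        _ = ‖z • u n‖ + C * ρ ^ n := by ring
    have h3 : ‖z • u n‖ ≤ σ * ‖u n‖ := by
      rw [norm_smul]; exact mul_le_mul_of_nonneg_right hz (norm_nonneg _)
    have hpow : (0:ℝ) < ρ ^ n := pow_pos hρ n
    have h4 : σ * ‖u n‖ ≤ σ * (D * ρ ^ n) := mul_le_mul_of_nonneg_left ih hσ0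
    have h5 : C * ρ ^ n ≤ D * (ρ - σ) * ρ ^ n := mul_le_mul_of_nonneg_right hCD hpow.le
    calc ‖u (n + 1)‖ ≤ σ * (D * ρ ^ n) + C * ρ ^ n := by linarith
      _ ≤ σ * (D * ρ ^ n) + D * (ρ - σ) * ρ ^ n := by linarith
      _ = D * ρ ^ (n + 1) := by ring

lemma poly_pow_bound (Lc : Matrix (Fin k) (Fin k) ℂ) (σ ρ : ℝ)
    (hσ0 : 0 ≤ σ) (hσρ : σ < ρ) :
    ∀ (d : ℕ) (q : ℂ[X]), q.natDegree = d → q.Monic → (∀ z : ℂ, q.IsRoot z → ‖z‖ ≤ σ) →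
      ∀ w : Fin k → ℂ, (aeval Lc q).mulVec w = 0 →
      ∃ C : ℝ, 0 ≤ C ∧ ∀ n, ‖(Lc ^ n).mulVec w‖ ≤ C * ρ ^ n := by
  intro d
  induction d with
  | zero =>
    intro q hdeg hq _ w hw
    have hq1 : q = 1 := hq.natDegree_eq_zero.mp hdeg
    rw [hq1, _root_.map_one, Matrix.one_mulVec] at hw
    refine ⟨0, le_refl _, fun n => ?_⟩
    rw [hw, Matrix.mulVec_zero, norm_zero, zero_mul]
  | succ d ih =>
    intro q hdeg hq hroots w hw
    have hqne : q ≠ 0 := hq.ne_zero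
    have hdegpos : 0 < q.degree := by
      rw [Polynomial.degree_eq_natDegree hqne, hdeg]; exact_mod_cast Nat.succ_pos d
    obtain ⟨z, hz⟩ := Complex.exists_root hdegpos
    have hzσ : ‖z‖ ≤ σ := hroots z hz
    set q' := q /ₘ (X - C z) with hq'def
    have hfact : (X - C z) * q' = q := (mul_divByMonic_eq_iff_isRoot).mpr hz
    have hq'monic : q'.Monic := (monic_X_sub_C z).of_mul_monic_left (hfact.symm ▸ hq)
    have hdeg' : q'.natDegree = d := by
      have h1 : ((X - C z) * q').natDegree = (X - C z).natDegree + q'.natDegree :=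
        Polynomial.natDegree_mul (X_sub_C_ne_zero z) hq'monic.ne_zero
      rw [hfact, hdeg, natDegree_X_sub_C] at h1
      omega
    have hroots' : ∀ z' : ℂ, q'.IsRoot z' → ‖z'‖ ≤ σ := by
      intro z' h
      apply hroots
      rw [IsRoot, ← hfact, eval_mul, h.eq_zero, mul_zero]
    set w' := (Lc - z • 1).mulVec w with hw'def
    have haeX : aeval Lc (X - C z) = Lc - z • 1 := by
      rw [map_sub, aeval_X, aeval_C, Algebra.algebraMap_eq_smul_one]
    have hw' : (aeval Lc q').mulVec w' = 0 := by
      rw [hw'def, ← haeX, Matrix.mulVec_mulVec, ← _root_.map_mul, mul_comm q' (X - C z),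
        hfact, hw]
    obtain ⟨C', hC'0, hC'⟩ := ih q' hdeg' hq'monic hroots' w' hw'
    have hrec : ∀ n, ‖(Lc ^ (n + 1)).mulVec w - z • (Lc ^ n).mulVec w‖ ≤ C' * ρ ^ n := by
      intro n
      have heq : (Lc ^ n).mulVec w' = (Lc ^ (n + 1)).mulVec w - z • (Lc ^ n).mulVec w := by
        rw [hw'def, Matrix.mulVec_mulVec, Matrix.mul_sub, Matrix.mul_smul, Matrix.mul_one,
          ← pow_succ, Matrix.sub_mulVec, Matrix.smul_mulVec]
      rw [← heq]; exact hC' n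
    refine ⟨‖w‖ + C' / (ρ - σ), add_nonneg (norm_nonneg w) (div_nonneg hC'0 (by linarith)),
      fun n => ?_⟩
    have := geom_rec_bound z σ ρ C' hzσ hσρ hσ0 hC'0 (fun n => (Lc ^ n).mulVec w) hrec n
    simpa using this

lemma mulVec_complex (M : Matrix (Fin k) (Fin k) ℝ) (x : Fin k → ℝ) :
    (M.map (algebraMap ℝ ℂ)).mulVec (fun t => ((x t : ℝ) : ℂ)) =
      fun i => ((M.mulVec x i : ℝ) : ℂ) := by
  ext i
  simp only [Matrix.mulVec, dotProduct, Matrix.map_apply]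
  push_cast
  rfl

lemma pow_map_complex (M : Matrix (Fin k) (Fin k) ℝ) (n : ℕ) :
    (M.map (algebraMap ℝ ℂ)) ^ n = (M ^ n).map (algebraMap ℝ ℂ) := by
  rw [← RingHom.mapMatrix_apply, ← RingHom.mapMatrix_apply, map_pow]

lemma aeval_map_complex (L : Matrix (Fin k) (Fin k) ℝ) (p : ℝ[X]) :
    aeval (L.map (algebraMap ℝ ℂ)) (p.map (algebraMap ℝ ℂ)) =
      (aeval L p).map (algebraMap ℝ ℂ) := by
  rw [aeval_map_algebraMap]
  have h1 : L.map (algebraMap ℝ ℂ) = (AlgHom.mapMatrix (Algebra.ofId ℝ ℂ)) L := rfl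
  rw [h1, aeval_algHom_apply]
  rfl

lemma my_div_helper (A m τ σ' : ℝ) (hm : m ≠ 0) (hτ : τ ≠ 0) (n : ℕ) :
    A * σ' ^ n / (m / 2 * τ ^ n) = A * 2 / m * (σ' / τ) ^ n := by
  rw [div_pow]
  field_simp

end Aux

/-- the differences of coordinate ratios of `Lⁿ x₀` decay like
`(σ'/τ)ⁿ` for any `σ'` strictly between the second eigenmodulus `σ` and `τ`. -/
theorem ratio_difference_decay
    (k : ℕ) (hk : 2 ≤ k) (L : Matrix (Fin k) (Fin k) ℝ) (τ σ : ℝ)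
    (hL : StrongPerronFrobenius L τ)
    (hσ : IsGreatest {x : ℝ | ∃ z : ℂ,
      (L.charpoly.map (algebraMap ℝ ℂ)).IsRoot z ∧ z ≠ (τ : ℂ) ∧
      ‖z‖ = x} σ)
    (x0 : Fin k → ℝ) (hx0 : IsCyclicVec L x0)
    (hpos : ∀ n : ℕ, ∀ i : Fin k, 0 < (L ^ n).mulVec x0 i)
    (σ' : ℝ) (hσ'1 : σ < σ') (hσ'2 : σ' < τ)
    (s : ℕ) (i j : Fin k) :
    ∃ K : ℝ, 0 < K ∧ ∀ n : ℕ,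
      |(L ^ (n + s)).mulVec x0 i / (L ^ n).mulVec x0 i -
        (L ^ (n + s)).mulVec x0 j / (L ^ n).mulVec x0 j| ≤ K * (σ' / τ) ^ n := by
  classical
  obtain ⟨hτ, hmult, hdom, u, hupos, hueig⟩ := hL
  have hτne : τ ≠ 0 := ne_of_gt hτ
  have hkpos : 0 < k := by omega
  set i0 : Fin k := ⟨0, hkpos⟩ with hi0
  have hσ0 : 0 ≤ σ := by
    obtain ⟨z, _, _, hzeq⟩ := hσ.1
    rw [← hzeq]; exact norm_nonneg _
  have hσ'pos : 0 < σ' := lt_of_le_of_lt hσ0 hσ'1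
  have hune : u ≠ 0 := fun h => absurd (congrFun h i0) (ne_of_gt (hupos i0))
  obtain ⟨p, hpmon, hfact, hpτ⟩ := charpoly_factor L τ hmult
  -- Bezout decomposition
  set a : ℝ[X] := -(C (p.eval τ)⁻¹) * (p /ₘ (X - C τ)) with ha
  set b : ℝ[X] := C (p.eval τ)⁻¹ with hb
  have habz : a * (X - C τ) + b * p = 1 := by
    have hmd : p %ₘ (X - C τ) + (X - C τ) * (p /ₘ (X - C τ)) = p :=
      Polynomial.modByMonic_add_div p (X - C τ)
    have hmod : p %ₘ (X - C τ) = C (p.eval τ) := Polynomial.modByMonic_X_sub_C_eq_C_eval p τ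
    have hxx : (X - C τ) * (p /ₘ (X - C τ)) = p - C (p.eval τ) := by
      rw [← hmod]; linear_combination hmd
    calc a * (X - C τ) + b * p
        = b * (p - (X - C τ) * (p /ₘ (X - C τ))) := by rw [ha]; ring
      _ = b * C (p.eval τ) := by rw [hxx, sub_sub_cancel]
      _ = 1 := by rw [hb, ← C_mul, inv_mul_cancel₀ hpτ, C_1]
  obtain ⟨v, hv⟩ : ∃ v : Fin k → ℝ, v = (aeval L (b * p)).mulVec x0 := ⟨_, rfl⟩
  obtain ⟨w, hwdef⟩ : ∃ w : Fin k → ℝ, w = (aeval L (a * (X - C τ))).mulVec x0 := ⟨_, rfl⟩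
  have hsum : w + v = x0 := by
    rw [hv, hwdef, ← Matrix.add_mulVec, ← map_add, habz, _root_.map_one, Matrix.one_mulVec]
  have haeX : aeval L (X - C τ) = L - τ • 1 := by
    rw [map_sub, aeval_X, aeval_C, Algebra.algebraMap_eq_smul_one]
  -- v is an eigenvector (possibly zero)
  have hveig : L.mulVec v = τ • v := by
    have h1 : (L - τ • 1) * aeval L (b * p) = 0 := by
      rw [← haeX, ← _root_.map_mul]
      have : (X - C τ) * (b * p) = b * L.charpoly := by rw [← hfact]; ring
      rw [this, _root_.map_mul, Matrix.aeval_self_charpoly, mul_zero]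
    have h2 : L * aeval L (b * p) = τ • aeval L (b * p) := by
      have h1' : (L - τ • 1) * aeval L (b * p) =
          L * aeval L (b * p) - τ • aeval L (b * p) := by
        rw [Matrix.sub_mul, smul_mul_assoc, one_mul]
      rw [h1'] at h1
      exact sub_eq_zero.mp h1
    rw [hv, Matrix.mulVec_mulVec, h2, Matrix.smul_mulVec]
  have hPw : (aeval L p).mulVec w = 0 := by
    rw [hwdef, Matrix.mulVec_mulVec, ← _root_.map_mul]
    have : p * (a * (X - C τ)) = a * L.charpoly := by rw [← hfact]; ring
    rw [this, _root_.map_mul, Matrix.aeval_self_charpoly, mul_zero, Matrix.zero_mulVec]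
  have hdecomp : ∀ n : ℕ, (L ^ n).mulVec x0 = (L ^ n).mulVec w + τ ^ n • v := by
    intro n
    conv_lhs => rw [← hsum]
    rw [Matrix.mulVec_add, eigen_pow L τ v hveig n]
  -- error bound via complexification
  obtain ⟨Lc, hLc⟩ : ∃ Lc : Matrix (Fin k) (Fin k) ℂ, Lc = L.map (algebraMap ℝ ℂ) := ⟨_, rfl⟩
  obtain ⟨pc, hpc⟩ : ∃ pc : ℂ[X], pc = p.map (algebraMap ℝ ℂ) := ⟨_, rfl⟩
  have hpcmon : pc.Monic := hpc ▸ hpmon.map _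
  have hpcroots : ∀ z : ℂ, pc.IsRoot z → ‖z‖ ≤ σ := by
    intro z hzr
    have hzτ : z ≠ (τ : ℂ) := by
      intro hzt
      apply hpτ
      have h1 : pc.eval ((algebraMap ℝ ℂ) τ) = (algebraMap ℝ ℂ) (p.eval τ) := by
        rw [hpc, eval_map, eval₂_at_apply]
      rw [hzt] at hzr
      have h2 : ((τ:ℝ):ℂ) = (algebraMap ℝ ℂ) τ := rfl
      rw [IsRoot, h2, h1] at hzr
      simpa using hzr
    have hzc : (L.charpoly.map (algebraMap ℝ ℂ)).IsRoot z := by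
      have hzr' : (p.map (algebraMap ℝ ℂ)).eval z = 0 := by rw [← hpc]; exact hzr
      rw [← hfact, Polynomial.map_mul, IsRoot, eval_mul, hzr', mul_zero]
    exact hσ.2 ⟨z, hzc, hzτ, rfl⟩
  obtain ⟨wc, hwc⟩ : ∃ wc : Fin k → ℂ, wc = fun t => ((w t : ℝ) : ℂ) := ⟨_, rfl⟩
  have hwc0 : (aeval Lc pc).mulVec wc = 0 := by
    rw [hLc, hpc, aeval_map_complex, hwc, mulVec_complex, hPw]
    ext t; simp
  obtain ⟨C, hC0, hC⟩ := poly_pow_bound Lc σ σ' hσ0 hσ'1 pc.natDegree pc rfl hpcmon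
    hpcroots wc hwc0
  have herr : ∀ (n : ℕ) (t : Fin k), |(L ^ n).mulVec w t| ≤ C * σ' ^ n := by
    intro n t
    have h1 : (Lc ^ n).mulVec wc t = (((L ^ n).mulVec w t : ℝ) : ℂ) := by
      rw [hLc, pow_map_complex, hwc, mulVec_complex]
    calc |(L ^ n).mulVec w t| = ‖(((L ^ n).mulVec w t : ℝ) : ℂ)‖ := by
          rw [Complex.norm_real, Real.norm_eq_abs]
      _ = ‖(Lc ^ n).mulVec wc t‖ := by rw [h1]
      _ ≤ ‖(Lc ^ n).mulVec wc‖ := norm_le_pi_norm _ t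
      _ ≤ C * σ' ^ n := hC n
  -- v = t • u with t > 0
  obtain ⟨t, htv⟩ := eigenspace_span L τ p hfact hpτ u hune hueig v hveig
  have hvne : v ≠ 0 := by
    intro hv0
    have hxw : (aeval L p).mulVec x0 = 0 := by
      have : x0 = w := by rw [← hsum, hv0, add_zero]
      rw [this]; exact hPw
    have hall : ∀ m : ℕ, (aeval L p).mulVec ((L ^ m).mulVec x0) = 0 := by
      intro m
      rw [Matrix.mulVec_mulVec]
      have hcomm : aeval L p * L ^ m = L ^ m * aeval L p := by
        rw [← aeval_X_pow (R := ℝ), ← _root_.map_mul, ← _root_.map_mul, mul_comm]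
      rw [hcomm, ← Matrix.mulVec_mulVec, hxw, Matrix.mulVec_zero]
    have hsub : Submodule.span ℝ (Set.range fun jj : Fin k => (L ^ (jj : ℕ)).mulVec x0) ≤
        LinearMap.ker (Matrix.mulVecLin (aeval L p)) := by
      rw [Submodule.span_le]
      rintro _ ⟨m, rfl⟩
      exact LinearMap.mem_ker.mpr (by simpa using hall m)
    rw [hx0] at hsub
    have humem := hsub (Submodule.mem_top : u ∈ ⊤)
    rw [LinearMap.mem_ker] at humem
    have h3 : (aeval L p).mulVec u = 0 := by simpa using humem
    rw [eigen_aeval L τ u hueig p] at h3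
    have h4 := congrFun h3 i0
    simp only [Pi.smul_apply, smul_eq_mul, Pi.zero_apply] at h4
    rcases mul_eq_zero.mp h4 with h5 | h5
    · exact hpτ h5
    · exact ne_of_gt (hupos i0) h5
  have htne : t ≠ 0 := fun h0 => hvne (by rw [htv, h0, zero_smul])
  have hratiolt : σ' / τ < 1 := (div_lt_one hτ).mpr hσ'2
  have hrationn : 0 ≤ σ' / τ := by positivity
  have htendsto : Tendsto (fun n : ℕ => C * (σ' / τ) ^ n) atTop (nhds 0) := by
    simpa using (tendsto_pow_atTop_nhds_zero_of_lt_one hrationn hratiolt).const_mul C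
  have hsig : ∀ n : ℕ, (σ' / τ) ^ n * τ ^ n = σ' ^ n := by
    intro n; rw [div_pow, div_mul_cancel₀ _ (pow_ne_zero n hτne)]
  have ht : 0 < t := by
    by_contra hle
    push_neg at hle
    have htneg : t < 0 := lt_of_le_of_ne hle htne
    have hd : 0 < -t * u i0 := mul_pos (neg_pos.mpr htneg) (hupos i0)
    obtain ⟨N, hN⟩ := (htendsto.eventually (gt_mem_nhds hd)).exists
    have h1 := hpos N i0
    have h2 : (L ^ N).mulVec x0 i0 = (L ^ N).mulVec w i0 + τ ^ N * (t * u i0) := by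
      rw [hdecomp N]
      simp only [Pi.add_apply, Pi.smul_apply, smul_eq_mul, htv]
      try ring
    have h3 := herr N i0
    have h6 : (L ^ N).mulVec w i0 ≤ C * σ' ^ N := le_trans (le_abs_self _) h3
    have hpw : (0:ℝ) < τ ^ N := pow_pos hτ N
    have h4 : C * σ' ^ N = C * (σ' / τ) ^ N * τ ^ N := by rw [mul_assoc, hsig]
    have hB : C * (σ' / τ) ^ N * τ ^ N < -t * u i0 * τ ^ N :=
      mul_lt_mul_of_pos_right hN hpw
    linarith [h1, h2, h6, h4, hB]
  -- main estimate
  obtain ⟨g, hgdef⟩ : ∃ g : Fin k → ℝ, g = fun idx => t * u idx := ⟨_, rfl⟩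
  have hg : ∀ idx, 0 < g idx := fun idx => by rw [hgdef]; exact mul_pos ht (hupos idx)
  have hcoord : ∀ (n : ℕ) (idx : Fin k),
      (L ^ n).mulVec x0 idx = τ ^ n * g idx + (L ^ n).mulVec w idx := by
    intro n idx
    rw [hdecomp n]
    simp only [Pi.add_apply, Pi.smul_apply, smul_eq_mul, htv, hgdef]
    try ring
  obtain ⟨m, hm⟩ : ∃ m : ℝ, m = min (g i) (g j) := ⟨_, rfl⟩
  have hmpos : 0 < m := by rw [hm]; exact lt_min (hg i) (hg j)
  obtain ⟨N, hN⟩ := eventually_atTop.mp (htendsto.eventually (gt_mem_nhds (half_pos hmpos)))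
  obtain ⟨Q, hQ⟩ : ∃ Q : ℝ, Q = C * (σ' ^ s + τ ^ s) * 2 / m := ⟨_, rfl⟩
  have hQ0 : 0 ≤ Q := by
    rw [hQ]
    apply div_nonneg _ hmpos.le
    positivity
  have htail : ∀ n, N ≤ n → ∀ idx : Fin k, m ≤ g idx →
      |(L ^ (n + s)).mulVec x0 idx / (L ^ n).mulVec x0 idx - τ ^ s| ≤ Q * (σ' / τ) ^ n := by
    intro n hn idx hmidx
    have hb := hpos n idx
    have hpw : (0:ℝ) < τ ^ n := pow_pos hτ n
    have hlow : m / 2 * τ ^ n ≤ (L ^ n).mulVec x0 idx := by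
      have h3 := herr n idx
      have h7 := hN n hn
      have h8 : -(C * σ' ^ n) ≤ (L ^ n).mulVec w idx := neg_le_of_abs_le h3
      have h4 : C * σ' ^ n = C * (σ' / τ) ^ n * τ ^ n := by rw [mul_assoc, hsig]
      have hA : τ ^ n * m ≤ τ ^ n * g idx := mul_le_mul_of_nonneg_left hmidx hpw.le
      have hB : C * (σ' / τ) ^ n * τ ^ n ≤ m / 2 * τ ^ n :=
        mul_le_mul_of_nonneg_right h7.le hpw.le
      rw [hcoord n idx]
      linarith [hA, hB, h8, h4]
    have habs : |(L ^ (n + s)).mulVec x0 idx - τ ^ s * (L ^ n).mulVec x0 idx| ≤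
        C * (σ' ^ s + τ ^ s) * σ' ^ n := by
      have heq2 : (L ^ (n + s)).mulVec x0 idx - τ ^ s * (L ^ n).mulVec x0 idx =
          (L ^ (n + s)).mulVec w idx - τ ^ s * (L ^ n).mulVec w idx := by
        rw [hcoord (n + s) idx, hcoord n idx, pow_add]; ring
      rw [heq2]
      have h1 := herr (n + s) idx
      have h2 := herr n idx
      have hts : (0:ℝ) ≤ τ ^ s := (pow_pos hτ s).le
      calc |(L ^ (n + s)).mulVec w idx - τ ^ s * (L ^ n).mulVec w idx|
          ≤ |(L ^ (n + s)).mulVec w idx| + |τ ^ s * (L ^ n).mulVec w idx| := abs_sub _ _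
        _ = |(L ^ (n + s)).mulVec w idx| + τ ^ s * |(L ^ n).mulVec w idx| := by
            rw [abs_mul, abs_of_nonneg hts]
        _ ≤ C * σ' ^ (n + s) + τ ^ s * (C * σ' ^ n) := by
            have := mul_le_mul_of_nonneg_left h2 hts
            linarith [h1]
        _ = C * (σ' ^ s + τ ^ s) * σ' ^ n := by rw [pow_add]; ring
    have hdiveq : (L ^ (n + s)).mulVec x0 idx / (L ^ n).mulVec x0 idx - τ ^ s =
        ((L ^ (n + s)).mulVec x0 idx - τ ^ s * (L ^ n).mulVec x0 idx) /
          (L ^ n).mulVec x0 idx := by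
      rw [eq_div_iff hb.ne', sub_mul, div_mul_cancel₀ _ hb.ne']
    rw [hdiveq, abs_div, abs_of_pos hb]
    have hlow2 : 0 < m / 2 * τ ^ n := by positivity
    calc |(L ^ (n + s)).mulVec x0 idx - τ ^ s * (L ^ n).mulVec x0 idx| / (L ^ n).mulVec x0 idx
        ≤ C * (σ' ^ s + τ ^ s) * σ' ^ n / (m / 2 * τ ^ n) :=
          div_le_div₀ (by positivity) habs hlow2 hlow
      _ = Q * (σ' / τ) ^ n := by rw [hQ]; exact my_div_helper _ _ _ _ hmpos.ne' hτne n
  obtain ⟨D, hD⟩ : ∃ D : ℝ, D = ∑ n ∈ Finset.range N,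
    |(L ^ (n + s)).mulVec x0 i / (L ^ n).mulVec x0 i -
      (L ^ (n + s)).mulVec x0 j / (L ^ n).mulVec x0 j| * (τ / σ') ^ n := ⟨_, rfl⟩
  have hD0 : 0 ≤ D := by
    rw [hD]
    apply Finset.sum_nonneg
    intro n _
    positivity
  refine ⟨1 + 2 * Q + D, by linarith, fun n => ?_⟩
  have hpowpos : 0 < (σ' / τ) ^ n := pow_pos (div_pos hσ'pos hτ) n
  by_cases hn : N ≤ n
  · have hi := htail n hn i (by rw [hm]; exact min_le_left _ _)
    have hj := htail n hn j (by rw [hm]; exact min_le_right _ _)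
    calc |(L ^ (n + s)).mulVec x0 i / (L ^ n).mulVec x0 i -
          (L ^ (n + s)).mulVec x0 j / (L ^ n).mulVec x0 j|
        = |((L ^ (n + s)).mulVec x0 i / (L ^ n).mulVec x0 i - τ ^ s) -
            ((L ^ (n + s)).mulVec x0 j / (L ^ n).mulVec x0 j - τ ^ s)| :=
          (congrArg abs (sub_sub_sub_cancel_right _ _ _)).symm
      _ ≤ |(L ^ (n + s)).mulVec x0 i / (L ^ n).mulVec x0 i - τ ^ s| +
            |(L ^ (n + s)).mulVec x0 j / (L ^ n).mulVec x0 j - τ ^ s| := abs_sub _ _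
      _ ≤ Q * (σ' / τ) ^ n + Q * (σ' / τ) ^ n := add_le_add hi hj
      _ ≤ (1 + 2 * Q + D) * (σ' / τ) ^ n := by
          have h9 : 0 ≤ (1 + D) * (σ' / τ) ^ n :=
            mul_nonneg (by linarith) hpowpos.le
          linarith
  · push_neg at hn
    have hterm : |(L ^ (n + s)).mulVec x0 i / (L ^ n).mulVec x0 i -
        (L ^ (n + s)).mulVec x0 j / (L ^ n).mulVec x0 j| * (τ / σ') ^ n ≤ D := by
      rw [hD]
      apply Finset.single_le_sum (f := fun n => |(L ^ (n + s)).mulVec x0 i /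
        (L ^ n).mulVec x0 i - (L ^ (n + s)).mulVec x0 j / (L ^ n).mulVec x0 j| * (τ / σ') ^ n)
        (fun nn _ => by positivity) (Finset.mem_range.mpr hn)
    have hinv : (τ / σ') ^ n * (σ' / τ) ^ n = 1 := by
      rw [← mul_pow, div_mul_div_comm, mul_comm σ' τ, div_self (by positivity), one_pow]
    calc |(L ^ (n + s)).mulVec x0 i / (L ^ n).mulVec x0 i -
          (L ^ (n + s)).mulVec x0 j / (L ^ n).mulVec x0 j|
        = |(L ^ (n + s)).mulVec x0 i / (L ^ n).mulVec x0 i -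
            (L ^ (n + s)).mulVec x0 j / (L ^ n).mulVec x0 j| *
            ((τ / σ') ^ n * (σ' / τ) ^ n) := by rw [hinv, mul_one]
      _ = (|(L ^ (n + s)).mulVec x0 i / (L ^ n).mulVec x0 i -
            (L ^ (n + s)).mulVec x0 j / (L ^ n).mulVec x0 j| * (τ / σ') ^ n) *
            (σ' / τ) ^ n := by ring
      _ ≤ D * (σ' / τ) ^ n := mul_le_mul_of_nonneg_right hterm hpowpos.le
      _ ≤ (1 + 2 * Q + D) * (σ' / τ) ^ n := by
          have h9 : 0 ≤ (1 + 2 * Q) * (σ' / τ) ^ n :=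
            mul_nonneg (by linarith) hpowpos.le
          linarith
end

section
/- Let a_0, …, a_{k−1} be real numbers with a_0 ≠ 0, let L be the left companion matrix of these coefficients, and suppose L has the strong Perron–Frobenius property with dominant eigenvalue τ. Let S be the standard sequence of the recurrence: S_0 = S_1 = ⋯ = S_{k−2} = 0, S_{k−1} = 1, and S_{n+k} = a_{k−1}·S_{n+k−1} + ⋯ + a_1·S_{n+1} + a_0·S_n for all n ≥ 0. Then S_n ≠ 0 for all sufficiently large n, and S_{n+1}/S_n → τ as n → ∞. -/
open Matrix Polynomial Filter

/-- The left companion matrix of coefficients `a_0, …, a_{k-1}`. -/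
def leftCompanion {k : ℕ} (a : Fin k → ℝ) : Matrix (Fin k) (Fin k) ℝ :=
  Matrix.of fun (i j : Fin k) =>
    if (i : ℕ) = 0 then a ⟨k - 1 - (j : ℕ), by have := j.isLt; omega⟩
    else if (i : ℕ) = (j : ℕ) + 1 then 1 else 0

noncomputable section SPFaux

namespace SPFaux

/-- Shift operator on sequences. -/
def shiftEnd : Module.End ℂ (ℕ → ℂ) where
  toFun f := fun n => f (n + 1)
  map_add' _ _ := rfl
  map_smul' _ _ := rfl

lemma shiftEnd_pow_apply (i : ℕ) (h : ℕ → ℂ) (n : ℕ) : (shiftEnd ^ i) h n = h (n + i) := by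
  induction i generalizing h n with
  | zero => rfl
  | succ i ih =>
    rw [pow_succ]
    show (shiftEnd ^ i) (shiftEnd h) n = _
    rw [ih]
    show h (n + i + 1) = h (n + (i + 1))
    congr 1

lemma aeval_shiftEnd_apply (p : ℂ[X]) (h : ℕ → ℂ) (n : ℕ) :
    (aeval shiftEnd p) h n = ∑ i ∈ Finset.range (p.natDegree + 1), p.coeff i * h (n + i) := by
  rw [Polynomial.aeval_eq_sum_range]
  rw [LinearMap.coe_sum, Finset.sum_apply, Finset.sum_apply]
  refine Finset.sum_congr rfl fun i _ => ?_
  rw [LinearMap.smul_apply, Pi.smul_apply, shiftEnd_pow_apply]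
  simp [smul_eq_mul]

/-- If `h (n+1) = z * h n + g n` with `|z| < τ` and `g n / τ^n → 0`, then `h n / τ^n → 0`. -/
lemma decay (τ : ℝ) (hτ : 0 < τ) (z : ℂ) (hz : ‖z‖ < τ)
    (h g : ℕ → ℂ) (hrec : ∀ n, h (n + 1) = z * h n + g n)
    (hg : Tendsto (fun n => g n / (τ : ℂ) ^ n) atTop (nhds 0)) :
    Tendsto (fun n => h n / (τ : ℂ) ^ n) atTop (nhds 0) := by
  have hτ' : (τ : ℂ) ≠ 0 := by exact_mod_cast hτ.ne'
  set r : ℝ := ‖z‖ / τ with hrdef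
  have hr0 : 0 ≤ r := div_nonneg (norm_nonneg z) hτ.le
  have hr1 : r < 1 := (div_lt_one hτ).2 hz
  set b : ℕ → ℂ := fun n => h n / (τ : ℂ) ^ n with hbdef
  set d : ℕ → ℝ := fun n => ‖g n / (τ : ℂ) ^ n‖ / τ with hddef
  have hd : Tendsto d atTop (nhds 0) := by
    have := hg.norm.div_const τ
    simpa [hddef] using this
  have hstep : ∀ n, ‖b (n + 1)‖ ≤ r * ‖b n‖ + d n := by
    intro n
    have heq : b (n + 1) = (z / (τ : ℂ)) * b n + g n / (τ : ℂ) ^ n / (τ : ℂ) := by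
      simp only [hbdef, hrec n, pow_succ]
      field_simp
    rw [heq]
    refine (norm_add_le _ _).trans ?_
    have h1 : ‖(z / (τ : ℂ)) * b n‖ = r * ‖b n‖ := by
      rw [norm_mul, norm_div, Complex.norm_real, Real.norm_eq_abs, abs_of_pos hτ]
    have h2 : ‖g n / (τ : ℂ) ^ n / (τ : ℂ)‖ = d n := by
      rw [norm_div, Complex.norm_real, Real.norm_eq_abs, abs_of_pos hτ]
    rw [h1, h2]
  rw [NormedAddCommGroup.tendsto_nhds_zero]
  intro ε hε
  have h1r : 0 < 1 - r := by linarith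
  obtain ⟨N, hN⟩ := (Metric.tendsto_atTop.1 hd) (ε / 2 * (1 - r)) (by positivity)
  have hdN : ∀ n, N ≤ n → d n ≤ ε / 2 * (1 - r) := by
    intro n hn
    have := hN n hn
    rw [Real.dist_eq, sub_zero] at this
    exact (le_abs_self _).trans this.le
  have key : ∀ m, ‖b (N + m)‖ ≤ r ^ m * ‖b N‖ + ε / 2 := by
    intro m
    induction m with
    | zero => simp; linarith
    | succ m ih =>
      have hst := hstep (N + m)
      have h2 : d (N + m) ≤ ε / 2 * (1 - r) := hdN _ (Nat.le_add_right _ _)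
      have : ‖b (N + (m + 1))‖ = ‖b (N + m + 1)‖ := by rw [Nat.add_succ]
      rw [this]
      calc ‖b (N + m + 1)‖ ≤ r * ‖b (N + m)‖ + d (N + m) := hst
        _ ≤ r * (r ^ m * ‖b N‖ + ε / 2) + ε / 2 * (1 - r) := by
            have := mul_le_mul_of_nonneg_left ih hr0
            linarith
        _ = r ^ (m + 1) * ‖b N‖ + ε / 2 := by ring
  have hpow : Tendsto (fun m : ℕ => r ^ m * ‖b N‖) atTop (nhds 0) := by
    simpa using (tendsto_pow_atTop_nhds_zero_of_lt_one hr0 hr1).mul_const ‖b N‖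
  obtain ⟨M, hM⟩ := (Metric.tendsto_atTop.1 hpow) (ε / 2) (by positivity)
  filter_upwards [eventually_ge_atTop (N + M)] with n hn
  have hm : n = N + (n - N) := by omega
  have h2 : r ^ (n - N) * ‖b N‖ < ε / 2 := by
    have := hM (n - N) (by omega)
    rwa [Real.dist_eq, sub_zero, abs_of_nonneg (by positivity)] at this
  calc ‖b n‖ = ‖b (N + (n - N))‖ := by rw [← hm]
    _ ≤ r ^ (n - N) * ‖b N‖ + ε / 2 := key _
    _ < ε / 2 + ε / 2 := by linarith
    _ = ε := by ring

/-- Homogeneous decay: a solution of a monic recurrence whose characteristic roots all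
have modulus `< τ` is `o(τ^n)`. -/
lemma homog (τ : ℝ) (hτ : 0 < τ) :
    ∀ (d : ℕ) (q : ℂ[X]), q.Monic → q.natDegree = d →
      (∀ z, q.IsRoot z → ‖z‖ < τ) →
      ∀ h : ℕ → ℂ, (aeval shiftEnd q) h = 0 →
      Tendsto (fun n => h n / (τ : ℂ) ^ n) atTop (nhds 0) := by
  intro d
  induction d with
  | zero =>
    intro q hq hdeg _ h hh
    have h1 : q = 1 := Polynomial.eq_one_of_monic_natDegree_zero hq hdeg
    rw [h1, _root_.map_one] at hh
    have h2 : h = 0 := by simpa using hh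
    simp [h2, tendsto_const_nhds]
  | succ d ih =>
    intro q hq hdeg hroots h hh
    have hq0 : q ≠ 0 := hq.ne_zero
    have hdegpos : 0 < q.degree := by
      rw [Polynomial.degree_eq_natDegree hq0, hdeg]
      exact_mod_cast Nat.succ_pos d
    obtain ⟨z, hz⟩ := Complex.exists_root hdegpos
    have hzlt := hroots z hz
    set g : ℂ[X] := q /ₘ (X - C z) with hgdef
    have hfact : (X - C z) * g = q := Polynomial.mul_divByMonic_eq_iff_isRoot.2 hz
    have hgmonic : g.Monic :=
      Polynomial.Monic.of_mul_monic_left (Polynomial.monic_X_sub_C z) (hfact.symm ▸ hq)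
    have hgdeg : g.natDegree = d := by
      have h1 : ((X - C z) * g).natDegree = 1 + g.natDegree := by
        rw [Polynomial.natDegree_mul (Polynomial.X_sub_C_ne_zero z) hgmonic.ne_zero,
          Polynomial.natDegree_X_sub_C]
      rw [hfact, hdeg] at h1
      omega
    have hgroots : ∀ w, g.IsRoot w → ‖w‖ < τ := by
      intro w hw
      refine hroots w ?_
      show q.eval w = 0
      rw [← hfact, Polynomial.eval_mul, hw.eq_zero, mul_zero]
    set h' : ℕ → ℂ := (aeval shiftEnd (X - C z)) h with hh'def
    have hgh' : (aeval shiftEnd g) h' = 0 := by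
      rw [hh'def, ← Module.End.mul_apply, ← _root_.map_mul, mul_comm g (X - C z), hfact]
      exact hh
    have ihh := ih g hgmonic hgdeg hgroots h' hgh'
    have hrec : ∀ n, h (n + 1) = z * h n + h' n := by
      intro n
      have hv : h' n = h (n + 1) - z * h n := by
        rw [hh'def, map_sub, Polynomial.aeval_X, Polynomial.aeval_C]
        simp [shiftEnd, Module.algebraMap_end_apply]
      rw [hv]
      ring
    exact decay τ hτ z hzlt h h' hrec ihh

lemma pow_mulVec_eig {k : ℕ} (L : Matrix (Fin k) (Fin k) ℝ) (u : Fin k → ℝ) (τ : ℝ)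
    (hu : L.mulVec u = τ • u) (n : ℕ) : (L ^ n).mulVec u = τ ^ n • u := by
  induction n with
  | zero => simp [Matrix.one_mulVec]
  | succ n ih =>
    rw [pow_succ', ← Matrix.mulVec_mulVec, ih, Matrix.mulVec_smul, hu, smul_smul, pow_succ, mul_comm]

lemma aeval_mulVec_eig {k : ℕ} (L : Matrix (Fin k) (Fin k) ℝ) (u : Fin k → ℝ) (τ : ℝ)
    (hu : L.mulVec u = τ • u) (p : ℝ[X]) :
    (aeval L p).mulVec u = p.eval τ • u := by
  induction p using Polynomial.induction_on' with
  | add p q hp hq => rw [map_add, Matrix.add_mulVec, hp, hq, eval_add, add_smul]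
  | monomial n c =>
    rw [aeval_monomial, eval_monomial, Algebra.algebraMap_eq_smul_one, smul_mul_assoc,
      one_mul, Matrix.smul_mulVec, SPFaux.pow_mulVec_eig L u τ hu, smul_smul]

lemma leftCompanion_mulVec_succ {k : ℕ} (a : Fin k → ℝ) (x : Fin k → ℝ) (i : Fin k)
    (hi : (i : ℕ) ≠ 0) :
    (leftCompanion a).mulVec x i = x ⟨(i : ℕ) - 1, by have := i.isLt; omega⟩ := by
  have hi1 : (i : ℕ) - 1 < k := by have := i.isLt; omega
  show ∑ j, leftCompanion a i j * x j = _
  rw [Finset.sum_eq_single (⟨(i : ℕ) - 1, hi1⟩ : Fin k)]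
  · have hc : (i : ℕ) = ((⟨(i : ℕ) - 1, hi1⟩ : Fin k) : ℕ) + 1 := by simp; omega
    have h1 : leftCompanion a i ⟨(i : ℕ) - 1, hi1⟩ = 1 := by
      simp only [leftCompanion, Matrix.of_apply, if_neg hi, if_pos hc]
    rw [h1, one_mul]
  · intro j _ hj
    have hne : ¬ (i : ℕ) = (j : ℕ) + 1 := by
      intro hc
      exact hj (Fin.ext (by simp; omega))
    simp [leftCompanion, hi, hne]
  · intro hcon
    exact absurd (Finset.mem_univ _) hcon

lemma leftCompanion_mulVec_zero {k : ℕ} (a : Fin k → ℝ) (x : Fin k → ℝ) (i : Fin k)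
    (hi : (i : ℕ) = 0) :
    (leftCompanion a).mulVec x i =
      ∑ j : Fin k, a ⟨k - 1 - (j : ℕ), by have := j.isLt; omega⟩ * x j := by
  show ∑ j, leftCompanion a i j * x j = _
  refine Finset.sum_congr rfl fun j _ => ?_
  simp [leftCompanion, hi]

/-- An eigenvector (for a nonzero eigenvalue) of the companion matrix with vanishing
first coordinate vanishes. -/
lemma eig_coord_zero {k : ℕ} (hk : 1 ≤ k) (a : Fin k → ℝ) (τ : ℝ) (hτ : τ ≠ 0)
    (y : Fin k → ℝ) (hy : (leftCompanion a).mulVec y = τ • y)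
    (h0 : y ⟨0, hk⟩ = 0) : y = 0 := by
  have key : ∀ m : ℕ, ∀ hm : m < k, y ⟨m, hm⟩ = 0 := by
    intro m
    induction m with
    | zero => intro hm; exact h0
    | succ m ih =>
      intro hm
      have hmk : m < k := by omega
      have hcoord := congrFun hy (⟨m + 1, hm⟩ : Fin k)
      rw [leftCompanion_mulVec_succ a y _ (by simp)] at hcoord
      simp only [Pi.smul_apply, smul_eq_mul] at hcoord
      have : y ⟨m, hmk⟩ = τ * y ⟨m + 1, hm⟩ := by
        convert hcoord using 3
        omega
      rw [ih hmk] at this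
      have := this.symm
      rcases mul_eq_zero.1 this with h | h
      · exact absurd h hτ
      · exact h
  funext i
  have := key i.val i.isLt
  simpa using this

/-- The orbit of `e₀` under the companion matrix spans everything. -/
lemma orbit_span_top {k : ℕ} (hk : 1 ≤ k) (a : Fin k → ℝ) :
    Submodule.span ℝ (Set.range fun n : ℕ =>
      ((leftCompanion a) ^ n).mulVec (Pi.single (⟨0, hk⟩ : Fin k) 1)) = ⊤ := by
  set L := leftCompanion a with hL
  set e0 : Fin k → ℝ := Pi.single (⟨0, hk⟩ : Fin k) 1 with he0
  set W := Submodule.span ℝ (Set.range fun n : ℕ => (L ^ n).mulVec e0) with hW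
  have hWinv : ∀ x ∈ W, L.mulVec x ∈ W := by
    intro x hx
    induction hx using Submodule.span_induction with
    | mem x hxs =>
      obtain ⟨n, rfl⟩ := hxs
      rw [Matrix.mulVec_mulVec, ← pow_succ']
      exact Submodule.subset_span ⟨n + 1, rfl⟩
    | zero => rw [Matrix.mulVec_zero]; exact W.zero_mem
    | add x y _ _ hx hy => rw [Matrix.mulVec_add]; exact W.add_mem hx hy
    | smul c x _ hx => rw [Matrix.mulVec_smul]; exact W.smul_mem c hx
  have he0mem : e0 ∈ W := by
    have : e0 = (L ^ 0).mulVec e0 := by rw [pow_zero, Matrix.one_mulVec]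
    rw [this]
    exact Submodule.subset_span ⟨0, rfl⟩
  have hsingle : ∀ m : ℕ, ∀ hm : m < k, Pi.single (⟨m, hm⟩ : Fin k) (1 : ℝ) ∈ W := by
    intro m
    induction m with
    | zero => intro hm; exact he0mem
    | succ m ih =>
      intro hm
      have hmk : m < k := by omega
      have hmem := ih hmk
      have hLs := hWinv _ hmem
      have hexp : L.mulVec (Pi.single (⟨m, hmk⟩ : Fin k) (1 : ℝ)) =
          a ⟨k - 1 - m, by omega⟩ • e0 + Pi.single (⟨m + 1, hm⟩ : Fin k) 1 := by
        rw [Matrix.mulVec_single]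
        funext i
        rw [Pi.smul_apply, Matrix.col_apply, op_smul_eq_mul, mul_one]
        have hne01 : (⟨0, hk⟩ : Fin k) ≠ ⟨m + 1, hm⟩ := by simp [Fin.ext_iff]
        by_cases him : i = (⟨m + 1, hm⟩ : Fin k)
        · subst him
          have h1 : L ⟨m + 1, hm⟩ ⟨m, hmk⟩ = 1 := by
            show leftCompanion a _ _ = 1
            simp [leftCompanion]
          rw [h1]
          simp [he0, Pi.single_apply, Ne.symm hne01]
        · by_cases hi0 : i = (⟨0, hk⟩ : Fin k)
          · subst hi0
            have h1 : L ⟨0, hk⟩ ⟨m, hmk⟩ = a ⟨k - 1 - m, by omega⟩ := by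
              show leftCompanion a _ _ = _
              simp [leftCompanion]
            rw [h1]
            simp [he0, Pi.single_apply, hne01]
          · have hv0 : (i : ℕ) ≠ 0 := fun hc => hi0 (Fin.ext (by simpa using hc))
            have hvm : (i : ℕ) ≠ m + 1 := fun hc => him (Fin.ext (by simpa using hc))
            have h1 : L i ⟨m, hmk⟩ = 0 := by
              show leftCompanion a _ _ = 0
              simp [leftCompanion, hv0, hvm]
            rw [h1]
            have hne1 : i ≠ (⟨0, hk⟩ : Fin k) := hi0
            have hne2 : i ≠ (⟨m + 1, hm⟩ : Fin k) := him
            simp [he0, Pi.single_apply, hne1, hne2]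
      have : Pi.single (⟨m + 1, hm⟩ : Fin k) (1 : ℝ) =
          L.mulVec (Pi.single (⟨m, hmk⟩ : Fin k) (1 : ℝ)) - a ⟨k - 1 - m, by omega⟩ • e0 := by
        rw [hexp]; ring_nf
      rw [this]
      exact W.sub_mem hLs (W.smul_mem _ he0mem)
  rw [eq_top_iff]
  intro x _
  have hsingle_eq : ∀ i : Fin k, (Pi.single i 1 : Fin k → ℝ) = fun j => if i = j then 1 else 0 := by
    intro i
    funext j
    rw [Pi.single_apply]
    exact if_congr eq_comm rfl rfl
  have hx : x = ∑ i : Fin k, x i • (Pi.single i 1 : Fin k → ℝ) := by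
    conv_lhs => rw [pi_eq_sum_univ x]
    exact Finset.sum_congr rfl fun i _ => by rw [hsingle_eq]
  rw [hx]
  refine Submodule.sum_mem W fun i _ => Submodule.smul_mem W _ ?_
  have : i = (⟨(i : ℕ), i.isLt⟩ : Fin k) := Fin.ext rfl
  rw [this]
  exact hsingle i.val i.isLt

lemma sum_mulVec {k : ℕ} (s : Finset ℕ) (f : ℕ → Matrix (Fin k) (Fin k) ℝ) (x : Fin k → ℝ) :
    (∑ i ∈ s, f i).mulVec x = ∑ i ∈ s, (f i).mulVec x := by
  induction s using Finset.cons_induction with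
  | empty => simp [Matrix.zero_mulVec]
  | cons a s ha ih => rw [Finset.sum_cons, Finset.sum_cons, Matrix.add_mulVec, ih]

end SPFaux

/-- for the standard sequence `S` of a recurrence with `a₀ ≠ 0`
whose left companion matrix is strong Perron–Frobenius with dominant eigenvalue
`τ`, the terms `Sₙ` are eventually nonzero and `S_{n+1}/Sₙ → τ`. -/
theorem standard_sequence_ratio_limit
    (k : ℕ) (hk : 1 ≤ k) (a : Fin k → ℝ) (ha0 : a ⟨0, by omega⟩ ≠ 0)
    (τ : ℝ) (hL : StrongPerronFrobenius (leftCompanion a) τ)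
    (S : ℕ → ℝ)
    (hinit : ∀ m : ℕ, m < k - 1 → S m = 0) (hlast : S (k - 1) = 1)
    (hrec : ∀ n : ℕ, S (n + k) = ∑ j : Fin k, a j * S (n + (j : ℕ))) :
    (∀ᶠ n : ℕ in atTop, S n ≠ 0) ∧
    Tendsto (fun n : ℕ => S (n + 1) / S n) atTop (nhds τ) := by
  obtain ⟨hτ, hmult, hroots, u, hupos, hueig⟩ := hL
  set L := leftCompanion a with hLdef
  set P : ℝ[X] := L.charpoly with hPdef
  have hPmonic : P.Monic := L.charpoly_monic
  have hPne : P ≠ 0 := hPmonic.ne_zero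
  have hPdeg : P.natDegree = k := by
    rw [hPdef, Matrix.charpoly_natDegree_eq_dim, Fintype.card_fin]
  have hτroot : P.IsRoot τ := by
    by_contra hc
    rw [Polynomial.rootMultiplicity_eq_zero hc] at hmult
    exact absurd hmult one_ne_zero.symm
  set q : ℝ[X] := P /ₘ (X - C τ) with hqdef
  have hfact : (X - C τ) * q = P := Polynomial.mul_divByMonic_eq_iff_isRoot.2 hτroot
  have hqmonic : q.Monic :=
    Polynomial.Monic.of_mul_monic_left (Polynomial.monic_X_sub_C τ) (hfact.symm ▸ hPmonic)
  have hqne : q ≠ 0 := hqmonic.ne_zero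
  have hqdeg : q.natDegree = k - 1 := by
    have h1 : ((X - C τ) * q).natDegree = 1 + q.natDegree := by
      rw [Polynomial.natDegree_mul (Polynomial.X_sub_C_ne_zero τ) hqne,
        Polynomial.natDegree_X_sub_C]
    rw [hfact, hPdeg] at h1
    omega
  have hqτ : q.eval τ ≠ 0 := by
    intro hc
    have h1 : P.rootMultiplicity τ = (X - C τ).rootMultiplicity τ + q.rootMultiplicity τ := by
      rw [← hfact, Polynomial.rootMultiplicity_mul (hfact.symm ▸ hPne)]
    rw [Polynomial.rootMultiplicity_X_sub_C_self, hmult] at h1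
    have h2 : q.rootMultiplicity τ = 0 := by omega
    rw [Polynomial.rootMultiplicity_eq_zero_iff] at h2
    exact hqne (h2 hc)
  -- the basic vector setup
  set i0 : Fin k := ⟨0, hk⟩ with hi0def
  set e0 : Fin k → ℝ := Pi.single i0 1 with he0def
  set y : Fin k → ℝ := (aeval L q).mulVec e0 with hydef
  -- y is a τ-eigenvector
  have hCH : aeval L P = 0 := Matrix.aeval_self_charpoly L
  have hfactL : (aeval L (X - C τ)) * (aeval L q) = 0 := by
    rw [← _root_.map_mul, hfact, hCH]
  have hyeig : L.mulVec y = τ • y := by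
    have h1 : (aeval L (X - C τ)).mulVec y = 0 := by
      rw [hydef, Matrix.mulVec_mulVec, hfactL, Matrix.zero_mulVec]
    rw [map_sub, Polynomial.aeval_X, Polynomial.aeval_C, Matrix.sub_mulVec] at h1
    have h2 : (algebraMap ℝ (Matrix (Fin k) (Fin k) ℝ) τ).mulVec y = τ • y := by
      rw [Algebra.algebraMap_eq_smul_one, Matrix.smul_mulVec, Matrix.one_mulVec]
    rw [h2] at h1
    exact sub_eq_zero.1 h1
  -- commuting facts
  have hcomm : ∀ n : ℕ, aeval L q * L ^ n = L ^ n * aeval L q := by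
    intro n
    have h1 : (L : Matrix (Fin k) (Fin k) ℝ) ^ n = aeval L ((X : ℝ[X]) ^ n) := by
      rw [map_pow, Polynomial.aeval_X]
    rw [h1, ← _root_.map_mul, ← _root_.map_mul, mul_comm]
  have hyn : ∀ n : ℕ, (aeval L q).mulVec ((L ^ n).mulVec e0) = (L ^ n).mulVec y := by
    intro n
    rw [Matrix.mulVec_mulVec, hcomm n, ← Matrix.mulVec_mulVec, ← hydef]
  -- y is nonzero
  have hWtop := SPFaux.orbit_span_top hk a
  have humem : u ∈ Submodule.span ℝ (Set.range fun n : ℕ =>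
      ((leftCompanion a) ^ n).mulVec (Pi.single (⟨0, hk⟩ : Fin k) 1)) := by
    rw [hWtop]; trivial
  have hyne : y ≠ 0 := by
    intro hy0
    have hker : ∀ x ∈ Submodule.span ℝ (Set.range fun n : ℕ =>
        ((leftCompanion a) ^ n).mulVec (Pi.single (⟨0, hk⟩ : Fin k) 1)),
        (aeval L q).mulVec x = 0 := by
      intro x hx
      induction hx using Submodule.span_induction with
      | mem x hxs =>
        obtain ⟨n, rfl⟩ := hxs
        show (aeval L q).mulVec ((L ^ n).mulVec e0) = 0
        rw [hyn n, hy0, Matrix.mulVec_zero]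
      | zero => rw [Matrix.mulVec_zero]
      | add x z _ _ hx hz => rw [Matrix.mulVec_add, hx, hz, add_zero]
      | smul c x _ hx => rw [Matrix.mulVec_smul, hx, smul_zero]
    have h1 := hker u humem
    rw [SPFaux.aeval_mulVec_eig L u τ hueig q] at h1
    have h3 := congrFun h1 i0
    simp only [Pi.smul_apply, smul_eq_mul, Pi.zero_apply] at h3
    rcases mul_eq_zero.1 h3 with h | h
    · exact hqτ h
    · exact (hupos i0).ne' h
  have hy0 : y i0 ≠ 0 := by
    intro hc
    exact hyne (SPFaux.eig_coord_zero hk a τ hτ.ne' y hyeig hc)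
  -- the sequence vectors
  have hwstep : ∀ n : ℕ, L.mulVec (fun i : Fin k => S (n + (k - 1 - (i : ℕ)))) =
      fun i : Fin k => S (n + 1 + (k - 1 - (i : ℕ))) := by
    intro n
    funext i
    by_cases hi : (i : ℕ) = 0
    · rw [hLdef, SPFaux.leftCompanion_mulVec_zero a _ i hi]
      calc ∑ j : Fin k, a ⟨k - 1 - (j : ℕ), by have := j.isLt; omega⟩ * S (n + (k - 1 - (j : ℕ)))
          = ∑ j : Fin k, a j.rev * S (n + (j.rev : ℕ)) := by
            refine Finset.sum_congr rfl fun j _ => ?_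
            have h1 : k - 1 - (j : ℕ) = ((j.rev : Fin k) : ℕ) := by
              rw [Fin.val_rev]; omega
            congr 1
            · exact congrArg a (Fin.ext h1)
            · rw [h1]
        _ = ∑ m : Fin k, a m * S (n + (m : ℕ)) :=
            Fintype.sum_equiv Fin.revPerm _ _ (fun j => rfl)
        _ = S (n + k) := (hrec n).symm
        _ = S (n + 1 + (k - 1 - (i : ℕ))) := by rw [hi]; congr 1; omega
    · rw [hLdef, SPFaux.leftCompanion_mulVec_succ a _ i hi]
      show S (n + (k - 1 - ((i : ℕ) - 1))) = S (n + 1 + (k - 1 - (i : ℕ)))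
      congr 1
      have := i.isLt
      omega
  have hwv : ∀ n : ℕ, (L ^ n).mulVec e0 = fun i : Fin k => S (n + (k - 1 - (i : ℕ))) := by
    intro n
    induction n with
    | zero =>
      rw [pow_zero, Matrix.one_mulVec]
      funext i
      rw [he0def, Pi.single_apply]
      by_cases hi : i = i0
      · rw [if_pos hi, hi, hi0def]
        show (1 : ℝ) = S (0 + (k - 1 - 0))
        rw [show 0 + (k - 1 - 0) = k - 1 by omega, hlast]
      · rw [if_neg hi]
        have hiv : (i : ℕ) ≠ 0 := by
          intro hc; exact hi (Fin.ext (by rw [hi0def]; simpa using hc))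
        have h2 : 0 + (k - 1 - (i : ℕ)) < k - 1 := by have := i.isLt; omega
        rw [hinit _ h2]
    | succ n ih =>
      rw [pow_succ', ← Matrix.mulVec_mulVec, ih, hwstep]
  set t : ℕ → ℝ := fun n => S (n + (k - 1)) with htdef
  have ht : ∀ n, t n = ((L ^ n).mulVec e0) i0 := by
    intro n
    rw [hwv n]
    show S (n + (k - 1)) = S (n + (k - 1 - 0))
    rfl
  -- the key inhomogeneous recurrence
  have hkey : ∀ n : ℕ, ∑ i ∈ Finset.range k, q.coeff i * t (n + i) = τ ^ n * y i0 := by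
    intro n
    have h1 : ∀ i : ℕ, t (n + i) = ((L ^ i).mulVec ((L ^ n).mulVec e0)) i0 := by
      intro i
      rw [ht (n + i), Matrix.mulVec_mulVec, ← pow_add, Nat.add_comm n i]
    have hrange : q.natDegree + 1 = k := by rw [hqdeg]; omega
    calc ∑ i ∈ Finset.range k, q.coeff i * t (n + i)
        = ∑ i ∈ Finset.range k, (q.coeff i • ((L ^ i).mulVec ((L ^ n).mulVec e0))) i0 := by
          refine Finset.sum_congr rfl fun i _ => ?_
          rw [h1 i, Pi.smul_apply, smul_eq_mul]
      _ = (∑ i ∈ Finset.range k, q.coeff i • ((L ^ i).mulVec ((L ^ n).mulVec e0))) i0 := by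
          rw [Finset.sum_apply]
      _ = (∑ i ∈ Finset.range k, (q.coeff i • L ^ i).mulVec ((L ^ n).mulVec e0)) i0 := by
          have hsc : (∑ i ∈ Finset.range k, q.coeff i • ((L ^ i).mulVec ((L ^ n).mulVec e0)))
              = ∑ i ∈ Finset.range k, (q.coeff i • L ^ i).mulVec ((L ^ n).mulVec e0) := by
            refine Finset.sum_congr rfl fun i _ => ?_
            rw [Matrix.smul_mulVec]
          rw [hsc]
      _ = ((∑ i ∈ Finset.range k, q.coeff i • L ^ i).mulVec ((L ^ n).mulVec e0)) i0 := by
          rw [SPFaux.sum_mulVec]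
      _ = ((aeval L q).mulVec ((L ^ n).mulVec e0)) i0 := by
          rw [Polynomial.aeval_eq_sum_range, hrange]
      _ = ((L ^ n).mulVec y) i0 := by rw [hyn n]
      _ = τ ^ n * y i0 := by
          rw [SPFaux.pow_mulVec_eig L y τ hyeig n, Pi.smul_apply, smul_eq_mul]
  -- pass to ℂ
  set qC : ℂ[X] := q.map (algebraMap ℝ ℂ) with hqCdef
  have hqCmonic : qC.Monic := hqmonic.map _
  have hqCdeg : qC.natDegree = k - 1 := by
    rw [hqCdef, hqmonic.natDegree_map, hqdeg]
  have hqCeval : qC.eval (τ : ℂ) = ((q.eval τ : ℝ) : ℂ) := by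
    rw [hqCdef, show ((τ : ℝ) : ℂ) = algebraMap ℝ ℂ τ from rfl, Polynomial.eval_map,
      Polynomial.eval₂_hom]
    rfl
  have hqCτ : qC.eval (τ : ℂ) ≠ 0 := by
    rw [hqCeval]
    simpa using hqτ
  have hqCroots : ∀ w : ℂ, qC.IsRoot w → ‖w‖ < τ := by
    intro w hw
    have hPC : (P.map (algebraMap ℝ ℂ)).IsRoot w := by
      rw [← hfact, Polynomial.map_mul]
      show eval w _ = 0
      rw [Polynomial.eval_mul, hw.eq_zero, mul_zero]
    have hwne : w ≠ (τ : ℂ) := by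
      intro hc
      rw [hc] at hw
      exact hqCτ hw.eq_zero
    exact hroots w hPC hwne
  set c : ℝ := y i0 / q.eval τ with hcdef
  have hcne : c ≠ 0 := div_ne_zero hy0 hqτ
  have hτC : (τ : ℂ) ≠ 0 := by exact_mod_cast hτ.ne'
  set T : ℕ → ℂ := fun n => ((t n : ℝ) : ℂ) with hTdef
  have hTrec : (aeval SPFaux.shiftEnd qC) T = fun n => ((y i0 : ℝ) : ℂ) * (τ : ℂ) ^ n := by
    funext n
    rw [SPFaux.aeval_shiftEnd_apply, hqCdeg, show k - 1 + 1 = k by omega]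
    have hco : ∀ i, qC.coeff i = ((q.coeff i : ℝ) : ℂ) := fun i => by
      rw [hqCdef, Polynomial.coeff_map]; rfl
    calc ∑ i ∈ Finset.range k, qC.coeff i * T (n + i)
        = ∑ i ∈ Finset.range k, (((q.coeff i * t (n + i) : ℝ)) : ℂ) := by
          refine Finset.sum_congr rfl fun i _ => ?_
          rw [hco i, hTdef]
          push_cast
          ring
      _ = (((∑ i ∈ Finset.range k, q.coeff i * t (n + i)) : ℝ) : ℂ) := by
          rw [Complex.ofReal_sum]
      _ = _ := by rw [hkey n]; push_cast; ring
  set geo : ℕ → ℂ := fun n => (τ : ℂ) ^ n with hgeodef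
  have hgeoeig : (aeval SPFaux.shiftEnd qC) geo = fun n => qC.eval (τ : ℂ) * (τ : ℂ) ^ n := by
    funext n
    rw [SPFaux.aeval_shiftEnd_apply, Polynomial.eval_eq_sum_range, Finset.sum_mul]
    refine Finset.sum_congr rfl fun i _ => ?_
    show qC.coeff i * (τ : ℂ) ^ (n + i) = qC.coeff i * (τ : ℂ) ^ i * (τ : ℂ) ^ n
    rw [pow_add]
    ring
  set G : ℕ → ℂ := fun n => T n - ((c : ℝ) : ℂ) * (τ : ℂ) ^ n with hGdef
  have hGrec : (aeval SPFaux.shiftEnd qC) G = 0 := by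
    have hGeq : G = T - ((c : ℝ) : ℂ) • geo := by
      funext n
      simp [hGdef, hgeodef, smul_eq_mul]
    rw [hGeq, map_sub, _root_.map_smul, hTrec, hgeoeig]
    funext n
    simp only [Pi.sub_apply, Pi.smul_apply, smul_eq_mul, Pi.zero_apply]
    have hcc : ((c : ℝ) : ℂ) * (qC.eval (τ : ℂ) * (τ : ℂ) ^ n) = ((y i0 : ℝ) : ℂ) * (τ : ℂ) ^ n := by
      rw [hqCeval, hcdef]
      push_cast
      field_simp
      rw [div_eq_iff (show ((eval τ q : ℝ) : ℂ) ≠ 0 by exact_mod_cast hqτ)]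
    rw [hcc, sub_self]
  have hGlim := SPFaux.homog τ hτ (k - 1) qC hqCmonic hqCdeg hqCroots G hGrec
  have hTlim : Tendsto (fun n => T n / (τ : ℂ) ^ n) atTop (nhds ((c : ℝ) : ℂ)) := by
    have h1 : ∀ n : ℕ, T n / (τ : ℂ) ^ n = G n / (τ : ℂ) ^ n + ((c : ℝ) : ℂ) := by
      intro n
      rw [hGdef]
      field_simp
      ring
    simp only [h1]
    have h2 := hGlim.add_const ((c : ℝ) : ℂ)
    simpa using h2
  have htlim : Tendsto (fun n => t n / τ ^ n) atTop (nhds c) := by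
    have h1 : ∀ n : ℕ, t n / τ ^ n = (T n / (τ : ℂ) ^ n).re := by
      intro n
      rw [hTdef, show ((t n : ℝ) : ℂ) / (τ : ℂ) ^ n = (((t n / τ ^ n : ℝ)) : ℂ) by push_cast; ring,
        Complex.ofReal_re]
    simp only [h1]
    have h2 := (Complex.continuous_re.tendsto _).comp hTlim
    exact h2
  have htne : ∀ᶠ n in atTop, t n ≠ 0 := by
    filter_upwards [htlim.eventually_ne hcne] with n hn
    intro hc0
    apply hn
    rw [hc0, zero_div]
  have hratio : Tendsto (fun n => t (n + 1) / t n) atTop (nhds τ) := by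
    have h1 : Tendsto (fun n : ℕ => t (n + 1) / τ ^ (n + 1)) atTop (nhds c) :=
      htlim.comp (tendsto_add_atTop_nat 1)
    have h2 : Tendsto (fun n : ℕ => (t (n + 1) / τ ^ (n + 1)) / (t n / τ ^ n) * τ) atTop
        (nhds τ) := by
      have h3 := (h1.div htlim hcne).mul_const τ
      have h4 : c / c * τ = τ := by field_simp
      rwa [h4] at h3
    refine Tendsto.congr' ?_ h2
    filter_upwards [htne] with n hn
    have hτn : τ ^ n ≠ 0 := pow_ne_zero n hτ.ne'
    field_simp
    ring
  have hSn : ∀ n : ℕ, k - 1 ≤ n → S n = t (n - (k - 1)) := by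
    intro n hn
    show S n = S (n - (k - 1) + (k - 1))
    congr 1
    omega
  constructor
  · obtain ⟨N, hN⟩ := eventually_atTop.1 htne
    rw [eventually_atTop]
    refine ⟨N + (k - 1), fun n hn => ?_⟩
    rw [hSn n (by omega)]
    exact hN _ (by omega)
  · have h1 : Tendsto (fun n : ℕ => t (n - (k - 1) + 1) / t (n - (k - 1))) atTop (nhds τ) :=
      hratio.comp (tendsto_sub_atTop_nat (k - 1))
    refine Tendsto.congr' ?_ h1
    filter_upwards [eventually_ge_atTop (k - 1)] with n hn
    show t (n - (k - 1) + 1) / t (n - (k - 1)) = S (n + 1) / S n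
    rw [hSn (n + 1) (by omega), hSn n (by omega),
      show n + 1 - (k - 1) = n - (k - 1) + 1 by omega]
end SPFaux
end

section
/- Let L be a k×k real matrix with the strong Perron–Frobenius property with dominant eigenvalue τ, and let x_0 ∈ ℝ^k be cyclic for L. Then there exists N such that either (L^n · x_0)_i > 0 for every n ≥ N and every coordinate index i, or (L^n · x_0)_i < 0 for every n ≥ N and every coordinate index i. In other words, for large n all entries of L^n·x_0 have the same, constant, sign. -/
open Matrix Polynomial Filter
open scoped NNReal ENNReal

private lemma pf_decay (k : ℕ) (hk : 0 < k) (A : Matrix (Fin k) (Fin k) ℝ)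
    (m : ℝ[X]) (hm : Polynomial.aeval A m = 0)
    (τ : ℝ) (hτ : 0 < τ)
    (hroots : ∀ z : ℂ, (m.map (algebraMap ℝ ℂ)).IsRoot z → ‖z‖ < τ)
    (w : Fin k → ℝ) (ε : ℝ) (hε : 0 < ε) :
    ∃ N, ∀ n ≥ N, ∀ i, |((A ^ n).mulVec w) i| ≤ ε * τ ^ n := by
  haveI : NeZero k := ⟨hk.ne'⟩
  letI : NormedRing (Matrix (Fin k) (Fin k) ℂ) := Matrix.linftyOpNormedRing
  letI : NormedAlgebra ℂ (Matrix (Fin k) (Fin k) ℂ) := Matrix.linftyOpNormedAlgebra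
  haveI : CompleteSpace (Matrix (Fin k) (Fin k) ℂ) := FiniteDimensional.complete ℂ _
  set f : ℝ →+* ℂ := algebraMap ℝ ℂ with hf
  set B : Matrix (Fin k) (Fin k) ℂ := A.map f with hBdef
  have hmap : (Polynomial.aeval A m).map f = Polynomial.aeval B (m.map f) := by
    have h1 : (f.mapMatrix) (Polynomial.aeval A m)
        = Polynomial.eval₂ ((f.mapMatrix).comp (algebraMap ℝ (Matrix (Fin k) (Fin k) ℝ)))
            (f.mapMatrix A) m := by
      rw [Polynomial.aeval_def, Polynomial.hom_eval₂]
    have h2 : (f.mapMatrix).comp (algebraMap ℝ (Matrix (Fin k) (Fin k) ℝ))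
        = (algebraMap ℂ (Matrix (Fin k) (Fin k) ℂ)).comp f := by
      refine RingHom.ext fun r => ?_
      ext i j
      simp [Matrix.algebraMap_matrix_apply, Matrix.map_apply, apply_ite f]
    rw [RingHom.mapMatrix_apply] at h1
    rw [h1, h2, ← Polynomial.eval₂_map, RingHom.mapMatrix_apply, Polynomial.aeval_def]
  have hB0 : Polynomial.aeval B (m.map f) = 0 := by
    rw [← hmap, hm]
    ext i j
    simp
  have hspec : ∀ z ∈ spectrum ℂ B, ‖z‖ < τ := by
    intro z hz
    have h1 := spectrum.subset_polynomial_aeval B (m.map f) ⟨z, hz, rfl⟩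
    rw [hB0, spectrum.zero_eq] at h1
    have h2 : (m.map f).IsRoot z := Set.mem_singleton_iff.mp h1
    simpa using hroots z h2
  obtain ⟨z₀, hz₀, hrad⟩ := spectrum.exists_nnnorm_eq_spectralRadius B
  obtain ⟨r, hr1, hr2⟩ := exists_between (hspec z₀ hz₀)
  have hr0 : 0 ≤ r := (norm_nonneg z₀).trans hr1.le
  set r' : ℝ≥0 := ⟨r, hr0⟩ with hr'
  have hradlt : spectralRadius ℂ B < (r' : ℝ≥0∞) := by
    rw [← hrad]
    exact_mod_cast hr1
  have hgel := spectrum.pow_nnnorm_pow_one_div_tendsto_nhds_spectralRadius B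
  obtain ⟨N₁, hN₁⟩ := eventually_atTop.mp (hgel.eventually_lt_const hradlt)
  have hnorm : ∀ n, N₁ ≤ n → 1 ≤ n → ‖B ^ n‖ ≤ r ^ n := by
    intro n h1 h2
    have h3 := hN₁ n h1
    have hn0 : (n : ℝ) ≠ 0 := by positivity
    have h5 : (‖B ^ n‖₊ : ℝ≥0∞) ≤ (r' : ℝ≥0∞) ^ (n : ℝ) := by
      calc (‖B ^ n‖₊ : ℝ≥0∞) = ((‖B ^ n‖₊ : ℝ≥0∞) ^ ((1:ℝ)/n)) ^ (n : ℝ) := by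
            rw [← ENNReal.rpow_mul, one_div, inv_mul_cancel₀ hn0, ENNReal.rpow_one]
        _ ≤ (r' : ℝ≥0∞) ^ (n : ℝ) := ENNReal.rpow_le_rpow h3.le (Nat.cast_nonneg n)
    rw [ENNReal.rpow_natCast, ← ENNReal.coe_pow, ENNReal.coe_le_coe] at h5
    calc ‖B ^ n‖ = ((‖B ^ n‖₊ : ℝ≥0) : ℝ) := rfl
      _ ≤ ((r' ^ n : ℝ≥0) : ℝ) := by exact_mod_cast h5
      _ = r ^ n := by push_cast [hr']; rfl
  have hvec : ∀ n i, |((A ^ n).mulVec w) i| ≤ ‖B ^ n‖ * ‖(fun j => f (w j))‖ := by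
    intro n i
    have h1 : (B ^ n) = (A ^ n).map f := by
      rw [hBdef, ← RingHom.mapMatrix_apply, ← RingHom.mapMatrix_apply, _root_.map_pow]
    have h2 : f (((A ^ n).mulVec w) i) = ((B ^ n).mulVec (fun j => f (w j))) i := by
      rw [h1]; exact RingHom.map_mulVec f _ _ i
    calc |((A ^ n).mulVec w) i| = ‖f (((A ^ n).mulVec w) i)‖ := by
          simp [hf]
      _ = ‖((B ^ n).mulVec (fun j => f (w j))) i‖ := by rw [h2]
      _ ≤ ‖(B ^ n).mulVec (fun j => f (w j))‖ := norm_le_pi_norm _ i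
      _ ≤ ‖B ^ n‖ * ‖(fun j => f (w j))‖ := Matrix.linfty_opNorm_mulVec _ _
  set Cw : ℝ := ‖(fun j => f (w j))‖ with hCwdef
  have hCw : 0 ≤ Cw := norm_nonneg _
  have hrτ : r / τ < 1 := (div_lt_one hτ).2 hr2
  have hlim : Tendsto (fun n : ℕ => (Cw + 1) * (r / τ) ^ n) atTop (nhds 0) := by
    simpa using (tendsto_pow_atTop_nhds_zero_of_lt_one (by positivity) hrτ).const_mul (Cw + 1)
  obtain ⟨N₂, hN₂⟩ := eventually_atTop.mp (hlim.eventually_lt_const hε)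
  refine ⟨max (max N₁ 1) N₂, fun n hn i => ?_⟩
  have hn1 : N₁ ≤ n := le_trans (le_trans (le_max_left _ _) (le_max_left _ _)) hn
  have hn2 : 1 ≤ n := le_trans (le_trans (le_max_right _ _) (le_max_left _ _)) hn
  have hn3 : N₂ ≤ n := le_trans (le_max_right _ _) hn
  have hτn : (0:ℝ) < τ ^ n := pow_pos hτ n
  have key : r ^ n = (r / τ) ^ n * τ ^ n := by
    rw [div_pow, div_mul_cancel₀]
    exact hτn.ne'
  calc |((A ^ n).mulVec w) i| ≤ ‖B ^ n‖ * Cw := hvec n i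
    _ ≤ r ^ n * Cw := mul_le_mul_of_nonneg_right (hnorm n hn1 hn2) hCw
    _ ≤ ((Cw + 1) * (r / τ) ^ n) * τ ^ n := by
        rw [key]
        have h0 : (0:ℝ) ≤ (r / τ) ^ n := by positivity
        nlinarith
    _ ≤ ε * τ ^ n := mul_le_mul_of_nonneg_right (hN₂ n hn3).le hτn.le

/-- for a strong Perron–Frobenius matrix `L` and a cyclic vector
`x₀`, the entries of `Lⁿ x₀` eventually all have the same constant sign. -/
theorem entries_eventually_same_sign
    (k : ℕ) (L : Matrix (Fin k) (Fin k) ℝ) (τ : ℝ)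
    (hL : StrongPerronFrobenius L τ)
    (x0 : Fin k → ℝ) (hx0 : IsCyclicVec L x0) :
    ∃ N : ℕ,
      (∀ n ≥ N, ∀ i : Fin k, 0 < (L ^ n).mulVec x0 i) ∨
      (∀ n ≥ N, ∀ i : Fin k, (L ^ n).mulVec x0 i < 0) := by
  obtain ⟨hτ, hmult, hspecτ, u, hu, huvec⟩ := hL
  rcases Nat.eq_zero_or_pos k with hk | hk
  · subst hk
    exact ⟨0, Or.inl fun n _ i => i.elim0⟩
  haveI : NeZero k := ⟨hk.ne'⟩
  -- polynomial setup
  have hpmonic : L.charpoly.Monic := L.charpoly_monic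
  have hp0 : L.charpoly ≠ 0 := hpmonic.ne_zero
  have hdvd : (X - C τ) ∣ L.charpoly := by
    refine dvd_iff_isRoot.2 ?_
    by_contra hroot
    rw [rootMultiplicity_eq_zero hroot] at hmult
    exact zero_ne_one hmult
  set q : ℝ[X] := L.charpoly /ₘ (X - C τ) with hqdef
  have hpq : (X - C τ) * q = L.charpoly := mul_divByMonic_eq_iff_isRoot.2 (dvd_iff_isRoot.1 hdvd)
  have hq0 : q ≠ 0 := fun h => hp0 (by rw [← hpq, h, mul_zero])
  have hqτ : q.eval τ ≠ 0 := by
    intro h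
    have h2 : rootMultiplicity τ L.charpoly
        = rootMultiplicity τ (X - C τ) + rootMultiplicity τ q := by
      rw [← hpq]; exact rootMultiplicity_mul (by rw [hpq]; exact hp0)
    rw [hmult, rootMultiplicity_X_sub_C_self] at h2
    have h3 : 0 < rootMultiplicity τ q := (rootMultiplicity_pos hq0).2 h
    omega
  have hcop : IsCoprime (X - C τ) q :=
    (irreducible_X_sub_C τ).coprime_iff_not_dvd.2 fun hd => hqτ (dvd_iff_isRoot.1 hd)
  obtain ⟨a, b, hab⟩ := hcop
  -- the spectral projection P and the complementary part A
  set P : Matrix (Fin k) (Fin k) ℝ := aeval L (b * q) with hPdef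
  have hCH : aeval L L.charpoly = 0 := L.aeval_self_charpoly
  have h1P : (1 : Matrix (Fin k) (Fin k) ℝ) - P = aeval L (a * (X - C τ)) := by
    have h0 : aeval L (1 - b * q) = 1 - P := by
      rw [_root_.map_sub, aeval_one, hPdef]
    rw [← h0]
    congr 1
    linear_combination -hab
  have hPidem : P * (1 - P) = 0 := by
    rw [hPdef, h1P, ← _root_.map_mul,
      show (b * q) * (a * (X - C τ)) = (b * a) * ((X - C τ) * q) by ring,
      hpq, _root_.map_mul, hCH, mul_zero]
  have hPP : P = P * P := by
    have h := hPidem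
    rwa [mul_sub, mul_one, sub_eq_zero] at h
  have hLP : L * P = τ • P := by
    have h1 : X * (b * q) - C τ * (b * q) = b * ((X - C τ) * q) := by ring
    have h2 : aeval L (X * (b * q)) - aeval L (C τ * (b * q)) = 0 := by
      rw [← _root_.map_sub, h1, hpq, _root_.map_mul, hCH, mul_zero]
    have h3 : aeval L (X * (b * q)) = L * P := by rw [_root_.map_mul, aeval_X, hPdef]
    have h4 : aeval L (C τ * (b * q)) = τ • P := by
      rw [_root_.map_mul, aeval_C, hPdef, ← Algebra.smul_def]
    rw [h3, h4] at h2
    exact sub_eq_zero.mp h2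
  have hcomm : ∀ f g : ℝ[X], aeval L f * aeval L g = aeval L g * aeval L f := by
    intro f g; rw [← _root_.map_mul, ← _root_.map_mul, mul_comm]
  have hcommL : ∀ f : ℝ[X], L * aeval L f = aeval L f * L := by
    intro f
    have h := hcomm X f
    rwa [aeval_X] at h
  set A : Matrix (Fin k) (Fin k) ℝ := L * (1 - P) with hAdef
  have hApoly : A = aeval L (X * (a * (X - C τ))) := by
    rw [_root_.map_mul, aeval_X, ← h1P]
  have hPA : P * A = A * P := by rw [hApoly, hPdef]; exact hcomm _ _
  have hLA : L * A = A * L := by rw [hApoly]; exact hcommL _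
  have hL1P : L * (1 - P) = (1 - P) * L := by rw [h1P]; exact hcommL _
  have h1P1P : (1 - P) * ((1 : Matrix (Fin k) (Fin k) ℝ) - P) = 1 - P := by
    have h : (1 - P) * ((1 : Matrix (Fin k) (Fin k) ℝ) - P)
        = 1 - P - P + P * P := by noncomm_ring
    rw [h, ← hPP]
    noncomm_ring
  have hAP : A * (1 - P) = A := by
    rw [hAdef, mul_assoc, h1P1P]
  have hA_pow : ∀ n : ℕ, A ^ n * (1 - P) = L ^ n * (1 - P) := by
    intro n
    induction n with
    | zero => simp
    | succ n ih =>
      have hcom : L * A ^ n = A ^ n * L := ((Commute.pow_right hLA n)).eq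
      calc A ^ (n + 1) * (1 - P) = A ^ n * (A * (1 - P)) := by
            rw [pow_succ, mul_assoc]
        _ = A ^ n * (L * (1 - P)) := by rw [hAP, hAdef]
        _ = (A ^ n * L) * (1 - P) := by rw [mul_assoc]
        _ = (L * A ^ n) * (1 - P) := by rw [hcom]
        _ = L * (L ^ n * (1 - P)) := by rw [mul_assoc, ih]
        _ = L ^ (n + 1) * (1 - P) := by rw [pow_succ', mul_assoc]
  have hLn : ∀ n : ℕ, L ^ n = τ ^ n • P + A ^ n * (1 - P) := by
    intro n
    induction n with
    | zero => simp
    | succ n ih =>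
      have hcom : L * A ^ n = A ^ n * L := ((Commute.pow_right hLA n)).eq
      calc L ^ (n + 1) = L * L ^ n := by rw [pow_succ']
        _ = L * (τ ^ n • P) + L * (A ^ n * (1 - P)) := by rw [ih, mul_add]
        _ = τ ^ n • (L * P) + (L * A ^ n) * (1 - P) := by
            rw [mul_smul_comm, mul_assoc]
        _ = τ ^ n • (τ • P) + (A ^ n * L) * (1 - P) := by rw [hLP, hcom]
        _ = τ ^ (n + 1) • P + A ^ n * (L * (1 - P)) := by
            rw [smul_smul, ← pow_succ, mul_assoc]
        _ = τ ^ (n + 1) • P + A ^ n * (A * (1 - P)) := by rw [hAP, ← hAdef]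
        _ = τ ^ (n + 1) • P + A ^ (n + 1) * (1 - P) := by rw [pow_succ A n, mul_assoc (A ^ n) A (1 - P)]
  have hgen : ∀ f : ℝ[X], aeval A f * (1 - P) = aeval L f * (1 - P) := by
    intro f
    induction f using Polynomial.induction_on' with
    | add f g hf hg => rw [_root_.map_add, _root_.map_add, add_mul, add_mul, hf, hg]
    | monomial n c =>
      rw [aeval_monomial, aeval_monomial, mul_assoc, mul_assoc, hA_pow n]
  have hqA : aeval A q * A = 0 := by
    calc aeval A q * A = aeval A q * ((1 - P) * L) := by rw [← hL1P, ← hAdef]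
      _ = (aeval A q * (1 - P)) * L := by rw [mul_assoc]
      _ = (aeval L q * (1 - P)) * L := by rw [hgen q]
      _ = (aeval L (q * (a * (X - C τ)))) * L := by rw [_root_.map_mul, h1P]
      _ = 0 := by
          rw [show q * (a * (X - C τ)) = a * ((X - C τ) * q) by ring, hpq,
            _root_.map_mul, hCH, mul_zero, zero_mul]
  have hmA : aeval A (q * X) = 0 := by rw [_root_.map_mul, aeval_X]; exact hqA
  -- eigenvector facts
  have hpow_u : ∀ n : ℕ, (L ^ n).mulVec u = τ ^ n • u := by
    intro n
    induction n with
    | zero => simp [Matrix.one_mulVec]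
    | succ n ih =>
      rw [pow_succ', ← Matrix.mulVec_mulVec, ih, Matrix.mulVec_smul, huvec,
        smul_smul, ← pow_succ]
  have haeval_u : ∀ f : ℝ[X], (aeval L f).mulVec u = f.eval τ • u := by
    intro f
    induction f using Polynomial.induction_on' with
    | add f g hf hg => rw [_root_.map_add, Matrix.add_mulVec, hf, hg, eval_add, add_smul]
    | monomial n c =>
      rw [aeval_monomial, eval_monomial, Algebra.algebraMap_eq_smul_one,
        smul_mul_assoc, one_mul, Matrix.smul_mulVec, hpow_u n, smul_smul]
  have hPu : P.mulVec u = u := by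
    have hbq : (b * q).eval τ = 1 := by
      have h := congrArg (eval τ) hab
      simpa using h
    rw [hPdef, haeval_u, hbq, one_smul]
  have hu0 : u ≠ 0 := by
    intro h
    have h2 := hu ⟨0, hk⟩
    rw [h] at h2
    simp at h2
  set v : Fin k → ℝ := P.mulVec x0 with hvdef
  have hgen_j : ∀ j : ℕ, (L ^ j).mulVec x0 = τ ^ j • v + (A ^ j * (1 - P)).mulVec x0 := by
    intro j
    rw [hLn j, Matrix.add_mulVec, Matrix.smul_mulVec, hvdef]
  have hPcomA : ∀ j : ℕ, P * (A ^ j * (1 - P)) = 0 := by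
    intro j
    have hPAj : P * A ^ j = A ^ j * P := Commute.pow_right hPA j
    rw [← mul_assoc, hPAj, mul_assoc, hPidem, mul_zero]
  have hker_j : ∀ j : ℕ, (A ^ j * (1 - P)).mulVec x0 ∈ LinearMap.ker P.mulVecLin := by
    intro j
    rw [LinearMap.mem_ker, Matrix.mulVecLin_apply, Matrix.mulVec_mulVec, hPcomA j,
      Matrix.zero_mulVec]
  have htop : (Submodule.span ℝ {v}) ⊔ LinearMap.ker P.mulVecLin = ⊤ := by
    rw [eq_top_iff, ← hx0]
    refine Submodule.span_le.2 ?_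
    rintro _ ⟨j, rfl⟩
    dsimp only
    rw [hgen_j (j : ℕ)]
    exact Submodule.add_mem_sup
      (Submodule.smul_mem _ _ (Submodule.mem_span_singleton_self v)) (hker_j _)
  have hfr : Module.finrank ℝ (LinearMap.range P.mulVecLin) ≤ 1 := by
    have h1 := LinearMap.finrank_range_add_finrank_ker P.mulVecLin
    have h2 : Module.finrank ℝ (Fin k → ℝ) = k := by simp
    have h3 : Module.finrank ℝ (⊤ : Submodule ℝ (Fin k → ℝ))
        ≤ Module.finrank ℝ (Submodule.span ℝ {v})
          + Module.finrank ℝ (LinearMap.ker P.mulVecLin) := by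
      rw [← htop]
      exact Submodule.finrank_add_le_finrank_add_finrank _ _
    have h4 : Module.finrank ℝ (Submodule.span ℝ {v}) ≤ 1 := by
      rcases eq_or_ne v 0 with h | h
      · rw [h, Submodule.span_zero_singleton]
        simp
      · rw [finrank_span_singleton h]
    rw [finrank_top] at h3
    omega
  have hmemu : u ∈ LinearMap.range P.mulVecLin :=
    ⟨u, by rw [Matrix.mulVecLin_apply]; exact hPu⟩
  have hrange_eq : LinearMap.range P.mulVecLin = Submodule.span ℝ {u} := by
    refine (Submodule.eq_of_le_of_finrank_le
      (Submodule.span_le.2 (Set.singleton_subset_iff.2 hmemu)) ?_).symm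
    rw [finrank_span_singleton hu0]
    exact hfr
  have hvmem : v ∈ Submodule.span ℝ {u} := by
    rw [← hrange_eq]
    exact ⟨x0, by rw [Matrix.mulVecLin_apply]⟩
  obtain ⟨c, hc⟩ := Submodule.mem_span_singleton.1 hvmem
  have hc0 : c ≠ 0 := by
    intro h
    rw [h, zero_smul] at hc
    have hker : ∀ j : ℕ, (L ^ j).mulVec x0 ∈ LinearMap.ker P.mulVecLin := by
      intro j
      have hPLj : P * L ^ j = L ^ j * P := Commute.pow_right (Commute.symm (hcommL (b * q))) j
      rw [LinearMap.mem_ker, Matrix.mulVecLin_apply, Matrix.mulVec_mulVec, hPLj,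
        ← Matrix.mulVec_mulVec, ← hvdef, ← hc, Matrix.mulVec_zero]
    have hle : (⊤ : Submodule ℝ (Fin k → ℝ)) ≤ LinearMap.ker P.mulVecLin := by
      rw [← hx0]
      refine Submodule.span_le.2 ?_
      rintro _ ⟨j, rfl⟩
      exact hker _
    have h2 : P.mulVec u = 0 := hle Submodule.mem_top
    rw [hPu] at h2
    exact hu0 h2
  -- apply the decay lemma
  set w : Fin k → ℝ := (1 - P).mulVec x0 with hwdef
  set umin : ℝ := Finset.univ.inf' Finset.univ_nonempty u with humindef
  have hum : 0 < umin := by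
    rw [humindef, Finset.lt_inf'_iff]
    exact fun i _ => hu i
  have hum_le : ∀ i, umin ≤ u i := fun i => Finset.inf'_le _ (Finset.mem_univ i)
  have habs : 0 < |c| := abs_pos.2 hc0
  have hε : 0 < |c| * umin / 2 := by positivity
  have hroots : ∀ z : ℂ, ((q * X).map (algebraMap ℝ ℂ)).IsRoot z → ‖z‖ < τ := by
    intro z hz
    rw [Polynomial.map_mul, Polynomial.map_X] at hz
    have h1 : (q.map (algebraMap ℝ ℂ)).eval z * z = 0 := by
      simpa [IsRoot] using hz
    rcases mul_eq_zero.1 h1 with h | h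
    · have hzτ : z ≠ (τ : ℂ) := by
        intro h2
        rw [h2] at h
        rw [show ((τ : ℝ) : ℂ) = algebraMap ℝ ℂ τ from rfl, eval_map,
          Polynomial.eval₂_hom] at h
        exact hqτ (by rwa [Complex.coe_algebraMap, Complex.ofReal_eq_zero] at h)
      refine hspecτ z ?_ hzτ
      rw [← hpq, Polynomial.map_mul]
      simp [IsRoot, h]
    · rw [h]
      simpa using hτ
  obtain ⟨N, hN⟩ := pf_decay k hk A (q * X) hmA τ hτ hroots w (|c| * umin / 2) hε
  have hvw : ∀ n : ℕ, ∀ i, (L ^ n).mulVec x0 i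
      = τ ^ n * (c * u i) + (A ^ n).mulVec w i := by
    intro n i
    have h1 := hgen_j n
    rw [← hc, ← Matrix.mulVec_mulVec, ← hwdef] at h1
    have h2 := congrFun h1 i
    simpa [smul_smul, mul_assoc] using h2
  have hτn : ∀ n : ℕ, (0:ℝ) < τ ^ n := fun n => pow_pos hτ n
  rcases hc0.lt_or_gt with hcneg | hcpos
  · refine ⟨N, Or.inr fun n hn i => ?_⟩
    have hb := hN n hn i
    have h3 : (A ^ n).mulVec w i ≤ |c| * umin / 2 * τ ^ n := (abs_le.1 hb).2
    have h4 : |c| = -c := abs_of_neg hcneg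
    have h5 : c * u i ≤ c * umin :=
      (mul_le_mul_left_of_neg hcneg).2 (hum_le i)
    rw [hvw n i]
    have h6 : τ ^ n * (c * u i) ≤ τ ^ n * (c * umin) :=
      mul_le_mul_of_nonneg_left h5 (hτn n).le
    nlinarith [hτn n, mul_pos (hτn n) (mul_pos habs hum)]
  · refine ⟨N, Or.inl fun n hn i => ?_⟩
    have hb := hN n hn i
    have h3 : -(|c| * umin / 2 * τ ^ n) ≤ (A ^ n).mulVec w i := (abs_le.1 hb).1
    have h4 : |c| = c := abs_of_pos hcpos
    have h5 : c * umin ≤ c * u i :=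
      mul_le_mul_of_nonneg_left (hum_le i) hcpos.le
    rw [hvw n i]
    have h6 : τ ^ n * (c * umin) ≤ τ ^ n * (c * u i) :=
      mul_le_mul_of_nonneg_left h5 (hτn n).le
    nlinarith [hτn n, mul_pos (hτn n) (mul_pos habs hum)]
end
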